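/- arXiv:1101.3929 — 10 statements merged into one kernel-verified Lean document; each statement's English description precedes it below -/
import Mathlib

section
/- In a BCJR-trellis with displacement matrix D defined by row l of D equal to Σ_{j=a_l}^{n-1} g_{lj} H_j (where (a_l, b_l] is a span of the l-th row of G and G H^T = 0), for every time index j and every row index l such that j is NOT in the span (a_l, b_l], the l-th row of the state matrix N_j is zero. -/
open scoped Classical

/-- Circular half-open interval `(a, b]` in `ZMod n`. -/
def circIoc {n : ℕ} (a b : ZMod n) : Set (ZMod n) :=
  {x | 1 ≤ (x - a).val ∧ (x - a).val ≤ (b - a).val}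

/-- Circular closed interval `[a, b]` in `ZMod n`. -/
def circIcc {n : ℕ} (a b : ZMod n) : Set (ZMod n) :=
  {x | (x - a).val ≤ (b - a).val}

/-- `(a, b]` is a span of the nonzero vector `c`. -/
def IsSpan {n : ℕ} {F : Type*} [Field F] (c : ZMod n → F) (a b : ZMod n) : Prop :=
  c a ≠ 0 ∧ c b ≠ 0 ∧ ∀ j, c j ≠ 0 → j ∈ circIcc a b

/-- Value of a difference in `ZMod n` in terms of values. -/
lemma zmod_val_sub' {n : ℕ} [NeZero n] (a b : ZMod n) :
    (a - b).val = if b.val ≤ a.val then a.val - b.val else a.val + n - b.val := by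
  split_ifs with h
  · exact ZMod.val_sub h
  · have hx : (a - b).val < n := ZMod.val_lt _
    have hbv : b.val < n := ZMod.val_lt _
    have hav : a.val < n := ZMod.val_lt _
    have hsum : ((a - b).val + b.val) % n = a.val := by
      rw [← ZMod.val_add, sub_add_cancel]
    rcases lt_or_ge ((a - b).val + b.val) n with h1 | h1
    · rw [Nat.mod_eq_of_lt h1] at hsum; omega
    · have h2 : ((a - b).val + b.val) % n = (a - b).val + b.val - n := by
        rw [Nat.mod_eq_sub_mod h1, Nat.mod_eq_of_lt (by omega)]
      omega

/-- In a BCJR-trellis with displacement matrix `D` whose `l`-th row is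
`Σ_{j=a_l}^{n-1} g_{lj} H_j`, where `(a_l, b_l]` is a span of the `l`-th row of `G`
and `G Hᵀ = 0`: for every time `j` outside the span `(a_l, b_l]`,
the `l`-th row of the state matrix `N_j` is zero. -/
theorem stmt2 (F : Type*) [Field F] (n r m : ℕ) [NeZero n]
    (G : Matrix (Fin r) (ZMod n) F) (H : Matrix (Fin m) (ZMod n) F)
    (hGH : G * H.transpose = 0)
    (a b : Fin r → ZMod n)
    (hspan : ∀ l, IsSpan (G l) (a l) (b l))
    (N : ZMod n → Matrix (Fin r) (Fin m) F)
    (hN0 : ∀ l c, N 0 l c =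
      ∑ j ∈ Finset.univ.filter (fun j : ZMod n => (a l).val ≤ j.val), G l j * H c j)
    (hNrec : ∀ j : ZMod n, N (j + 1) = N j + Matrix.of (fun l c => G l j * H c j))
    (j : ZMod n) (l : Fin r)
    (hj : j ∉ circIoc (a l) (b l)) :
    N j l = 0 := by
  funext c
  show N j l c = 0
  -- total sum is zero
  have hT : ∑ i : ZMod n, G l i * H c i = 0 := by
    have := congrFun (congrFun hGH l) c
    simpa [Matrix.mul_apply, Matrix.transpose_apply] using this
  -- recursion formula
  have key : ∀ k : ℕ, k < n → N ((k : ℕ) : ZMod n) l c = N 0 l c +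
      ∑ i ∈ Finset.univ.filter (fun i : ZMod n => i.val < k), G l i * H c i := by
    intro k
    induction k with
    | zero => intro _; simp
    | succ k ih =>
      intro hk
      have hk' : k < n := by omega
      have hcast : ((k : ℕ) : ZMod n).val = k := ZMod.val_cast_of_lt hk'
      have hc1 : ((k + 1 : ℕ) : ZMod n) = ((k : ℕ) : ZMod n) + 1 := by push_cast; ring
      rw [hc1, hNrec]
      simp only [Matrix.add_apply, Matrix.of_apply]
      rw [ih hk']
      have hins : (Finset.univ.filter (fun i : ZMod n => i.val < k + 1)) =
          insert ((k : ℕ) : ZMod n) (Finset.univ.filter (fun i : ZMod n => i.val < k)) := by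
        ext i
        simp only [Finset.mem_insert, Finset.mem_filter, Finset.mem_univ, true_and]
        constructor
        · intro h
          rcases Nat.lt_succ_iff_lt_or_eq.mp h with h | h
          · exact Or.inr h
          · exact Or.inl (ZMod.val_injective n (by rw [hcast, h]))
        · rintro (rfl | h)
          · omega
          · omega
      rw [hins, Finset.sum_insert (by simp [hcast])]
      ring
  have hjcast : ((j.val : ℕ) : ZMod n) = j := ZMod.natCast_zmod_val j
  have hNj : N j l c = N 0 l c +
      ∑ i ∈ Finset.univ.filter (fun i : ZMod n => i.val < j.val), G l i * H c i := by
    have h := key j.val (ZMod.val_lt j)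
    rwa [hjcast] at h
  rw [hNj, hN0]
  set A := a l with hA
  set B' := (b l - A).val with hB
  have hsupp : ∀ i : ZMod n, G l i ≠ 0 → (i - A).val ≤ B' := fun i hi => (hspan l).2.2 i hi
  have hjv : j ∉ circIoc A (b l) := hj
  simp only [circIoc, Set.mem_setOf_eq, not_and, not_le] at hjv
  have hAv : A.val < n := ZMod.val_lt _
  have hJv : j.val < n := ZMod.val_lt _
  rcases Nat.eq_zero_or_pos (j - A).val with h0 | hpos
  · -- j = a l
    have hja : j = A := by
      have : j - A = 0 := (ZMod.val_eq_zero _).mp h0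
      linear_combination this
    have hpred : Finset.univ.filter (fun i : ZMod n => i.val < j.val) =
        Finset.univ.filter (fun i : ZMod n => ¬ A.val ≤ i.val) := by
      ext i
      simp only [Finset.mem_filter, Finset.mem_univ, true_and, not_le, hja]
    rw [hpred, Finset.sum_filter_add_sum_filter_not]
    exact hT
  · have hJB : B' < (j - A).val := hjv hpos
    have hjsub : (j - A).val = if A.val ≤ j.val then j.val - A.val else j.val + n - A.val :=
      zmod_val_sub' j A
    rcases le_or_gt A.val j.val with hle | hlt
    · rw [if_pos hle] at hjsub
      -- both sums equal the total sum
      have h1 : ∑ i ∈ Finset.univ.filter (fun i : ZMod n => A.val ≤ i.val), G l i * H c i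
          = ∑ i : ZMod n, G l i * H c i := by
        apply Finset.sum_subset (Finset.filter_subset _ _)
        intro i _ hi
        simp only [Finset.mem_filter, Finset.mem_univ, true_and, not_le] at hi
        by_contra hne
        have hGi : G l i ≠ 0 := fun h => hne (by rw [h, zero_mul])
        have := hsupp i hGi
        rw [zmod_val_sub' i A] at this
        have hiv : i.val < n := ZMod.val_lt _
        split_ifs at this with h'
        · omega
        · omega
      have h2 : ∑ i ∈ Finset.univ.filter (fun i : ZMod n => i.val < j.val), G l i * H c i
          = ∑ i : ZMod n, G l i * H c i := by
        apply Finset.sum_subset (Finset.filter_subset _ _)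
        intro i _ hi
        simp only [Finset.mem_filter, Finset.mem_univ, true_and, not_lt] at hi
        by_contra hne
        have hGi : G l i ≠ 0 := fun h => hne (by rw [h, zero_mul])
        have := hsupp i hGi
        rw [zmod_val_sub' i A] at this
        have hiv : i.val < n := ZMod.val_lt _
        split_ifs at this with h'
        · omega
        · omega
      rw [h1, h2, hT]; ring
    · rw [if_neg (not_le.mpr hlt)] at hjsub
      -- disjoint sums, union has full support
      have hdisj : Disjoint (Finset.univ.filter (fun i : ZMod n => A.val ≤ i.val))
          (Finset.univ.filter (fun i : ZMod n => i.val < j.val)) := by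
        rw [Finset.disjoint_filter]
        intro i _ h1
        omega
      rw [← Finset.sum_union hdisj]
      have hU : ∑ i ∈ (Finset.univ.filter (fun i : ZMod n => A.val ≤ i.val)) ∪
          (Finset.univ.filter (fun i : ZMod n => i.val < j.val)), G l i * H c i
          = ∑ i : ZMod n, G l i * H c i := by
        apply Finset.sum_subset (Finset.subset_univ _)
        intro i _ hi
        simp only [Finset.mem_union, Finset.mem_filter, Finset.mem_univ, true_and,
          not_or, not_le, not_lt] at hi
        by_contra hne
        have hGi : G l i ≠ 0 := fun h => hne (by rw [h, zero_mul])
        have := hsupp i hGi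
        rw [zmod_val_sub' i A] at this
        have hiv : i.val < n := ZMod.val_lt _
        split_ifs at this with h'
        · omega
        · omega
      rw [hU, hT]
end

section
/- Let (X, T) be a characteristic pair of a k-dimensional code C ⊆ F^n with full support, where T = [(a_l, b_l], l = 1,...,n]. Then the rows of X whose spans are conventional (i.e., a_l < b_l as integers, equivalently the span does not contain 0) are exactly k in number and are linearly independent, hence form a basis of C. -/
open scoped Classical

/-- Support of a conventional row starts at `a`. -/
lemma conv_support {n : ℕ} [NeZero n] {F : Type*} [Field F] {c : ZMod n → F} {a b : ZMod n}
    (h : IsSpan c a b) (h0 : (0 : ZMod n) ∉ circIoc a b) :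
    ∀ j, c j ≠ 0 → a.val ≤ j.val := by
  intro j hj
  by_contra hlt
  push_neg at hlt
  have hmem : (j - a).val ≤ (b - a).val := h.2.2 j hj
  have hane : a ≠ 0 := by
    intro h'
    simp [h', ZMod.val_zero] at hlt
  haveI : NeZero a := ⟨hane⟩
  have hneg : (-a).val = n - a.val := ZMod.val_neg_of_ne_zero a
  have haval : a.val < n := ZMod.val_lt a
  have hapos : 0 < a.val := by
    rcases Nat.eq_zero_or_pos a.val with h' | h'
    · exact absurd (ZMod.val_eq_zero a |>.mp h') hane
    · exact h'
  simp only [circIoc, Set.mem_setOf_eq, not_and, not_le, zero_sub] at h0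
  have h0' : (b - a).val < (-a).val := h0 (by omega)
  have hja : (j - a).val = j.val + (n - a.val) := by
    have : j - a = j + (-a) := by ring
    rw [this, ZMod.val_add, hneg, Nat.mod_eq_of_lt (by omega)]
  omega

/-- Let `(X, T)` be a characteristic pair of a `k`-dimensional code `C ⊆ F^n`.
Then the rows of `X` whose spans are conventional (do not contain `0`) are exactly
`k` in number, are linearly independent, and form a basis of `C`. -/
theorem stmt4 (F : Type*) [Field F] (n k : ℕ) [NeZero n] (hk : k ≤ n)
    (C : Submodule F (ZMod n → F)) (hdim : Module.finrank F C = k)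
    (x : ZMod n → ZMod n → F) (a b : ZMod n → ZMod n)
    (hspanC : Submodule.span F (Set.range x) = C)
    (hspans : ∀ l, IsSpan (x l) (a l) (b l))
    (ha : Function.Injective a) (hb : Function.Injective b)
    (hcover : ∀ j : ZMod n,
      (Finset.univ.filter fun l => j ∈ circIoc (a l) (b l)).card = n - k) :
    (Finset.univ.filter fun l : ZMod n =>
        (0 : ZMod n) ∉ circIoc (a l) (b l)).card = k ∧
    LinearIndependent F (fun l : ↑(Finset.univ.filter fun l : ZMod n =>
        (0 : ZMod n) ∉ circIoc (a l) (b l)) => x l.1) ∧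
    Submodule.span F (Set.range fun l : ↑(Finset.univ.filter fun l : ZMod n =>
        (0 : ZMod n) ∉ circIoc (a l) (b l)) => x l.1) = C := by
  set S : Finset (ZMod n) :=
    Finset.univ.filter fun l : ZMod n => (0 : ZMod n) ∉ circIoc (a l) (b l) with hS
  -- cardinality
  have hcard : S.card = k := by
    have h0 := hcover 0
    have hSc : S = Finset.univ \
        (Finset.univ.filter fun l => (0 : ZMod n) ∈ circIoc (a l) (b l)) := by
      rw [hS, ← Finset.filter_not]
    have hn : (Finset.univ : Finset (ZMod n)).card = n := by
      simp [ZMod.card]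
    rw [hSc, Finset.card_sdiff_of_subset (Finset.filter_subset _ _), h0, hn]
    omega
  refine ⟨hcard, ?_⟩
  -- linear independence
  have hli : LinearIndependent F (fun l : ↑S => x l.1) := by
    rw [linearIndependent_iff']
    intro s g hsum
    by_contra hg
    push_neg at hg
    obtain ⟨i, his, hgi⟩ := hg
    set t := s.filter (fun i => g i ≠ 0) with ht
    have htne : t.Nonempty := ⟨i, Finset.mem_filter.mpr ⟨his, hgi⟩⟩
    obtain ⟨i0, hi0t, hi0min⟩ := t.exists_min_image (fun i => (a i.1).val) htne
    have hi0s : i0 ∈ s := (Finset.mem_filter.mp hi0t).1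
    have hgi0 : g i0 ≠ 0 := (Finset.mem_filter.mp hi0t).2
    have hi0S : (0 : ZMod n) ∉ circIoc (a i0.1) (b i0.1) :=
      (Finset.mem_filter.mp i0.2).2
    have heval : ∑ j ∈ s, g j * x j.1 (a i0.1) = 0 := by
      have := congrFun hsum (a i0.1)
      simpa using this
    have hsingle : ∑ j ∈ s, g j * x j.1 (a i0.1) = g i0 * x i0.1 (a i0.1) := by
      apply Finset.sum_eq_single
      · intro j hjs hji0
        by_cases hgj : g j = 0
        · simp [hgj]
        · by_cases hxj : x j.1 (a i0.1) = 0
          · simp [hxj]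
          · exfalso
            have hjS : (0 : ZMod n) ∉ circIoc (a j.1) (b j.1) :=
              (Finset.mem_filter.mp j.2).2
            have hle1 : (a j.1).val ≤ (a i0.1).val :=
              conv_support (hspans j.1) hjS _ hxj
            have hle2 : (a i0.1).val ≤ (a j.1).val :=
              hi0min j (Finset.mem_filter.mpr ⟨hjs, hgj⟩)
            have : a j.1 = a i0.1 := ZMod.val_injective n (le_antisymm hle1 hle2)
            exact hji0 (Subtype.ext (ha this))
      · intro h; exact absurd hi0s h
    rw [hsingle] at heval
    have hx0 : x i0.1 (a i0.1) ≠ 0 := (hspans i0.1).1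
    rcases mul_eq_zero.mp heval with h | h
    · exact hgi0 h
    · exact hx0 h
  refine ⟨hli, ?_⟩
  -- span
  have hmemC : ∀ l : ↑S, x l.1 ∈ C := fun l =>
    hspanC ▸ Submodule.subset_span (Set.mem_range_self l.1)
  have hle : Submodule.span F (Set.range fun l : ↑S => x l.1) ≤ C := by
    rw [Submodule.span_le]
    rintro _ ⟨l, rfl⟩
    exact hmemC l
  haveI : FiniteDimensional F C := FiniteDimensional.finiteDimensional_submodule C
  have hcardt : Fintype.card ↑S = k := by
    rw [Fintype.card_coe, hcard]
  have hfr : Module.finrank F (Submodule.span F (Set.range fun l : ↑S => x l.1)) = k := by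
    rw [finrank_span_eq_card hli, hcardt]
  exact Submodule.eq_of_le_of_finrank_le hle (by rw [hdim, hfr])
end

section
/- (Conditioned code duality, linear version.) Let V and W be finite-dimensional F-vector spaces with non-degenerate bilinear pairing, P ⊆ V × F^n a subspace and R ⊆ V a subspace. Define the conditioned projection π(P | R) = { a ∈ F^n : ∃ v ∈ R, (v,a) ∈ P }. With the pairing on (V × F^n) × (W × F^n) given by ⟨(v,a),(w,b)⟩ = ⟨v,w⟩ + a·bᵀ, one has (π(P | R))^⊥ = π(P^⊥ | R^⊥), where ⊥ denotes the annihilator with respect to the relevant pairings. -/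
open Module LinearMap

private lemma factor_aux (F M N : Type*) [Field F] [AddCommGroup M] [Module F M]
    [AddCommGroup N] [Module F N] (pr : M →ₗ[F] N) (φ : M →ₗ[F] F)
    (h : ∀ m, pr m = 0 → φ m = 0) : ∃ g : N →ₗ[F] F, ∀ m, g (pr m) = φ m := by
  have hker : LinearMap.ker pr ≤ LinearMap.ker φ := fun m hm => h m hm
  let f₁ : (M ⧸ LinearMap.ker pr) →ₗ[F] F := (LinearMap.ker pr).liftQ φ hker
  let pr₁ : (M ⧸ LinearMap.ker pr) →ₗ[F] N := (LinearMap.ker pr).liftQ pr le_rfl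
  have hinj : LinearMap.ker pr₁ = ⊥ := Submodule.ker_liftQ_eq_bot _ _ _ le_rfl
  obtain ⟨retr, hretr⟩ := pr₁.exists_leftInverse_of_injective hinj
  refine ⟨f₁.comp retr, fun m => ?_⟩
  have : pr m = pr₁ ((LinearMap.ker pr).mkQ m) := rfl
  rw [this]
  have h2 : retr (pr₁ ((LinearMap.ker pr).mkQ m)) = (LinearMap.ker pr).mkQ m := by
    have := congrFun (congrArg DFunLike.coe hretr) ((LinearMap.ker pr).mkQ m)
    simpa using this
  calc f₁.comp retr (pr₁ ((LinearMap.ker pr).mkQ m)) = f₁ (retr (pr₁ ((LinearMap.ker pr).mkQ m))) := rfl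
    _ = f₁ ((LinearMap.ker pr).mkQ m) := by rw [h2]
    _ = φ m := rfl

private lemma surj_aux (F V W : Type*) [Field F]
    [AddCommGroup V] [Module F V] [AddCommGroup W] [Module F W]
    [FiniteDimensional F V] [FiniteDimensional F W]
    (B : V →ₗ[F] W →ₗ[F] F)
    (hBr : ∀ w, (∀ v, B v w = 0) → w = 0)
    (hdim : Module.finrank F V = Module.finrank F W)
    (g : V →ₗ[F] F) : ∃ w : W, ∀ v, B v w = g v := by
  have hinj : Function.Injective B.flip := by
    rw [← LinearMap.ker_eq_bot, Submodule.eq_bot_iff]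
    intro w hw
    exact hBr w fun v => congrFun (congrArg DFunLike.coe hw) v
  have hd : Module.finrank F W = Module.finrank F (V →ₗ[F] F) := by
    rw [← hdim, (Subspace.dual_finrank_eq (K := F) (V := V)).symm]
  have hsurj := (LinearMap.injective_iff_surjective_of_finrank_eq_finrank hd).mp hinj
  obtain ⟨w, hw⟩ := hsurj g
  exact ⟨w, fun v => congrFun (congrArg DFunLike.coe hw) v⟩




/-- Conditioned code duality (linear version): with a non-degenerate pairing
`B : V × W → F`, subspaces `P ⊆ V × F^n` and `R ⊆ V`, and
`π(P|R) = {a : ∃ v ∈ R, (v,a) ∈ P}`, one has `(π(P|R))^⊥ = π(P^⊥|R^⊥)`,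
where annihilators are taken with respect to
`⟨(v,a),(w,b)⟩ = ⟨v,w⟩ + Σ_i a_i b_i`. -/
theorem stmt7 (F V W : Type*) [Field F]
    [AddCommGroup V] [Module F V] [AddCommGroup W] [Module F W]
    [FiniteDimensional F V] [FiniteDimensional F W]
    (n : ℕ)
    (B : V →ₗ[F] W →ₗ[F] F)
    (hBl : ∀ v, (∀ w, B v w = 0) → v = 0)
    (hBr : ∀ w, (∀ v, B v w = 0) → w = 0)
    (hdim : Module.finrank F V = Module.finrank F W)
    (P : Submodule F (V × (Fin n → F))) (R : Submodule F V) :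
    {b : Fin n → F | ∀ a ∈ {a : Fin n → F | ∃ v ∈ R, (v, a) ∈ P},
        ∑ i, a i * b i = 0}
      = {b : Fin n → F | ∃ w, (∀ v ∈ R, B v w = 0) ∧
          ∀ p ∈ P, B p.1 w + ∑ i, p.2 i * b i = 0} := by
  ext b
  simp only [Set.mem_setOf_eq]
  constructor
  · intro hb
    set Q : Submodule F (V × (Fin n → F)) := P ⊔ R.prod ⊥ with hQdef
    let dotb : (V × (Fin n → F)) →ₗ[F] F :=
      { toFun := fun p => -∑ i, p.2 i * b i
        map_add' := by
          intro x y
          simp only [Prod.snd_add, Pi.add_apply, add_mul, Finset.sum_add_distrib]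
          ring
        map_smul' := by
          intro c x
          simp only [Prod.smul_snd, Pi.smul_apply, smul_eq_mul, mul_assoc,
            RingHom.id_apply, ← Finset.mul_sum]
          ring }
    let φ : Q →ₗ[F] F := dotb.comp Q.subtype
    let pr : Q →ₗ[F] V := (LinearMap.fst F V (Fin n → F)).comp Q.subtype
    have hker : ∀ q : Q, pr q = 0 → φ q = 0 := by
      rintro ⟨q, hq⟩ hq1
      have hq1' : q.1 = 0 := hq1
      rw [hQdef, Submodule.mem_sup] at hq
      obtain ⟨y, hy, z, hz, hyz⟩ := hq
      have hz2 : z.2 = 0 := hz.2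
      have hy1 : y.1 ∈ R := by
        have h1 : y.1 + z.1 = 0 := by rw [← hq1', ← hyz]; rfl
        have : y.1 = -z.1 := eq_neg_of_add_eq_zero_left h1
        rw [this]; exact R.neg_mem hz.1
      have hy2 : ∑ i, y.2 i * b i = 0 := hb y.2 ⟨y.1, hy1, hy⟩
      have hq2 : q.2 = y.2 := by
        rw [← hyz]; simp [hz2]
      show -∑ i, q.2 i * b i = 0
      rw [hq2, hy2, neg_zero]
    obtain ⟨g, hg⟩ := factor_aux F Q V pr φ hker
    obtain ⟨w, hw⟩ := surj_aux F V W B hBr hdim g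
    refine ⟨w, fun v hv => ?_, fun p hp => ?_⟩
    · have hmem : ((v, 0) : V × (Fin n → F)) ∈ Q :=
        Submodule.mem_sup_right (Submodule.mem_prod.mpr ⟨hv, Submodule.zero_mem _⟩)
      have := hg ⟨(v, 0), hmem⟩
      have hpr : pr ⟨(v, 0), hmem⟩ = v := rfl
      rw [hpr] at this
      have hφ : φ ⟨(v, 0), hmem⟩ = 0 := by
        show -∑ i, (0 : Fin n → F) i * b i = 0
        simp
      rw [hw v, this, hφ]
    · have hmem : p ∈ Q := Submodule.mem_sup_left hp
      have := hg ⟨p, hmem⟩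
      have hpr : pr ⟨p, hmem⟩ = p.1 := rfl
      rw [hpr] at this
      have hφ : φ ⟨p, hmem⟩ = -∑ i, p.2 i * b i := rfl
      rw [hw p.1, this, hφ]
      ring
  · rintro ⟨w, hw1, hw2⟩ a ⟨v, hv, hvp⟩
    have h1 := hw2 (v, a) hvp
    have h2 := hw1 v hv
    simp only at h1
    linear_combination h1 - h2
end

section
/- Let T = T_{(G,H,S)} be a KV-trellis (G ∈ F^{k×n} of rank k with rows having characteristic spans (a_l,b_l] of C) with state matrices N_j. If j = b_l for some l, then the j-th row H_j of H^T satisfies H_j = −g_{lj}^{−1} · row(N_j, l), where g_{lj} ≠ 0 is the entry of the l-th row of G at position j. -/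
open scoped Classical

lemma valSub {n : ℕ} [NeZero n] (x a : ZMod n) :
    (x - a).val = if a.val ≤ x.val then x.val - a.val else x.val + n - a.val := by
  have h1 : ((x - a) + a) = x := sub_add_cancel x a
  have h2 : ((x - a) + a).val = ((x - a).val + a.val) % n := ZMod.val_add _ _
  have hd : (x - a).val < n := ZMod.val_lt _
  have hav : a.val < n := ZMod.val_lt _
  have hx : x.val < n := ZMod.val_lt _
  rw [h1] at h2
  rcases Nat.lt_or_ge ((x - a).val + a.val) n with h | h
  · rw [Nat.mod_eq_of_lt h] at h2; split_ifs <;> omega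
  · have h3 : ((x - a).val + a.val) % n = (x - a).val + a.val - n := by
      rw [Nat.mod_eq_sub_mod h, Nat.mod_eq_of_lt (by omega)]
    rw [h3] at h2; split_ifs <;> omega

/-- In a KV-trellis `T_{(G,H,S)}` (rows of `G` have characteristic spans of
`C = ker Hᵀ`) with BCJR state matrices `N_j`: if `j = b_l`, then the `j`-th row
`H_j` of `Hᵀ` satisfies `H_j = −g_{lj}⁻¹ · row(N_j, l)`. -/
theorem stmt8 (F : Type*) [Field F] (n k m : ℕ) [NeZero n]
    (G : Matrix (Fin k) (ZMod n) F) (H : Matrix (Fin m) (ZMod n) F)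
    (hGH : G * H.transpose = 0) (hG : G.rank = k) (hH : H.rank = m)
    (a b : Fin k → ZMod n)
    (hspan : ∀ l, IsSpan (G l) (a l) (b l))
    (ha : Function.Injective a) (hb : Function.Injective b)
    (hchar : ∀ l, ∀ c : ZMod n → F, (∀ i, ∑ j, c j * H i j = 0) → c ≠ 0 →
      ∀ b', IsSpan c (a l) b' → (b l - a l).val ≤ (b' - a l).val)
    (N : ZMod n → Matrix (Fin k) (Fin m) F)
    (hN0 : ∀ l c, N 0 l c =
      ∑ j ∈ Finset.univ.filter (fun j : ZMod n => (a l).val ≤ j.val), G l j * H c j)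
    (hNrec : ∀ j : ZMod n, N (j + 1) = N j + Matrix.of (fun l c => G l j * H c j))
    (l : Fin k) :
    ∀ c, H c (b l) = -(G l (b l))⁻¹ * N (b l) l c := by
  intro c
  set A := (a l).val with hA
  set B := (b l).val with hB
  have hAn : A < n := ZMod.val_lt _
  have hBn : B < n := ZMod.val_lt _
  set t : ZMod n → F := fun j => G l j * H c j with ht
  -- full sum is zero
  have hsum : ∑ j, t j = 0 := by
    have := congrFun (congrFun hGH l) c
    simpa [Matrix.mul_apply, Matrix.transpose_apply, ht] using this
  -- support
  have hsupp : ∀ j : ZMod n, t j ≠ 0 → (j - a l).val ≤ (b l - a l).val := by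
    intro j hj
    have : G l j ≠ 0 := fun h => hj (by simp [ht, h])
    exact (hspan l).2.2 j this
  -- recursion unfolded
  have hNval : ∀ i : ℕ, i < n →
      N (i : ZMod n) l c = N 0 l c +
        ∑ j ∈ Finset.univ.filter (fun j : ZMod n => j.val < i), t j := by
    intro i
    induction i with
    | zero => intro _; simp
    | succ i ih =>
      intro hi
      have hiv : ((i : ZMod n)).val = i := ZMod.val_cast_of_lt (by omega)
      have hstep : N ((i : ZMod n) + 1) l c = N (i : ZMod n) l c + t (i : ZMod n) := by
        rw [hNrec (i : ZMod n)]; simp [ht]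
      have hcast : ((i : ZMod n) + 1) = ((i + 1 : ℕ) : ZMod n) := by push_cast; ring
      have hfil : Finset.univ.filter (fun j : ZMod n => j.val < i + 1) =
          insert (i : ZMod n) (Finset.univ.filter (fun j : ZMod n => j.val < i)) := by
        ext j
        simp only [Finset.mem_filter, Finset.mem_univ, true_and, Finset.mem_insert]
        constructor
        · intro hj
          rcases Nat.lt_or_ge j.val i with h | h
          · exact Or.inr h
          · left
            have : j.val = (i : ZMod n).val := by omega
            exact ZMod.val_injective n this
        · rintro (rfl | h)
          · omega
          · omega
      rw [← hcast, hstep, ih (by omega), hfil, Finset.sum_insert (by simp [hiv]), add_assoc,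
        add_comm (t _)]
  have hbl : ((B : ℕ) : ZMod n) = b l := ZMod.natCast_rightInverse (b l)
  have hNb : N (b l) l c = N 0 l c +
      ∑ j ∈ Finset.univ.filter (fun j : ZMod n => j.val < B), t j := by
    rw [← hbl]; exact hNval B hBn
  have hN0' : N 0 l c = ∑ j ∈ Finset.univ.filter (fun j : ZMod n => A ≤ j.val), t j :=
    hN0 l c
  have hg : G l (b l) ≠ 0 := (hspan l).2.1
  -- key algebraic identity
  have key : N (b l) l c + t (b l) = 0 := by
    have hfle : Finset.univ.filter (fun j : ZMod n => j.val ≤ B) =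
        insert (b l) (Finset.univ.filter (fun j : ZMod n => j.val < B)) := by
      ext j
      simp only [Finset.mem_filter, Finset.mem_univ, true_and, Finset.mem_insert]
      constructor
      · intro hj
        rcases Nat.lt_or_ge j.val B with h | h
        · exact Or.inr h
        · exact Or.inl (ZMod.val_injective n (by omega))
      · rintro (rfl | h) <;> omega
    have hsumle : ∑ j ∈ Finset.univ.filter (fun j : ZMod n => j.val < B), t j + t (b l) =
        ∑ j ∈ Finset.univ.filter (fun j : ZMod n => j.val ≤ B), t j := by
      rw [hfle, Finset.sum_insert (by simp [hB]), add_comm]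
    rcases le_or_gt A B with hAB | hAB
    · -- non-wrap: support ⊆ [A, B]
      have hsupp' : ∀ j : ZMod n, t j ≠ 0 → A ≤ j.val ∧ j.val ≤ B := by
        intro j hj
        have h1 := hsupp j hj
        have h2 := valSub j (a l)
        have h3 := valSub (b l) (a l)
        have hjv : j.val < n := ZMod.val_lt _
        rw [h2, h3] at h1
        split_ifs at h1 <;> omega
      have e1 : ∑ j ∈ Finset.univ.filter (fun j : ZMod n => A ≤ j.val), t j = ∑ j, t j := by
        apply Finset.sum_subset (Finset.subset_univ _)
        intro j _ hj
        simp only [Finset.mem_filter, Finset.mem_univ, true_and, not_le] at hj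
        by_contra h
        exact absurd (hsupp' j h).1 (by omega)
      have e2 : ∑ j ∈ Finset.univ.filter (fun j : ZMod n => j.val ≤ B), t j = ∑ j, t j := by
        apply Finset.sum_subset (Finset.subset_univ _)
        intro j _ hj
        simp only [Finset.mem_filter, Finset.mem_univ, true_and, not_le] at hj
        by_contra h
        exact absurd (hsupp' j h).2 (by omega)
      rw [hNb, add_assoc, hsumle, hN0', e1, e2, hsum]; simp
    · -- wrap: support ⊆ [A, n) ∪ [0, B]
      have hsupp' : ∀ j : ZMod n, t j ≠ 0 → A ≤ j.val ∨ j.val ≤ B := by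
        intro j hj
        have h1 := hsupp j hj
        have h2 := valSub j (a l)
        have h3 := valSub (b l) (a l)
        have hjv : j.val < n := ZMod.val_lt _
        rw [h2, h3] at h1
        split_ifs at h1 <;> omega
      have hdisj : Disjoint (Finset.univ.filter (fun j : ZMod n => A ≤ j.val))
          (Finset.univ.filter (fun j : ZMod n => j.val ≤ B)) := by
        rw [Finset.disjoint_left]
        intro j hj1 hj2
        simp only [Finset.mem_filter, Finset.mem_univ, true_and] at hj1 hj2
        omega
      have e3 : (∑ j ∈ Finset.univ.filter (fun j : ZMod n => A ≤ j.val), t j) +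
          (∑ j ∈ Finset.univ.filter (fun j : ZMod n => j.val ≤ B), t j) = ∑ j, t j := by
        rw [← Finset.sum_union hdisj]
        apply Finset.sum_subset (Finset.subset_univ _)
        intro j _ hj
        simp only [Finset.mem_union, Finset.mem_filter, Finset.mem_univ, true_and, not_or,
          not_le] at hj
        by_contra h
        rcases hsupp' j h with h' | h' <;> omega
      rw [hNb, add_assoc, hsumle, hN0', e3, hsum]
  -- conclude
  have h4 : N (b l) l c = -(G l (b l) * H c (b l)) := by
    have h5 := key
    simp only [ht] at h5
    linear_combination h5
  rw [h4, neg_mul_neg]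
  field_simp
end

section
/- Let T = T_{(G,H,S)} be a KV-trellis of C with state matrices N_j. If j is not an ending point of any of the k characteristic spans (a_l,b_l], then H_j ∉ im N_j (the j-th row of H^T is not in the row space of N_j). -/
open scoped Classical

lemma subval {n : ℕ} [NeZero n] (x y : ZMod n) :
    (x - y).val = if y.val ≤ x.val then x.val - y.val else x.val + n - y.val := by
  split_ifs with h
  · exact ZMod.val_sub h
  · push_neg at h
    have hy : y ≠ 0 := by
      intro h0; rw [h0, ZMod.val_zero] at h; omega
    have : NeZero y := ⟨hy⟩
    rw [sub_eq_add_neg, ZMod.val_add, ZMod.val_neg_of_ne_zero]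
    have hxn := ZMod.val_lt x
    have hyn := ZMod.val_lt y
    rw [Nat.mod_eq_of_lt (by omega)]
    omega

lemma predval {n : ℕ} [NeZero n] (u : ZMod n) :
    (u - 1).val = if u = 0 then n - 1 else u.val - 1 := by
  rcases eq_or_ne n 1 with rfl | hn
  · simp [Subsingleton.elim u 0]
  · have h1 : (1 : ZMod n).val = 1 := ZMod.val_one'' hn
    rw [subval, h1]
    by_cases h0 : u = 0
    · rw [if_pos h0, h0, ZMod.val_zero, if_neg (by omega)]; omega
    · have hv : u.val ≠ 0 := by rwa [Ne, ZMod.val_eq_zero]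
      rw [if_neg h0, if_pos (by omega)]

/-- In a KV-trellis `T_{(G,H,S)}` of `C = ker Hᵀ` with BCJR state matrices `N_j`:
if `j` is not an ending point of any of the `k` characteristic spans, then `H_j`
(the `j`-th row of `Hᵀ`) is not in the row space of `N_j`. -/
theorem stmt9 (F : Type*) [Field F] (n k m : ℕ) [NeZero n]
    (G : Matrix (Fin k) (ZMod n) F) (H : Matrix (Fin m) (ZMod n) F)
    (hGH : G * H.transpose = 0) (hG : G.rank = k) (hH : H.rank = m)
    (hsuppD : ∀ j : ZMod n, ∃ i, H i j ≠ 0)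
    (a b : Fin k → ZMod n)
    (hspan : ∀ l, IsSpan (G l) (a l) (b l))
    (ha : Function.Injective a) (hb : Function.Injective b)
    (hchar : ∀ l, ∀ c : ZMod n → F, (∀ i, ∑ j, c j * H i j = 0) → c ≠ 0 →
      ∀ b', IsSpan c (a l) b' → (b l - a l).val ≤ (b' - a l).val)
    (N : ZMod n → Matrix (Fin k) (Fin m) F)
    (hN0 : ∀ l c, N 0 l c =
      ∑ j ∈ Finset.univ.filter (fun j : ZMod n => (a l).val ≤ j.val), G l j * H c j)
    (hNrec : ∀ j : ZMod n, N (j + 1) = N j + Matrix.of (fun l c => G l j * H c j))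
    (j : ZMod n) (hj : ∀ l, b l ≠ j) :
    H.transpose j ∉ Submodule.span F (Set.range (N j)) := by
  intro hmem
  replace hmem := (Submodule.mem_span_range_iff_exists_fun (R := F) (v := fun l => N j l)).mp hmem
  obtain ⟨lam, hlam⟩ := hmem
  -- full row sums vanish
  have hfull : ∀ l i, ∑ x : ZMod n, G l x * H i x = 0 := by
    intro l i
    have h0 := congrFun (congrFun hGH l) i
    simpa [Matrix.mul_apply, Matrix.transpose_apply] using h0
  -- closed form of N along the recursion
  have key : ∀ t : ℕ, t ≤ n → ∀ l i, N (t : ZMod n) l i =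
      (∑ x ∈ Finset.univ.filter (fun x : ZMod n => (a l).val ≤ x.val), G l x * H i x)
      + ∑ x ∈ Finset.univ.filter (fun x : ZMod n => x.val < t), G l x * H i x := by
    intro t
    induction t with
    | zero =>
      intro _ l i
      have : (Finset.univ.filter (fun x : ZMod n => x.val < 0)) = ∅ := by
        apply Finset.filter_false_of_mem; intro x _; omega
      simp [this, hN0 l i]
    | succ t ih =>
      intro ht l i
      have ht' : t < n := ht
      have hc : ((t + 1 : ℕ) : ZMod n) = (t : ZMod n) + 1 := by push_cast; ring
      rw [hc, hNrec]
      have hval : ((t : ZMod n)).val = t := ZMod.val_natCast_of_lt ht'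
      have hset : Finset.univ.filter (fun x : ZMod n => x.val < t + 1)
          = insert ((t : ZMod n)) (Finset.univ.filter (fun x : ZMod n => x.val < t)) := by
        ext x
        simp only [Finset.mem_filter, Finset.mem_insert, Finset.mem_univ, true_and]
        constructor
        · intro hx
          rcases eq_or_lt_of_le (Nat.lt_succ_iff.mp hx) with he | hl
          · left; exact ZMod.val_injective n (by rw [hval, he])
          · right; exact hl
        · rintro (rfl | hx)
          · omega
          · omega
      rw [hset, Finset.sum_insert (by simp [hval])]
      simp only [Matrix.add_apply, Matrix.of_apply, ih (le_of_lt ht') l i]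
      ring
  have hvn : ∀ x : ZMod n, x.val < n := fun x => ZMod.val_lt x
  have Ncirc : ∀ l i, N j l i =
      ∑ x ∈ Finset.univ.filter
        (fun x : ZMod n => (x - a l).val ≤ ((j - a l) - 1).val), G l x * H i x := by
    intro l i
    have hA := key j.val (le_of_lt (ZMod.val_lt j)) l i
    rw [ZMod.natCast_zmod_val j] at hA
    rw [hA, Finset.sum_filter, Finset.sum_filter, Finset.sum_filter,
      ← Finset.sum_add_distrib]
    rcases lt_or_ge (a l).val j.val with hcase | hcase
    · have hne : j - a l ≠ 0 := by
        intro h0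
        have := congrArg ZMod.val (sub_eq_zero.mp h0)
        omega
      have h2 := subval j (a l)
      rw [if_pos (le_of_lt hcase)] at h2
      have h3 := predval (j - a l)
      rw [if_neg hne] at h3
      have hptw : ∀ x : ZMod n,
          ((if (a l).val ≤ x.val then G l x * H i x else 0)
            + if x.val < j.val then G l x * H i x else 0)
          = (if (x - a l).val ≤ ((j - a l) - 1).val then G l x * H i x else 0)
            + G l x * H i x := by
        intro x
        have h1 := subval x (a l)
        have hs : ((x - a l).val ≤ ((j - a l) - 1).val)
            ↔ ((a l).val ≤ x.val ∧ x.val < j.val) := by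
          rw [h3, h1]
          have := hvn x; have := hvn (a l); have := hvn j
          split_ifs with hp <;> omega
        rw [if_congr hs rfl rfl]
        by_cases hp : (a l).val ≤ x.val <;> by_cases hq : x.val < j.val <;>
          simp [hp, hq] <;> exfalso <;> omega
      calc (∑ x : ZMod n, ((if (a l).val ≤ x.val then G l x * H i x else 0)
              + if x.val < j.val then G l x * H i x else 0))
          = ∑ x : ZMod n, ((if (x - a l).val ≤ ((j - a l) - 1).val
              then G l x * H i x else 0) + G l x * H i x) :=
            Finset.sum_congr rfl (fun x _ => hptw x)
        _ = (∑ x : ZMod n, if (x - a l).val ≤ ((j - a l) - 1).val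
              then G l x * H i x else 0) + ∑ x : ZMod n, G l x * H i x :=
            Finset.sum_add_distrib
        _ = ∑ x : ZMod n, if (x - a l).val ≤ ((j - a l) - 1).val
              then G l x * H i x else 0 := by rw [hfull l i, add_zero]
    · apply Finset.sum_congr rfl
      intro x _
      have h1 := subval x (a l)
      have h3 := predval (j - a l)
      have hs : ((x - a l).val ≤ ((j - a l) - 1).val)
          ↔ ((a l).val ≤ x.val ∨ x.val < j.val) := by
        by_cases hu : j - a l = 0
        · have hv : j.val = (a l).val := congrArg ZMod.val (sub_eq_zero.mp hu)
          rw [h3, if_pos hu, h1]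
          have := hvn x; have := hvn (a l); have := hvn j
          split_ifs with hp <;> omega
        · have hne : j.val ≠ (a l).val := by
            intro hv
            exact hu (by rw [sub_eq_zero]; exact ZMod.val_injective n hv)
          have h2 := subval j (a l)
          rw [if_neg (by omega)] at h2
          rw [h3, if_neg hu, h2, h1]
          have := hvn x; have := hvn (a l); have := hvn j
          split_ifs with hp <;> omega
      rw [if_congr hs rfl rfl]
      by_cases hp : (a l).val ≤ x.val <;> by_cases hq : x.val < j.val <;>
        simp [hp, hq] <;> exfalso <;> omega
  have hvalinj : ∀ x y : ZMod n, x.val = y.val → x = y := fun x y h => ZMod.val_injective n h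
  set C : Fin k → Prop := fun l => 0 < (j - a l).val ∧ (j - a l).val < (b l - a l).val with hCdef
  have hNzero : ∀ l, ¬ C l → ∀ i, N j l i = 0 := by
    intro l hl i
    rw [Ncirc l i]
    by_cases h0 : (j - a l).val = 0
    · have hfil : Finset.univ.filter
          (fun x : ZMod n => (x - a l).val ≤ ((j - a l) - 1).val) = Finset.univ := by
        apply Finset.filter_true_of_mem
        intro x _
        have h3 := predval (j - a l)
        rw [if_pos (by rwa [← ZMod.val_eq_zero])] at h3
        rw [h3]
        have := hvn (x - a l)
        omega
      rw [hfil]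
      exact hfull l i
    · have h0' : 0 < (j - a l).val := Nat.pos_of_ne_zero h0
      have hble : (b l - a l).val ≤ (j - a l).val := by
        by_contra hgt
        push_neg at hgt
        exact hl ⟨h0', hgt⟩
      have hbne : (b l - a l).val ≠ (j - a l).val := by
        intro he
        exact hj l (sub_left_inj.mp (hvalinj _ _ he))
      have hne : j - a l ≠ 0 := fun h => h0 (by rw [h, ZMod.val_zero])
      have h3 := predval (j - a l)
      rw [if_neg hne] at h3
      rw [← hfull l i]
      apply Finset.sum_subset (Finset.filter_subset _ _)
      intro x _ hx
      simp only [Finset.mem_filter, Finset.mem_univ, true_and, not_le] at hx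
      have hGx : G l x = 0 := by
        by_contra hGx
        have hxmem : (x - a l).val ≤ (b l - a l).val := (hspan l).2.2 x hGx
        omega
      rw [hGx, zero_mul]
  set lam' : Fin k → F := fun l => if C l then lam l else 0 with hlam'def
  have hrep : ∀ i, ∑ l, lam' l * N j l i = H i j := by
    intro i
    have h0 := congrFun hlam i
    simp only [Finset.sum_apply, Pi.smul_apply, smul_eq_mul, Matrix.transpose_apply] at h0
    rw [← h0]
    apply Finset.sum_congr rfl
    intro l _
    by_cases hc : C l
    · simp only [hlam'def]
      rw [if_pos hc]
    · rw [hNzero l hc i, mul_zero, mul_zero]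
  have hLne : ∃ l, lam' l ≠ 0 := by
    by_contra hno
    push_neg at hno
    obtain ⟨i, hi⟩ := hsuppD j
    apply hi
    rw [← hrep i]
    exact Finset.sum_eq_zero fun l _ => by rw [hno l, zero_mul]
  obtain ⟨ls, hlsmem, hmax⟩ := Finset.exists_max_image
    (Finset.univ.filter (fun l => lam' l ≠ 0)) (fun l => (j - a l).val)
    (by obtain ⟨l, hl⟩ := hLne
        exact ⟨l, Finset.mem_filter.mpr ⟨Finset.mem_univ l, hl⟩⟩)
  have hls0 : lam' ls ≠ 0 := (Finset.mem_filter.mp hlsmem).2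
  have hCls : C ls := by
    by_contra hc
    exact hls0 (by simp [hlam'def, hc])
  have hlamls : lam ls ≠ 0 := by
    intro h
    exact hls0 (by simp [hlam'def, h])
  have hCne : ∀ l, C l → j - a l ≠ 0 := by
    intro l hCl h
    have := hCl.1
    rw [h, ZMod.val_zero] at this
    exact lt_irrefl 0 this
  set d : ZMod n → F := fun x =>
    (∑ l, lam' l * (if (x - a l).val ≤ ((j - a l) - 1).val then G l x else 0))
      - (if x = j then 1 else 0) with hddef
  have hdcode : ∀ i, ∑ x, d x * H i x = 0 := by
    intro i
    have hterm : ∀ x : ZMod n, d x * H i x =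
        (∑ l, lam' l * ((if (x - a l).val ≤ ((j - a l) - 1).val then G l x else 0) * H i x))
          - (if x = j then 1 else 0) * H i x := by
      intro x
      simp only [hddef, sub_mul, Finset.sum_mul, mul_assoc]
    rw [Finset.sum_congr rfl (fun x _ => hterm x), Finset.sum_sub_distrib, Finset.sum_comm]
    have hA : ∀ l, (∑ x : ZMod n, lam' l *
        ((if (x - a l).val ≤ ((j - a l) - 1).val then G l x else 0) * H i x))
        = lam' l * N j l i := by
      intro l
      rw [← Finset.mul_sum, Ncirc l i, Finset.sum_filter]
      congr 1
      apply Finset.sum_congr rfl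
      intro x _
      rw [ite_mul, zero_mul]
    rw [Finset.sum_congr rfl (fun l _ => hA l), hrep i]
    have hB : (∑ x : ZMod n, (if x = j then (1:F) else 0) * H i x) = H i j := by
      simp [ite_mul]
    rw [hB, sub_self]
  have hdj : d j = -1 := by
    simp only [hddef]
    rw [if_pos trivial]
    have hz : ∀ l, lam' l * (if (j - a l).val ≤ ((j - a l) - 1).val then G l j else 0) = 0 := by
      intro l
      by_cases hc : C l
      · have h3 := predval (j - a l)
        rw [if_neg (hCne l hc)] at h3
        rw [if_neg (by omega), mul_zero]
      · simp [hlam'def, hc]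
    rw [Finset.sum_eq_zero (fun l _ => hz l), zero_sub]
  have hdne : d ≠ 0 := by
    intro h
    rw [h] at hdj
    simp only [Pi.zero_apply] at hdj
    exact one_ne_zero (neg_eq_zero.mp hdj.symm)
  have hals_ne_j : a ls ≠ j := fun h => hCne ls hCls (by rw [h, sub_self])
  have hdals : d (a ls) = lam ls * G ls (a ls) := by
    simp only [hddef]
    rw [if_neg (fun h => hals_ne_j h), sub_zero]
    rw [Finset.sum_eq_single ls]
    · rw [if_pos (by rw [sub_self, ZMod.val_zero]; exact Nat.zero_le _)]
      simp only [hlam'def]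
      rw [if_pos hCls]
    · intro l _ hlne
      by_cases hl0 : lam' l = 0
      · rw [hl0, zero_mul]
      · have hCl : C l := by
          by_contra hc
          exact hl0 (by simp [hlam'def, hc])
        have hmaxl : (j - a l).val ≤ (j - a ls).val :=
          hmax l (Finset.mem_filter.mpr ⟨Finset.mem_univ l, hl0⟩)
        have hne2 : (j - a l).val ≠ (j - a ls).val := by
          intro he
          exact hlne (ha (sub_right_inj.mp (hvalinj _ _ he)))
        have heq : a ls - a l = (j - a l) - (j - a ls) := by ring
        have h4 := subval (j - a l) (j - a ls)
        rw [if_neg (by omega)] at h4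
        have h3 := predval (j - a l)
        rw [if_neg (hCne l hCl)] at h3
        have hcond : ¬ ((a ls - a l).val ≤ ((j - a l) - 1).val) := by
          rw [heq, h4, h3]
          have := hvn (j - a ls)
          omega
        rw [if_neg hcond, mul_zero]
    · intro h
      exact absurd (Finset.mem_univ ls) h
  have hdals_ne : d (a ls) ≠ 0 := by
    rw [hdals]
    exact mul_ne_zero hlamls (hspan ls).1
  have hsupp : ∀ x, d x ≠ 0 → x ∈ circIcc (a ls) j := by
    intro x hx
    by_contra hxmem
    apply hx
    have hxval : ¬ ((x - a ls).val ≤ (j - a ls).val) := fun h => hxmem h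
    simp only [hddef]
    have hxj : x ≠ j := by
      rintro rfl
      exact hxval (le_refl _)
    rw [if_neg hxj, sub_zero]
    apply Finset.sum_eq_zero
    intro l _
    by_cases hl0 : lam' l = 0
    · rw [hl0, zero_mul]
    · have hCl : C l := by
        by_contra hc
        exact hl0 (by simp [hlam'def, hc])
      have hmaxl : (j - a l).val ≤ (j - a ls).val :=
        hmax l (Finset.mem_filter.mpr ⟨Finset.mem_univ l, hl0⟩)
      have h3 := predval (j - a l)
      rw [if_neg (hCne l hCl)] at h3
      have hcond : ¬ ((x - a l).val ≤ ((j - a l) - 1).val) := by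
        intro hle
        apply hxval
        rw [h3] at hle
        have heq : x - a ls = (x - a l) + ((j - a ls) - (j - a l)) := by ring
        have h4 := subval (j - a ls) (j - a l)
        rw [if_pos hmaxl] at h4
        have hbound := hvn (j - a ls)
        have hadd : ((x - a l) + ((j - a ls) - (j - a l))).val
            = (x - a l).val + ((j - a ls) - (j - a l)).val :=
          ZMod.val_add_of_lt (by rw [h4]; omega)
        rw [heq, hadd, h4]
        omega
      rw [if_neg hcond, mul_zero]
  have hspan_d : IsSpan d (a ls) j :=
    ⟨hdals_ne, by rw [hdj]; exact neg_ne_zero.mpr one_ne_zero, hsupp⟩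
  have hle := hchar ls d hdcode hdne j hspan_d
  exact absurd hle (not_le.mpr hCls.2)
end

section
/- Let T = T_{(G,H,S)} be a KV-trellis of C with state matrices N_j, j = 0,...,n−1. Then the intersection of the row spaces of all N_j is zero: ⋂_{j=0}^{n−1} im N_j = {0}. -/
open scoped Classical

set_option linter.unusedSectionVars false

section ZHelp
variable {n : ℕ} [NeZero n]

lemma zval_inj {x y : ZMod n} (h : x.val = y.val) : x = y := ZMod.val_injective n h

lemma zsub_val_of_lt {x y : ZMod n} (h : x.val < y.val) : (x - y).val = x.val + n - y.val := by
  have hy : y ≠ 0 := by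
    intro h0; rw [h0, ZMod.val_zero] at h; omega
  have hneg : (-y).val = n - y.val := by rw [ZMod.neg_val]; simp [hy]
  have hlt : x.val + (-y).val < n := by
    have := ZMod.val_lt y
    have hy1 : 1 ≤ y.val := by omega
    omega
  have : (x + -y).val = x.val + (-y).val := ZMod.val_add_of_lt hlt
  rw [sub_eq_add_neg, this, hneg]
  have := ZMod.val_lt y
  omega

lemma zval_add_one {x : ZMod n} (h : x.val + 1 < n) : (x + 1).val = x.val + 1 := by
  have h1 : (1 : ZMod n).val = 1 := by rw [ZMod.val_one_eq_one_mod]; exact Nat.mod_eq_of_lt (by omega)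
  have hlt : x.val + (1 : ZMod n).val < n := by rw [h1]; omega
  rw [ZMod.val_add_of_lt hlt, h1]

lemma zval_add_one_top {x : ZMod n} (h : x.val = n - 1) : x + 1 = 0 := by
  have hx : ((x.val : ℕ) : ZMod n) = x := by simp [ZMod.natCast_val, ZMod.cast_id]
  have hn : 0 < n := Nat.pos_of_ne_zero (NeZero.ne n)
  calc x + 1 = ((x.val : ℕ) : ZMod n) + 1 := by rw [hx]
    _ = (((n - 1) + 1 : ℕ) : ZMod n) := by rw [h]; push_cast; ring
    _ = ((n : ℕ) : ZMod n) := by congr 1; omega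
    _ = 0 := ZMod.natCast_self n

end ZHelp


lemma F1 {n k m : ℕ} [NeZero n] {F : Type*} [Field F]
    (G : Matrix (Fin k) (ZMod n) F) (H : Matrix (Fin m) (ZMod n) F)
    (hGH : G * H.transpose = 0) (a : Fin k → ZMod n)
    (N : ZMod n → Matrix (Fin k) (Fin m) F)
    (hN0 : ∀ l c, N 0 l c =
      ∑ j ∈ Finset.univ.filter (fun j : ZMod n => (a l).val ≤ j.val), G l j * H c j)
    (hNrec : ∀ j : ZMod n, N (j + 1) = N j + Matrix.of (fun l c => G l j * H c j)) :
    ∀ (j : ZMod n) (l : Fin k) (c : Fin m),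
      N j l c = ∑ t ∈ Finset.univ.filter
        (fun t : ZMod n => (t - a l).val < (j - a l).val), G l t * H c t := by
  have hGHsum : ∀ (l : Fin k) (c : Fin m), ∑ t, G l t * H c t = 0 := by
    intro l c
    have h : (G * H.transpose) l c = (0 : Matrix (Fin k) (Fin m) F) l c := by rw [hGH]
    simpa [Matrix.mul_apply, Matrix.transpose_apply] using h
  suffices hnat : ∀ v : ℕ, ∀ (l : Fin k) (c : Fin m),
      N ((v : ℕ) : ZMod n) l c = ∑ t ∈ Finset.univ.filter
        (fun t : ZMod n => (t - a l).val < (((v : ℕ) : ZMod n) - a l).val), G l t * H c t by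
    intro j l c
    have hj : ((j.val : ℕ) : ZMod n) = j := by simp [ZMod.natCast_val, ZMod.cast_id]
    have := hnat j.val l c
    rwa [hj] at this
  intro v
  induction v with
  | zero =>
    intro l c
    push_cast
    by_cases hA : a l = 0
    · have h1 : Finset.univ.filter (fun t : ZMod n => (a l).val ≤ t.val) = Finset.univ := by
        apply Finset.filter_true_of_mem; intro t _; rw [hA, ZMod.val_zero]; omega
      have h2 : Finset.univ.filter
          (fun t : ZMod n => (t - a l).val < ((0 : ZMod n) - a l).val) = ∅ := by
        apply Finset.filter_false_of_mem; intro t _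
        simp [hA]
      rw [hN0, h1, h2, Finset.sum_empty, hGHsum]
    · have hA1 : 1 ≤ (a l).val := by
        rcases Nat.eq_zero_or_pos (a l).val with h|h
        · exact absurd (zval_inj (by rw [h, ZMod.val_zero])) hA
        · omega
      have hval : ((0 : ZMod n) - a l).val = n - (a l).val := by
        rw [zero_sub, ZMod.neg_val, if_neg hA]
      rw [hN0]
      congr 1
      apply Finset.ext; intro t
      simp only [Finset.mem_filter, Finset.mem_univ, true_and, hval]
      constructor
      · intro h
        rw [ZMod.val_sub h]
        have := ZMod.val_lt t
        omega
      · intro h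
        by_contra hlt
        push_neg at hlt
        rw [zsub_val_of_lt hlt] at h
        omega
  | succ v ih =>
    intro l c
    have hcast : (((v + 1 : ℕ)) : ZMod n) = ((v : ℕ) : ZMod n) + 1 := by push_cast; ring
    set j : ZMod n := ((v : ℕ) : ZMod n) with hjdef
    rw [hcast, hNrec j]
    have hrw : (N j + Matrix.of fun l c => G l j * H c j) l c = N j l c + G l j * H c j := rfl
    rw [hrw, ih l c]
    have hv := ZMod.val_lt (j - a l)
    have hn : 0 < n := Nat.pos_of_ne_zero (NeZero.ne n)
    by_cases htop : (j - a l).val = n - 1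
    · have hz : j + 1 - a l = 0 := by
        have : j + 1 - a l = (j - a l) + 1 := by ring
        rw [this, zval_add_one_top htop]
      have h2 : Finset.univ.filter
          (fun t : ZMod n => (t - a l).val < (j + 1 - a l).val) = ∅ := by
        apply Finset.filter_false_of_mem; intro t _
        rw [hz, ZMod.val_zero]; omega
      have h1 : Finset.univ.filter (fun t : ZMod n => (t - a l).val < (j - a l).val)
          = Finset.univ.erase j := by
        apply Finset.ext; intro t
        simp only [Finset.mem_filter, Finset.mem_univ, true_and, Finset.mem_erase, and_true]
        constructor
        · intro h heq; rw [heq, htop] at h; omega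
        · intro h
          have hne : t - a l ≠ j - a l := fun hc => h (sub_left_inj.mp hc)
          have hne' : (t - a l).val ≠ (j - a l).val := fun hc => hne (zval_inj hc)
          have := ZMod.val_lt (t - a l)
          omega
      rw [h1, h2, Finset.sum_empty,
        Finset.sum_erase_add Finset.univ (fun t => G l t * H c t) (Finset.mem_univ j)]
      exact hGHsum l c
    · have hlt : (j - a l).val + 1 < n := by omega
      have hval : (j + 1 - a l).val = (j - a l).val + 1 := by
        have : j + 1 - a l = (j - a l) + 1 := by ring
        rw [this, zval_add_one hlt]
      have h2 : Finset.univ.filter (fun t : ZMod n => (t - a l).val < (j + 1 - a l).val)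
          = insert j (Finset.univ.filter (fun t : ZMod n => (t - a l).val < (j - a l).val)) := by
        apply Finset.ext; intro t
        simp only [Finset.mem_filter, Finset.mem_univ, true_and, Finset.mem_insert, hval]
        constructor
        · intro h
          rcases Nat.lt_succ_iff_lt_or_eq.mp h with h'|h'
          · exact Or.inr h'
          · left
            have : t - a l = j - a l := zval_inj h'
            exact sub_left_inj.mp this
        · rintro (rfl|h)
          · omega
          · omega
      rw [h2, Finset.sum_insert (by simp)]
      ring

lemma AB {n k m : ℕ} [NeZero n] {F : Type*} [Field F]
    (G : Matrix (Fin k) (ZMod n) F) (H : Matrix (Fin m) (ZMod n) F)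
    (hsuppD : ∀ j : ZMod n, ∃ i, H i j ≠ 0)
    (a b : Fin k → ZMod n)
    (hspan : ∀ l, IsSpan (G l) (a l) (b l))
    (ha : Function.Injective a)
    (hchar : ∀ l, ∀ c : ZMod n → F, (∀ i, ∑ j, c j * H i j = 0) → c ≠ 0 →
      ∀ b', IsSpan c (a l) b' → (b l - a l).val ≤ (b' - a l).val)
    (N : ZMod n → Matrix (Fin k) (Fin m) F)
    (hF1 : ∀ (j : ZMod n) (l : Fin k) (c : Fin m),
      N j l c = ∑ t ∈ Finset.univ.filter
        (fun t : ZMod n => (t - a l).val < (j - a l).val), G l t * H c t)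
    (j : ZMod n) (lam : Fin k → F) (e : F)
    (hsupp : ∀ l, lam l ≠ 0 → j ∈ circIoc (a l) (b l))
    (heq : ∀ i, (∑ l, lam l * N j l i) + e * H i j = 0)
    (he : e ≠ 0 → ∀ l, j ≠ b l) :
    lam = 0 ∧ e = 0 := by
  by_cases hlam : lam = 0
  · refine ⟨hlam, ?_⟩
    by_contra he0
    obtain ⟨i, hi⟩ := hsuppD j
    have h := heq i
    rw [hlam] at h
    simp only [Pi.zero_apply, zero_mul, Finset.sum_const_zero, zero_add] at h
    rcases mul_eq_zero.mp h with h'|h'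
    · exact he0 h'
    · exact hi h'
  · exfalso
    set cc : ZMod n → F := fun t =>
      (∑ l, lam l * (if (t - a l).val < (j - a l).val then G l t else 0)) +
      (if t = j then e else 0) with hccdef
    have hact : ∀ l, lam l ≠ 0 →
        1 ≤ (j - a l).val ∧ (j - a l).val ≤ (b l - a l).val := fun l h => hsupp l h
    -- cc is orthogonal to the rows of H
    have Hcc : ∀ i, ∑ t, cc t * H i t = 0 := by
      intro i
      have hrow : ∀ l, ∑ t, (if (t - a l).val < (j - a l).val then G l t else 0) * H i t
          = N j l i := by
        intro l
        calc ∑ t, (if (t - a l).val < (j - a l).val then G l t else 0) * H i t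
            = ∑ t, (if (t - a l).val < (j - a l).val then G l t * H i t else 0) :=
              Finset.sum_congr rfl (fun t _ => by split <;> simp)
          _ = ∑ t ∈ Finset.univ.filter
              (fun t : ZMod n => (t - a l).val < (j - a l).val), G l t * H i t :=
              (Finset.sum_filter _ _).symm
          _ = N j l i := (hF1 j l i).symm
      calc ∑ t, cc t * H i t
          = ∑ t, ((∑ l, lam l * (if (t - a l).val < (j - a l).val then G l t else 0)) * H i t
              + (if t = j then e else 0) * H i t) := by
            apply Finset.sum_congr rfl; intro t _; rw [hccdef, add_mul]
        _ = (∑ t, (∑ l, lam l * (if (t - a l).val < (j - a l).val then G l t else 0)) * H i t)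
              + ∑ t, (if t = j then e else 0) * H i t := Finset.sum_add_distrib
        _ = (∑ l, lam l * N j l i) + e * H i j := by
            congr 1
            · calc ∑ t, (∑ l, lam l * (if (t - a l).val < (j - a l).val then G l t else 0)) * H i t
                  = ∑ t, ∑ l, lam l * (if (t - a l).val < (j - a l).val then G l t else 0) * H i t := by
                    apply Finset.sum_congr rfl; intro t _; rw [Finset.sum_mul]
                _ = ∑ l, ∑ t, lam l * (if (t - a l).val < (j - a l).val then G l t else 0) * H i t :=
                    Finset.sum_comm
                _ = ∑ l, lam l * N j l i := by
                    apply Finset.sum_congr rfl; intro l _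
                    rw [← hrow l, Finset.mul_sum]
                    exact Finset.sum_congr rfl (fun t _ => by rw [mul_assoc])
            · calc ∑ t, (if t = j then e else 0) * H i t
                  = ∑ t, (if t = j then e * H i t else 0) :=
                    Finset.sum_congr rfl (fun t _ => by split <;> simp)
                _ = e * H i j := by rw [Finset.sum_ite_eq' Finset.univ j (fun t => e * H i t)]; simp
        _ = 0 := heq i
    -- pick the row with maximal (j - a l).val among rows with lam l ≠ 0
    have hSne : (Finset.univ.filter (fun l => lam l ≠ 0)).Nonempty := by
      obtain ⟨l, hl⟩ := Function.ne_iff.mp hlam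
      exact ⟨l, Finset.mem_filter.mpr ⟨Finset.mem_univ l, hl⟩⟩
    obtain ⟨lstar, hmem, hmax⟩ := Finset.exists_max_image _ (fun l => (j - a l).val) hSne
    have hls : lam lstar ≠ 0 := (Finset.mem_filter.mp hmem).2
    have hd1 : 1 ≤ (j - a lstar).val := (hact lstar hls).1
    have key1 : ∀ l, lam l ≠ 0 → l ≠ lstar → (j - a l).val < (j - a lstar).val := by
      intro l hl hne
      have hle := hmax l (Finset.mem_filter.mpr ⟨Finset.mem_univ l, hl⟩)
      rcases lt_or_eq_of_le hle with h|h
      · exact h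
      · exact absurd (ha (sub_right_inj.mp (zval_inj h))) hne
    have hjnea : a lstar ≠ j := by
      intro hh
      rw [hh, sub_self, ZMod.val_zero] at hd1; omega
    -- value of cc at a lstar
    have hccstar : cc (a lstar) = lam lstar * G lstar (a lstar) := by
      rw [hccdef]
      simp only []
      rw [if_neg hjnea]
      rw [add_zero]
      have hsum : (∑ l, lam l * (if (a lstar - a l).val < (j - a l).val then G l (a lstar) else 0))
          = lam lstar * (if (a lstar - a lstar).val < (j - a lstar).val then G lstar (a lstar) else 0) := by
        apply Finset.sum_eq_single lstar
        · intro l _ hne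
          by_cases hl : lam l = 0
          · rw [hl, zero_mul]
          · rw [if_neg, mul_zero]
            intro hcon
            have hdl := key1 l hl hne
            have hrel : a lstar - a l = (j - a l) - (j - a lstar) := by ring
            rw [hrel, zsub_val_of_lt hdl] at hcon
            have := ZMod.val_lt (j - a lstar)
            omega
        · intro hcon; exact absurd (Finset.mem_univ lstar) hcon
      rw [hsum, if_pos (by rw [sub_self, ZMod.val_zero]; omega)]
    have hccstar_ne : cc (a lstar) ≠ 0 := by
      rw [hccstar]
      exact mul_ne_zero hls (hspan lstar).1
    -- support bound for cc
    have hbound : ∀ t, cc t ≠ 0 → (t = j ∨ (t - a lstar).val + 1 ≤ (j - a lstar).val) := by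
      intro t ht
      by_contra hcon
      push_neg at hcon
      obtain ⟨htj, hgt⟩ := hcon
      apply ht
      rw [hccdef]
      simp only []
      rw [if_neg htj, add_zero]
      apply Finset.sum_eq_zero
      intro l _
      by_cases hl : lam l = 0
      · rw [hl, zero_mul]
      · rw [if_neg, mul_zero]
        intro hcond
        have hdle : (j - a l).val ≤ (j - a lstar).val :=
          hmax l (Finset.mem_filter.mpr ⟨Finset.mem_univ l, hl⟩)
        have hrel : t - a lstar = (t - a l) + (a l - a lstar) := by ring
        have hrel2 : a l - a lstar = (j - a lstar) - (j - a l) := by ring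
        have hv2 : (a l - a lstar).val = (j - a lstar).val - (j - a l).val := by
          rw [hrel2, ZMod.val_sub hdle]
        have hsum : (t - a l).val + (a l - a lstar).val < n := by
          have := ZMod.val_lt (j - a lstar)
          omega
        have hval : (t - a lstar).val = (t - a l).val + (a l - a lstar).val := by
          rw [hrel, ZMod.val_add_of_lt hsum]
        omega
    -- maximal support element of cc
    have hscne : (Finset.univ.filter (fun t => cc t ≠ 0)).Nonempty :=
      ⟨a lstar, Finset.mem_filter.mpr ⟨Finset.mem_univ _, hccstar_ne⟩⟩
    obtain ⟨b', hb'mem, hb'max⟩ :=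
      Finset.exists_max_image _ (fun t => (t - a lstar).val) hscne
    have hccb' : cc b' ≠ 0 := (Finset.mem_filter.mp hb'mem).2
    have hspan' : IsSpan cc (a lstar) b' := by
      refine ⟨hccstar_ne, hccb', ?_⟩
      intro t ht
      exact hb'max t (Finset.mem_filter.mpr ⟨Finset.mem_univ t, ht⟩)
    have hcne : cc ≠ 0 := by
      intro hcon
      exact hccstar_ne (by rw [hcon]; rfl)
    have hchar' := hchar lstar cc Hcc hcne b' hspan'
    rcases hbound b' hccb' with hbj | hlt
    · -- b' = j, so e ≠ 0 and j = b lstar, contradiction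
      have hccj : cc j = e := by
        have hre : cc j = (∑ l, lam l * (if (j - a l).val < (j - a l).val then G l j else 0))
            + (if j = j then e else 0) := rfl
        rw [hre, if_pos rfl]
        have hz : (∑ l, lam l * (if (j - a l).val < (j - a l).val then G l j else 0)) = 0 := by
          apply Finset.sum_eq_zero
          intro l _
          rw [if_neg (lt_irrefl _), mul_zero]
        rw [hz, zero_add]
      have hene : e ≠ 0 := by
        rw [hbj] at hccb'
        rw [hccj] at hccb'
        exact hccb'
      have hjb : j = b lstar := by
        have h1 : (b' - a lstar).val = (j - a lstar).val := by rw [hbj]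
        have h2 : (j - a lstar).val ≤ (b lstar - a lstar).val := (hact lstar hls).2
        have h3 : (b lstar - a lstar).val = (j - a lstar).val := by omega
        have := zval_inj h3
        exact (sub_left_inj.mp this).symm
      exact (he hene lstar) hjb
    · have h2 : (j - a lstar).val ≤ (b lstar - a lstar).val := (hact lstar hls).2
      omega

/-- For a KV-trellis `T_{(G,H,S)}` of `C = ker Hᵀ` with BCJR state matrices `N_j`,
the intersection of the row spaces of all the `N_j` is zero. -/
theorem stmt10 (F : Type*) [Field F] (n k m : ℕ) [NeZero n]
    (G : Matrix (Fin k) (ZMod n) F) (H : Matrix (Fin m) (ZMod n) F)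
    (hGH : G * H.transpose = 0) (hG : G.rank = k) (hH : H.rank = m)
    (hsuppD : ∀ j : ZMod n, ∃ i, H i j ≠ 0)
    (a b : Fin k → ZMod n)
    (hspan : ∀ l, IsSpan (G l) (a l) (b l))
    (ha : Function.Injective a) (hb : Function.Injective b)
    (hchar : ∀ l, ∀ c : ZMod n → F, (∀ i, ∑ j, c j * H i j = 0) → c ≠ 0 →
      ∀ b', IsSpan c (a l) b' → (b l - a l).val ≤ (b' - a l).val)
    (N : ZMod n → Matrix (Fin k) (Fin m) F)
    (hN0 : ∀ l c, N 0 l c =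
      ∑ j ∈ Finset.univ.filter (fun j : ZMod n => (a l).val ≤ j.val), G l j * H c j)
    (hNrec : ∀ j : ZMod n, N (j + 1) = N j + Matrix.of (fun l c => G l j * H c j)) :
    (⨅ j : ZMod n, Submodule.span F (Set.range (N j))) = ⊥ := by
  have hn : 0 < n := Nat.pos_of_ne_zero (NeZero.ne n)
  have hF1 := F1 G H hGH a N hN0 hNrec
  have hGHsum : ∀ (l : Fin k) (c : Fin m), ∑ t, G l t * H c t = 0 := by
    intro l c
    have h : (G * H.transpose) l c = (0 : Matrix (Fin k) (Fin m) F) l c := by rw [hGH]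
    simpa [Matrix.mul_apply, Matrix.transpose_apply] using h
  -- rows vanish outside the span
  have rowzero : ∀ (j : ZMod n) (l : Fin k), j ∉ circIoc (a l) (b l) → ∀ i, N j l i = 0 := by
    intro j l hj i
    have hj' : (j - a l).val = 0 ∨ (b l - a l).val < (j - a l).val := by
      by_contra hcon
      push_neg at hcon
      exact hj ⟨by omega, hcon.2⟩
    rw [hF1 j l i]
    rcases hj' with h0 | hgt
    · rw [Finset.filter_false_of_mem, Finset.sum_empty]
      intro t _; rw [h0]; omega
    · rw [Finset.sum_subset (Finset.subset_univ _)]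
      · exact hGHsum l i
      · intro t _ htf
        simp only [Finset.mem_filter, Finset.mem_univ, true_and, not_lt] at htf
        have hG0 : G l t = 0 := by
          by_contra hGne
          have := (hspan l).2.2 t hGne
          have : (t - a l).val ≤ (b l - a l).val := this
          omega
        rw [hG0, zero_mul]
  -- a l ≠ b l, hence (b l - a l).val ≥ 1
  have hanb : ∀ l, 1 ≤ (b l - a l).val := by
    intro l
    rcases Nat.eq_zero_or_pos (b l - a l).val with h0 | h; swap
    · omega
    exfalso
    have hab : a l = b l := by
      have : b l - a l = 0 := zval_inj (by rw [h0, ZMod.val_zero])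
      have := sub_eq_zero.mp this
      exact this.symm
    obtain ⟨i, hi⟩ := hsuppD (a l)
    have hsum := hGHsum l i
    have hsingle : ∑ t, G l t * H i t = G l (a l) * H i (a l) := by
      apply Finset.sum_eq_single (a l)
      · intro t _ htne
        have hG0 : G l t = 0 := by
          by_contra hGne
          have hmem := (hspan l).2.2 t hGne
          have hle : (t - a l).val ≤ (b l - a l).val := hmem
          rw [h0] at hle
          have : t - a l = 0 := zval_inj (by rw [ZMod.val_zero]; omega)
          exact htne (sub_eq_zero.mp this)
        rw [hG0, zero_mul]
      · intro hcon; exact absurd (Finset.mem_univ _) hcon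
    rw [hsingle] at hsum
    rcases mul_eq_zero.mp hsum with h'|h'
    · exact (hspan l).1 h'
    · exact hi h'
  have hbact : ∀ l, b l ∈ circIoc (a l) (b l) := fun l => ⟨hanb l, le_refl _⟩
  have hbout : ∀ l, b l + 1 ∉ circIoc (a l) (b l) := by
    intro l hmem
    obtain ⟨h1, h2⟩ := hmem
    have hval := ZMod.val_lt (b l - a l)
    have hrel : b l + 1 - a l = (b l - a l) + 1 := by ring
    by_cases htop : (b l - a l).val = n - 1
    · have : b l + 1 - a l = 0 := by rw [hrel]; exact zval_add_one_top htop
      rw [this, ZMod.val_zero] at h1; omega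
    · have : (b l + 1 - a l).val = (b l - a l).val + 1 := by
        rw [hrel]; exact zval_add_one (by omega)
      omega
  -- step from j to j+1 within a span
  have hIocStep : ∀ (l : Fin k) (j : ZMod n), j ∈ circIoc (a l) (b l) → j ≠ b l →
      j + 1 ∈ circIoc (a l) (b l) ∧ (j + 1 - a l).val = (j - a l).val + 1 := by
    intro l j hmem hne
    obtain ⟨h1, h2⟩ := hmem
    have hlt : (j - a l).val < (b l - a l).val := by
      rcases lt_or_eq_of_le h2 with h|h
      · exact h
      · exact absurd (sub_left_inj.mp (zval_inj h)) hne
    have hval := ZMod.val_lt (b l - a l)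
    have hrel : j + 1 - a l = (j - a l) + 1 := by ring
    have hv : (j + 1 - a l).val = (j - a l).val + 1 := by
      rw [hrel]; exact zval_add_one (by omega)
    exact ⟨⟨by omega, by omega⟩, hv⟩
  rw [eq_bot_iff]
  intro w hw
  have hw' : ∀ j : ZMod n, w ∈ Submodule.span F (Set.range (N j)) :=
    fun j => (Submodule.mem_iInf _).mp hw j
  -- choose coefficient vectors supported on active rows
  have hchoice : ∀ j : ZMod n, ∃ lamj : Fin k → F,
      (∀ l, lamj l ≠ 0 → j ∈ circIoc (a l) (b l)) ∧
      ∀ i, (∑ l, lamj l * N j l i) = w i := by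
    intro j
    obtain ⟨c, hc⟩ := (Submodule.mem_span_range_iff_exists_fun F).mp (hw' j)
    refine ⟨fun l => if j ∈ circIoc (a l) (b l) then c l else 0, ?_, ?_⟩
    · intro l hl
      by_contra hmem
      apply hl
      show (if j ∈ circIoc (a l) (b l) then c l else 0) = 0
      rw [if_neg hmem]
    · intro i
      have happ : (∑ l, c l • N j l) i = w i := by rw [hc]
      rw [Finset.sum_apply] at happ
      rw [← happ]
      apply Finset.sum_congr rfl
      intro l _
      show (if j ∈ circIoc (a l) (b l) then c l else 0) * N j l i = (c l • N j l) i
      by_cases hmem : j ∈ circIoc (a l) (b l)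
      · rw [if_pos hmem]; simp [Pi.smul_apply, smul_eq_mul]
      · rw [if_neg hmem, zero_mul, Pi.smul_apply, smul_eq_mul, rowzero j l hmem i, mul_zero]
  choose lam hlamsupp hlamsum using hchoice
  -- the transition analysis
  have hstep : ∀ j : ZMod n,
      (∀ l, j ∈ circIoc (a l) (b l) → j ≠ b l → lam (j+1) l = lam j l) ∧
      ((∀ l, j ≠ b l) → (∑ l, lam (j+1) l * G l j) = 0) ∧
      (∀ l₀, j = b l₀ → (∑ l, lam (j+1) l * G l j) + lam j l₀ * G l₀ j = 0) := by
    intro j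
    set cj : F := ∑ l, lam (j+1) l * G l j with hcjdef
    set dl : Fin k → F := fun l =>
      if j ∈ circIoc (a l) (b l) then lam (j+1) l - lam j l else 0 with hdldef
    have hdlsupp : ∀ l, dl l ≠ 0 → j ∈ circIoc (a l) (b l) := by
      intro l hl
      by_contra hmem
      apply hl
      show (if j ∈ circIoc (a l) (b l) then lam (j+1) l - lam j l else 0) = 0
      rw [if_neg hmem]
    have hEq : ∀ i, (∑ l, dl l * N j l i) + cj * H i j = 0 := by
      intro i
      have h1 : ∀ l, N (j+1) l i = N j l i + G l j * H i j := by
        intro l; rw [hNrec j]; rfl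
      have h2 : (∑ l, lam (j+1) l * N j l i) + cj * H i j = w i := by
        rw [← hlamsum (j+1) i]
        calc (∑ l, lam (j+1) l * N j l i) + cj * H i j
            = (∑ l, lam (j+1) l * N j l i) + (∑ l, lam (j+1) l * G l j) * H i j := by
              rw [hcjdef]
          _ = (∑ l, lam (j+1) l * N j l i) + ∑ l, lam (j+1) l * G l j * H i j := by
              rw [Finset.sum_mul]
          _ = ∑ l, (lam (j+1) l * N j l i + lam (j+1) l * G l j * H i j) :=
              Finset.sum_add_distrib.symm
          _ = ∑ l, lam (j+1) l * N (j+1) l i := by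
              apply Finset.sum_congr rfl; intro l _; rw [h1 l, mul_add, mul_assoc]
      have h3 : ∑ l, lam j l * N j l i = w i := hlamsum j i
      have h4 : ∑ l, dl l * N j l i = ∑ l, (lam (j+1) l - lam j l) * N j l i := by
        apply Finset.sum_congr rfl; intro l _
        show (if j ∈ circIoc (a l) (b l) then lam (j+1) l - lam j l else 0) * N j l i = _
        by_cases hmem : j ∈ circIoc (a l) (b l)
        · rw [if_pos hmem]
        · rw [if_neg hmem, rowzero j l hmem i, mul_zero, mul_zero]
      have h5 : ∑ l, (lam (j+1) l - lam j l) * N j l i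
          = (∑ l, lam (j+1) l * N j l i) - ∑ l, lam j l * N j l i := by
        rw [← Finset.sum_sub_distrib]
        apply Finset.sum_congr rfl; intro l _; rw [sub_mul]
      rw [h4, h5]
      linear_combination h2 - h3
    by_cases hjb : ∀ l, j ≠ b l
    · obtain ⟨hdl0, hcj0⟩ := AB G H hsuppD a b hspan ha hchar N hF1 j dl cj hdlsupp hEq
        (fun _ => hjb)
      refine ⟨?_, fun _ => hcj0, ?_⟩
      · intro l hmem hne
        have h6 : dl l = 0 := congrFun hdl0 l
        have h7 : dl l = lam (j+1) l - lam j l := by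
          show (if j ∈ circIoc (a l) (b l) then lam (j+1) l - lam j l else 0) = _
          rw [if_pos hmem]
        rw [h7] at h6
        exact sub_eq_zero.mp h6
      · intro l₀ h0; exact absurd h0 (hjb l₀)
    · push_neg at hjb
      obtain ⟨l₀, hl₀⟩ := hjb
      have hg : G l₀ j ≠ 0 := by rw [hl₀]; exact (hspan l₀).2.1
      have hjact : j ∈ circIoc (a l₀) (b l₀) := by rw [hl₀]; exact hbact l₀
      have hH3 : ∀ i, H i j = -((G l₀ j)⁻¹ * N j l₀ i) := by
        intro i
        have hz : N (j+1) l₀ i = 0 := by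
          apply rowzero
          rw [hl₀]
          exact hbout l₀
        have hr : N (j+1) l₀ i = N j l₀ i + G l₀ j * H i j := by rw [hNrec j]; rfl
        rw [hr] at hz
        have h7 : G l₀ j * H i j = - N j l₀ i := by linear_combination hz
        calc H i j = (G l₀ j)⁻¹ * (G l₀ j * H i j) := by
              rw [← mul_assoc, inv_mul_cancel₀ hg, one_mul]
          _ = -((G l₀ j)⁻¹ * N j l₀ i) := by rw [h7]; ring
      set dl' : Fin k → F := fun l => dl l + (if l = l₀ then -(cj * (G l₀ j)⁻¹) else 0)
        with hdl'def
      have hdl'supp : ∀ l, dl' l ≠ 0 → j ∈ circIoc (a l) (b l) := by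
        intro l hl
        by_cases hll : l = l₀
        · rw [hll]; exact hjact
        · apply hdlsupp l
          intro h0
          apply hl
          show dl l + (if l = l₀ then -(cj * (G l₀ j)⁻¹) else 0) = 0
          rw [h0, if_neg hll, add_zero]
      have hEq' : ∀ i, (∑ l, dl' l * N j l i) + (0:F) * H i j = 0 := by
        intro i
        rw [zero_mul, add_zero]
        have e1 : ∑ l, dl' l * N j l i
            = (∑ l, dl l * N j l i)
              + ∑ l, (if l = l₀ then -(cj * (G l₀ j)⁻¹) else 0) * N j l i := by
          rw [← Finset.sum_add_distrib]
          apply Finset.sum_congr rfl; intro l _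
          show (dl l + (if l = l₀ then -(cj * (G l₀ j)⁻¹) else 0)) * N j l i = _
          rw [add_mul]
        have e2 : ∑ l, (if l = l₀ then -(cj * (G l₀ j)⁻¹) else 0) * N j l i
            = -(cj * (G l₀ j)⁻¹) * N j l₀ i := by
          calc ∑ l, (if l = l₀ then -(cj * (G l₀ j)⁻¹) else 0) * N j l i
              = (if l₀ = l₀ then -(cj * (G l₀ j)⁻¹) else 0) * N j l₀ i :=
                Finset.sum_eq_single l₀ (fun l _ hne => by rw [if_neg hne, zero_mul])
                  (fun hcon => absurd (Finset.mem_univ _) hcon)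
            _ = -(cj * (G l₀ j)⁻¹) * N j l₀ i := by rw [if_pos rfl]
        have e3 : cj * H i j = -(cj * (G l₀ j)⁻¹) * N j l₀ i := by rw [hH3 i]; ring
        rw [e1, e2, ← e3]
        exact hEq i
      obtain ⟨hdl'0, -⟩ := AB G H hsuppD a b hspan ha hchar N hF1 j dl' 0 hdl'supp hEq'
        (fun h0 => absurd rfl h0)
      have hlamnext : lam (j+1) l₀ = 0 := by
        by_contra hne
        have hmem := hlamsupp (j+1) l₀ hne
        rw [hl₀] at hmem
        exact hbout l₀ hmem
      refine ⟨?_, ?_, ?_⟩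
      · intro l hmem hne
        have hll : l ≠ l₀ := by
          intro h
          apply hne
          rw [h, ← hl₀]
        have h8 : dl' l = 0 := congrFun hdl'0 l
        have h9 : dl' l = lam (j+1) l - lam j l := by
          show dl l + (if l = l₀ then -(cj * (G l₀ j)⁻¹) else 0) = _
          rw [if_neg hll, add_zero]
          show (if j ∈ circIoc (a l) (b l) then lam (j+1) l - lam j l else 0) = _
          rw [if_pos hmem]
        rw [h9] at h8
        exact sub_eq_zero.mp h8
      · intro hc; exact absurd hl₀ (hc l₀)
      · intro l₀' h0'
        obtain rfl : l₀' = l₀ := hb (by rw [← h0', ← hl₀])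
        have h8 : dl' l₀' = 0 := congrFun hdl'0 l₀'
        have h9 : dl' l₀' = (lam (j+1) l₀' - lam j l₀') + -(cj * (G l₀' j)⁻¹) := by
          show dl l₀' + (if l₀' = l₀' then -(cj * (G l₀' j)⁻¹) else 0) = _
          rw [if_pos rfl]
          congr 1
          show (if j ∈ circIoc (a l₀') (b l₀') then lam (j+1) l₀' - lam j l₀' else 0) = _
          rw [if_pos hjact]
        rw [h9, hlamnext] at h8
        have h10 : lam j l₀' = -(cj * (G l₀' j)⁻¹) := by linear_combination -h8
        rw [h10]
        field_simp
        ring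
  -- constancy of coefficients along spans
  have h1v : ∀ j : ZMod n, 1 < n → (1 : ZMod n).val = 1 :=
    fun _ h => by rw [ZMod.val_one_eq_one_mod]; exact Nat.mod_eq_of_lt h
  have hconst : ∀ (l : Fin k) (j : ZMod n), j ∈ circIoc (a l) (b l) →
      lam j l = lam (a l + 1) l := by
    have haux : ∀ d : ℕ, ∀ (l : Fin k) (j : ZMod n), j ∈ circIoc (a l) (b l) →
        (j - a l).val = d + 1 → lam j l = lam (a l + 1) l := by
      intro d
      induction d with
      | zero =>
        intro l j _ h1
        have hvlt := ZMod.val_lt (j - a l)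
        have h1' : (1 : ZMod n).val = 1 := h1v 0 (by omega)
        have he1 : j - a l = 1 := zval_inj (by rw [h1, h1'])
        have he2 : j = a l + 1 := by rw [← he1]; ring
        rw [he2]
      | succ d ih =>
        intro l j hmem h1
        obtain ⟨hm1, hm2⟩ := hmem
        have hvlt := ZMod.val_lt (j - a l)
        have h1' : (1 : ZMod n).val = 1 := h1v 0 (by omega)
        have hsub : (j - 1 - a l) = (j - a l) - 1 := by ring
        have hv : (j - 1 - a l).val = d + 1 := by
          rw [hsub, ZMod.val_sub (by rw [h1']; omega), h1', h1]
          omega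
        have hmem' : j - 1 ∈ circIoc (a l) (b l) := ⟨by omega, by omega⟩
        have hne : j - 1 ≠ b l := by
          intro hcon
          have hcv : (j - 1 - a l).val = (b l - a l).val := by rw [hcon]
          rw [hv] at hcv
          omega
        have hstep1 := (hstep (j - 1)).1 l hmem' hne
        rw [sub_add_cancel] at hstep1
        rw [hstep1]
        exact ih l (j - 1) hmem' hv
    intro l j hmem
    obtain ⟨h1, h2⟩ := hmem
    exact haux ((j - a l).val - 1) l j ⟨h1, h2⟩ (by omega)
  -- the global linear relation among the rows of G
  have hV : ∀ t : ZMod n, ∑ l, lam (a l + 1) l * G l t = 0 := by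
    intro t
    have hgen : ∀ l, t ≠ b l → lam (a l + 1) l * G l t = lam (t+1) l * G l t := by
      intro l htne
      by_cases hG0 : G l t = 0
      · rw [hG0, mul_zero, mul_zero]
      · have hmem : (t - a l).val ≤ (b l - a l).val := (hspan l).2.2 t hG0
        have hlt : (t - a l).val < (b l - a l).val := by
          rcases lt_or_eq_of_le hmem with h|h
          · exact h
          · exact absurd (sub_left_inj.mp (zval_inj h)) htne
        have hvlt := ZMod.val_lt (b l - a l)
        have hrel : t + 1 - a l = (t - a l) + 1 := by ring
        have hv : (t + 1 - a l).val = (t - a l).val + 1 := by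
          rw [hrel]; exact zval_add_one (by omega)
        have hmem' : t + 1 ∈ circIoc (a l) (b l) := ⟨by omega, by omega⟩
        rw [hconst l (t+1) hmem']
    by_cases hbt : ∀ l, t ≠ b l
    · have hc := (hstep t).2.1 hbt
      rw [← hc]
      exact Finset.sum_congr rfl (fun l _ => hgen l (hbt l))
    · push_neg at hbt
      obtain ⟨l₀, hl₀⟩ := hbt
      have hc := (hstep t).2.2 l₀ hl₀
      have hterm : ∀ l, lam (a l + 1) l * G l t
          = lam (t+1) l * G l t + (if l = l₀ then lam t l₀ * G l₀ t else 0) := by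
        intro l
        by_cases hll : l = l₀
        · subst hll
          rw [if_pos rfl]
          have hmem : t ∈ circIoc (a l) (b l) := by rw [hl₀]; exact hbact l
          have hlamnext : lam (t+1) l = 0 := by
            by_contra hne
            have hmm := hlamsupp (t+1) l hne
            rw [hl₀] at hmm
            exact hbout l hmm
          rw [hlamnext, zero_mul, zero_add, hconst l t hmem]
        · rw [if_neg hll, add_zero]
          apply hgen l
          intro hcon
          exact hll (hb (by rw [← hcon, ← hl₀]))
      calc ∑ l, lam (a l + 1) l * G l t
          = ∑ l, (lam (t+1) l * G l t + (if l = l₀ then lam t l₀ * G l₀ t else 0)) :=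
            Finset.sum_congr rfl (fun l _ => hterm l)
        _ = (∑ l, lam (t+1) l * G l t) + ∑ l, (if l = l₀ then lam t l₀ * G l₀ t else 0) :=
            Finset.sum_add_distrib
        _ = (∑ l, lam (t+1) l * G l t) + lam t l₀ * G l₀ t := by
            rw [Finset.sum_ite_eq' Finset.univ l₀ (fun _ => lam t l₀ * G l₀ t)]
            simp
        _ = 0 := hc
  -- rows of G are linearly independent, so all the coefficients vanish
  have hmu : ∀ l, lam (a l + 1) l = 0 := by
    set mu : Fin k → F := fun l => lam (a l + 1) l with hmudef
    have hker : mu ∈ LinearMap.ker (Matrix.mulVecLin G.transpose) := by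
      rw [LinearMap.mem_ker]
      funext t
      show Matrix.mulVec G.transpose mu t = 0
      rw [Matrix.mulVec, dotProduct]
      rw [← hV t]
      exact Finset.sum_congr rfl (fun l _ => by
        show G.transpose t l * mu l = _
        rw [Matrix.transpose_apply, mul_comm])
    have hrankT : Module.finrank F (LinearMap.range (Matrix.mulVecLin G.transpose)) = k := by
      have := Matrix.rank_transpose G
      rw [hG] at this
      exact this
    have hrn := LinearMap.finrank_range_add_finrank_ker (Matrix.mulVecLin G.transpose)
    rw [hrankT] at hrn
    have hfr : Module.finrank F (Fin k → F) = k := by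
      rw [Module.finrank_pi]
      simp
    rw [hfr] at hrn
    have hker0 : LinearMap.ker (Matrix.mulVecLin G.transpose) = ⊥ :=
      Submodule.finrank_eq_zero.mp (by omega)
    rw [hker0, Submodule.mem_bot] at hker
    intro l
    exact congrFun hker l
  -- conclude w = 0
  rw [Submodule.mem_bot]
  funext i
  rw [← hlamsum 0 i]
  apply Finset.sum_eq_zero
  intro l _
  by_cases h0 : lam 0 l = 0
  · rw [h0, zero_mul]
  · have hmem := hlamsupp 0 l h0
    rw [hconst l 0 hmem, hmu l, zero_mul]
end

section
/- (The probing vector v exists and is unique.) In the setting of the dualization procedure: let Q_j be the BCJR state matrices of the trellis built from all characteristic generators except the one with span (a_0, 0]. Then rk Q_j = n−k if j ∈ (0,a_0] and rk Q_j = n−k−1 otherwise, and there exists a unique v ∈ F^{n−k} with G_0^T = Q_1 vᵀ, where G_0^T is the 0-th column of the matrix of remaining generators. -/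
open scoped Classical

namespace Stmt14Aux

variable {n : ℕ} [NeZero n]

lemma castv (u : ZMod n) : ((u.val : ℕ) : ZMod n) = u := ZMod.natCast_rightInverse u

lemma zsub_val (a b : ZMod n) :
    (a - b).val = if b.val ≤ a.val then a.val - b.val else a.val + n - b.val := by
  have hb := ZMod.val_lt b
  have ha := ZMod.val_lt a
  split_ifs with h
  · have : a - b = ((a.val - b.val : ℕ) : ZMod n) := by
      rw [Nat.cast_sub h, castv, castv]
    rw [this, ZMod.val_cast_of_lt (by omega)]
  · have : a - b = ((a.val + n - b.val : ℕ) : ZMod n) := by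
      rw [Nat.cast_sub (by omega), Nat.cast_add, ZMod.natCast_self, castv, castv]
      ring
    rw [this, ZMod.val_cast_of_lt (by omega)]

lemma val_sub_one {u : ZMod n} (hu : u ≠ 0) : (u - 1).val = u.val - 1 := by
  have h1 : 1 ≤ u.val := by
    rcases Nat.eq_zero_or_pos u.val with h | h
    · exact absurd (ZMod.val_eq_zero u |>.mp h) hu
    · omega
  have : u - 1 = ((u.val - 1 : ℕ) : ZMod n) := by
    rw [Nat.cast_sub h1, castv, Nat.cast_one]
  rw [this, ZMod.val_cast_of_lt (by have := ZMod.val_lt u; omega)]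

lemma sub_val_eq_iff {a b c : ZMod n} : (a - c).val = (b - c).val ↔ a = b := by
  constructor
  · intro h
    have h2 : a - c = b - c := ZMod.val_injective n h
    exact by linear_combination (norm := abel) h2
  · rintro rfl; rfl

/-- triangle decomposition -/
lemma tri {a b xx : ZMod n} (h : (xx - a).val ≤ (b - a).val) :
    (b - a).val = (xx - a).val + (b - xx).val := by
  have ha := ZMod.val_lt a
  have hb := ZMod.val_lt b
  have hx := ZMod.val_lt xx
  simp only [zsub_val] at h ⊢
  split_ifs at h ⊢ <;> omega

lemma flip_iff {a b xx : ZMod n} : (xx - a).val ≤ (b - a).val ↔ (b - xx).val ≤ (b - a).val := by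
  have ha := ZMod.val_lt a
  have hb := ZMod.val_lt b
  have hx := ZMod.val_lt xx
  simp only [zsub_val]
  split_ifs <;> omega

lemma val_pos_iff {u : ZMod n} : 1 ≤ u.val ↔ u ≠ 0 := by
  rw [Ne, ← ZMod.val_eq_zero]
  omega

lemma mem_circIoc {a b xx : ZMod n} :
    xx ∈ circIoc a b ↔ 1 ≤ (xx - a).val ∧ (xx - a).val ≤ (b - a).val := Iff.rfl

lemma mem_circIcc {a b xx : ZMod n} :
    xx ∈ circIcc a b ↔ (xx - a).val ≤ (b - a).val := Iff.rfl

lemma card_band (a : ZMod n) (d : ℕ) (hd : d < n) :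
    (Finset.univ.filter fun j : ZMod n => 1 ≤ (j - a).val ∧ (j - a).val ≤ d).card = d := by
  have h2 : (Finset.univ.filter fun j : ZMod n =>
      1 ≤ (j - a).val ∧ (j - a).val ≤ d).card = (Finset.Icc 1 d).card := by
    apply Finset.card_bij (fun j _ => (j - a).val)
    · intro j hj
      simp only [Finset.mem_filter] at hj
      simp only [Finset.mem_Icc]
      exact hj.2
    · intro j hj j' hj' h
      exact sub_val_eq_iff.mp h
    · intro t ht
      simp only [Finset.mem_Icc] at ht
      refine ⟨a + (t : ZMod n), ?_, ?_⟩
      · simp only [Finset.mem_filter, Finset.mem_univ, true_and]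
        have : a + (t : ZMod n) - a = (t : ZMod n) := by ring
        rw [this, ZMod.val_cast_of_lt (by omega)]
        omega
      · have : a + (t : ZMod n) - a = (t : ZMod n) := by ring
        rw [this, ZMod.val_cast_of_lt (by omega)]
  rw [h2, Nat.card_Icc]
  omega


section Main

variable {F : Type*} [Field F] {m : ℕ}
  (H : Matrix (Fin m) (ZMod n) F) (x : ZMod n → ZMod n → F) (aa : ZMod n → ZMod n)

/-- circular interval `[a, j)` as a finset -/
noncomputable def pastF (j a : ZMod n) : Finset (ZMod n) :=
  Finset.univ.filter (fun j' => (j' - a).val < (j - a).val)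

/-- the BCJR state of generator `l` at time `j` -/
noncomputable def st (j l : ZMod n) : Fin m → F :=
  fun c => ∑ j' ∈ pastF j (aa l), x l j' * H c j'

lemma memC (hxC : ∀ l i, ∑ j, x l j * H i j = 0) (l : ZMod n) :
    x l ∈ LinearMap.ker H.transpose.vecMulLinear := by
  rw [LinearMap.mem_ker]
  funext c
  simpa [Matrix.vecMul, Matrix.mulVec, dotProduct, mul_comm] using hxC l c

lemma ker_eq : LinearMap.ker H.transpose.vecMulLinear = LinearMap.ker H.mulVecLin := by
  have : H.transpose.vecMulLinear = H.mulVecLin := by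
    apply LinearMap.ext
    intro v
    funext c
    simp [Matrix.vecMul, Matrix.mulVec, dotProduct, mul_comm]
  rw [this]

lemma val_add_one {u : ZMod n} (h : u + 1 ≠ 0) : (u + 1).val = u.val + 1 := by
  have h1 := val_sub_one h
  have h2 : u + 1 - 1 = u := by ring
  rw [h2] at h1
  have h3 : 1 ≤ (u + 1).val := val_pos_iff.mpr h
  omega

lemma val_eq_last {u : ZMod n} (h : u + 1 = 0) : u.val = n - 1 := by
  have h1 : ((u.val + 1 : ℕ) : ZMod n) = 0 := by
    push_cast [castv]
    linear_combination h
  have h2 : n ∣ u.val + 1 := (ZMod.natCast_eq_zero_iff _ n).mp h1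
  have h3 := ZMod.val_lt u
  have h4 := Nat.le_of_dvd (by omega) h2
  omega

lemma rowFormula (hxC : ∀ l i, ∑ j, x l j * H i j = 0)
    (Q : ZMod n → Matrix {l : ZMod n // l ≠ 0} (Fin m) F)
    (hQ0 : ∀ l c, Q 0 l c =
      ∑ j ∈ Finset.univ.filter (fun j : ZMod n => (aa l.1).val ≤ j.val), x l.1 j * H c j)
    (hQrec : ∀ j : ZMod n, Q (j + 1) = Q j + Matrix.of (fun l c => x l.1 j * H c j)) :
    ∀ (j : ZMod n) (l : {l : ZMod n // l ≠ 0}) (c : Fin m),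
      Q j l c = st H x aa j l.1 c := by
  have key : ∀ t : ℕ, ∀ l c, Q (t : ZMod n) l c = st H x aa (t : ZMod n) l.1 c := by
    intro t
    induction t with
    | zero =>
      intro l c
      rcases eq_or_ne (aa l.1) 0 with h0 | h0
      · have h1 : st H x aa (0:ZMod n) l.1 c = 0 := by
          unfold st pastF
          rw [h0]
          simp
        have h2 : Q 0 l c = 0 := by
          rw [hQ0, h0]
          simpa using hxC l.1 c
        rw [Nat.cast_zero, h1, h2]
      · rw [Nat.cast_zero, hQ0]
        unfold st pastF
        apply Finset.sum_congr
        · apply Finset.filter_congr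
          intro j' _
          have hav : 1 ≤ (aa l.1).val := val_pos_iff.mpr h0
          have h2 := ZMod.val_lt (aa l.1)
          have h3 := ZMod.val_lt j'
          rw [zsub_val, zsub_val]
          simp only [ZMod.val_zero]
          split_ifs <;> omega
        · intros; rfl
    | succ t ih =>
      intro l c
      have hc : ((t+1 : ℕ) : ZMod n) = (t : ZMod n) + 1 := by push_cast; ring
      rw [hc, hQrec]
      simp only [Matrix.add_apply, Matrix.of_apply]
      rw [ih l c]
      set jt : ZMod n := ((t : ℕ) : ZMod n) with hjt
      set a := aa l.1 with haa
      rcases eq_or_ne (jt + 1 - a) 0 with h0 | h0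
      · -- wrap-around case: `a = jt + 1`
        have hmax : (jt - a).val = n - 1 := val_eq_last (by linear_combination h0)
        have hempty : pastF (jt + 1) a = ∅ := by
          unfold pastF
          have : (jt + 1 - a).val = 0 := by rw [h0]; exact ZMod.val_zero
          rw [this]
          simp
        have herase : pastF jt a = Finset.univ.erase jt := by
          unfold pastF
          ext j'
          simp only [Finset.mem_filter, Finset.mem_univ, true_and, Finset.mem_erase, and_true]
          have h3 := ZMod.val_lt (j' - a)
          constructor
          · intro h heq
            rw [heq] at h
            omega
          · intro h
            have : (j' - a).val ≠ (jt - a).val := fun hv => h (sub_val_eq_iff.mp hv)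
            omega
        have hfull := hxC l.1 c
        unfold st
        rw [hempty, herase, Finset.sum_empty,
          Finset.sum_erase_add Finset.univ _ (Finset.mem_univ jt)]
        exact hfull
      · -- generic case
        have hsucc : (jt + 1 - a).val = (jt - a).val + 1 := by
          have : jt + 1 - a = (jt - a) + 1 := by ring
          rw [this, val_add_one (by rw [← this]; exact h0)]
        have hins : pastF (jt + 1) a = insert jt (pastF jt a) := by
          unfold pastF
          ext j'
          simp only [Finset.mem_filter, Finset.mem_univ, true_and, Finset.mem_insert]
          rw [hsucc]
          constructor
          · intro h
            rcases Nat.lt_succ_iff_lt_or_eq.mp h with h | h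
            · exact Or.inr h
            · exact Or.inl (sub_val_eq_iff.mp h)
          · rintro (rfl | h)
            · omega
            · omega
        have hnotmem : jt ∉ pastF jt a := by
          unfold pastF
          simp
        unfold st
        rw [hins, Finset.sum_insert hnotmem]
        ring
  intro j l c
  have := key j.val l c
  rwa [castv] at this

lemma zeroRow (hxC : ∀ l i, ∑ j, x l j * H i j = 0)
    (hspans : ∀ l : ZMod n, IsSpan (x l) (aa l) l)
    {j l : ZMod n} (h : j ∉ circIoc (aa l) l) (c : Fin m) :
    st H x aa j l c = 0 := by
  rw [mem_circIoc, not_and_or] at h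
  unfold st
  rcases h with h | h
  · -- j = aa l : empty past
    have h1 : (j - aa l).val = 0 := by omega
    have : pastF j (aa l) = ∅ := by
      unfold pastF
      rw [h1]
      simp
    rw [this, Finset.sum_empty]
  · -- span of x l contained in past
    push_neg at h
    have hsub : ∀ j' : ZMod n, j' ∉ pastF j (aa l) → x l j' * H c j' = 0 := by
      intro j' hj'
      unfold pastF at hj'
      simp only [Finset.mem_filter, Finset.mem_univ, true_and, not_lt] at hj'
      have : x l j' = 0 := by
        by_contra hne
        have := (hspans l).2.2 j' hne
        rw [mem_circIcc] at this
        omega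
      rw [this, zero_mul]
    rw [Finset.sum_subset (Finset.subset_univ (pastF j (aa l)))
      (fun j' _ hj' => hsub j' hj')]
    exact hxC l c

lemma minimal (hxC : ∀ l i, ∑ j, x l j * H i j = 0)
    (hspans : ∀ l : ZMod n, IsSpan (x l) (aa l) l)
    (ha : Function.Injective aa)
    (hcover : ∀ j : ZMod n,
      (Finset.univ.filter fun l => j ∈ circIoc (aa l) l).card = m)
    (hsuppC : ∀ j : ZMod n, ∃ c ∈ LinearMap.ker H.transpose.vecMulLinear, c j ≠ 0)
    (hH : H.rank = m) :
    ∀ (l : ZMod n) (z : ZMod n → F), z ∈ LinearMap.ker H.transpose.vecMulLinear →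
      z (aa l) ≠ 0 → ∀ d : ℕ, (∀ j', z j' ≠ 0 → (j' - aa l).val ≤ d) →
      (l - aa l).val ≤ d := by
  have hn : 0 < n := NeZero.pos n
  have hcardn : Fintype.card (ZMod n) = n := ZMod.card n
  -- dimension of the code
  have hker : Module.finrank F ↥(LinearMap.ker H.transpose.vecMulLinear) = n - m := by
    rw [ker_eq]
    have h1 := LinearMap.finrank_range_add_finrank_ker H.mulVecLin
    have h2 : Module.finrank F (ZMod n → F) = n := by
      rw [Module.finrank_fintype_fun_eq_card, hcardn]
    have h3 : Module.finrank F ↥(LinearMap.range H.mulVecLin) = m := hH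
    omega
  have hmn : m ≤ n := by
    have := Matrix.rank_le_card_width H
    rwa [hH, hcardn] at this
  -- the minimal span length starting at a
  set Mset : ZMod n → Set ℕ := fun a =>
    {d | ∃ z : ZMod n → F, z ∈ LinearMap.ker H.transpose.vecMulLinear ∧ z a ≠ 0 ∧
      ∀ j', z j' ≠ 0 → (j' - a).val ≤ d} with hMset
  have hMne : ∀ a, ∃ d, d ∈ Mset a ∧ d ≤ n - 1 := by
    intro a
    obtain ⟨z, hz, hza⟩ := hsuppC a
    exact ⟨n - 1, ⟨z, hz, hza, fun j' _ => by have := ZMod.val_lt (j' - a); omega⟩, le_rfl⟩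
  set Mf : ZMod n → ℕ := fun a => sInf (Mset a) with hMf
  have hMmem : ∀ a, ∃ z : ZMod n → F, z ∈ LinearMap.ker H.transpose.vecMulLinear ∧ z a ≠ 0 ∧
      ∀ j', z j' ≠ 0 → (j' - a).val ≤ Mf a := by
    intro a
    have := Nat.sInf_mem ⟨(hMne a).choose, (hMne a).choose_spec.1⟩
    exact this
  have hMle : ∀ a d, d ∈ Mset a → Mf a ≤ d := fun a d hd => Nat.sInf_le hd
  have hMlt : ∀ a, Mf a ≤ n - 1 := by
    intro a
    obtain ⟨d, hd, hdn⟩ := hMne a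
    exact le_trans (hMle a d hd) hdn
  choose zf hzk hzs hzb using hMmem
  -- step 1 : witness bound
  have step1 : ∀ l : ZMod n, Mf (aa l) ≤ (l - aa l).val := by
    intro l
    apply hMle
    refine ⟨x l, memC H x hxC l, (hspans l).1, fun j' hj' => ?_⟩
    have := (hspans l).2.2 j' hj'
    rwa [mem_circIcc] at this
  -- step 2 : pivot argument
  have step2 : ∀ j : ZMod n,
      m ≤ (Finset.univ.filter fun a : ZMod n => 1 ≤ (j - a).val ∧ (j - a).val ≤ Mf a).card := by
    intro j
    set Aj := Finset.univ.filter fun a : ZMod n => 1 ≤ (j - a).val ∧ (j - a).val ≤ Mf a with hAj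
    have hpiv : ∀ a : ZMod n, a ∉ Aj → ∀ xx, zf a xx ≠ 0 →
        (a - j).val ≤ (xx - j).val ∧ ((xx - j).val = (a - j).val → xx = a) := by
      intro a haj xx hxx
      have hb := hzb a xx hxx
      simp only [hAj, Finset.mem_filter, Finset.mem_univ, true_and, not_and_or, not_le] at haj
      rcases haj with h0 | h0
      · -- j = a
        have hja : j = a := by
          have : (j - a).val = 0 := by omega
          have := (ZMod.val_eq_zero _).mp this
          exact sub_eq_zero.mp this
        subst hja
        constructor
        · simp
        · intro h
          have : (xx - j).val = 0 := by simpa using h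
          exact sub_eq_zero.mp ((ZMod.val_eq_zero _).mp this)
      · -- (j - a).val > Mf a ≥ (xx - a).val
        have hne : a ≠ j := by
          intro h; subst h; simp at h0
        have haj2 := zsub_val a j
        have hja2 := zsub_val j a
        have hvj := ZMod.val_lt j
        have hva := ZMod.val_lt a
        have hlt : (a - j).val + (xx - a).val < n := by
          split_ifs at haj2 hja2 <;>
            first
              | omega
              | (exfalso; exact hne (ZMod.val_injective n (by omega)))
        have e1 : xx - j = (a - j) + (xx - a) := by ring
        have e2 : (xx - j).val = (a - j).val + (xx - a).val := by
          rw [e1, ZMod.val_add_of_lt hlt]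
        constructor
        · omega
        · intro h
          have : (xx - a).val = 0 := by omega
          exact sub_eq_zero.mp ((ZMod.val_eq_zero _).mp this)
    -- linear independence of the pivot family
    have hind : LinearIndependent F
        (fun a : ((Finset.univ \ Aj : Finset (ZMod n)) : Finset (ZMod n)) => zf a.1) := by
      rw [Fintype.linearIndependent_iff]
      intro g hg
      by_contra hcon
      push_neg at hcon
      obtain ⟨i₀, hi₀⟩ := hcon
      set T := Finset.univ.filter fun i => g i ≠ 0 with hT
      have hTne : T.Nonempty := ⟨i₀, by simp [hT, hi₀]⟩
      obtain ⟨istar, histar, hminim⟩ := Finset.exists_min_image T (fun i => (i.1 - j).val) hTne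
      have histar2 : g istar ≠ 0 := by
        simpa [hT] using histar
      have heval := congrFun hg istar.1
      rw [Finset.sum_apply] at heval
      have hsingle : ∑ i, (g i • zf i.1) istar.1 = g istar * zf istar.1 istar.1 := by
        rw [Finset.sum_eq_single istar]
        · simp
        · intro b _ hb
          simp only [Pi.smul_apply, smul_eq_mul]
          rcases eq_or_ne (g b) 0 with h | h
          · rw [h, zero_mul]
          · by_contra hn0
            have hzb0 : zf b.1 istar.1 ≠ 0 := by
              intro h0
              apply hn0
              rw [h0, mul_zero]
            have hbA : b.1 ∉ Aj := by
              have := b.2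
              simp only [Finset.mem_sdiff] at this
              exact this.2
            have hp := hpiv b.1 hbA istar.1 hzb0
            have hmb : (istar.1 - j).val ≤ (b.1 - j).val :=
              hminim b (by simp [hT, h])
            have heq : istar.1 = b.1 := hp.2 (le_antisymm (by omega) (by omega)) -- careful
            exact hb (Subtype.ext heq.symm) |>.elim
        · intro h
          exact absurd (Finset.mem_univ istar) h
      rw [hsingle] at heval
      exact histar2 ((mul_eq_zero.mp heval).resolve_right (hzs istar.1))
    have hspanle : Submodule.span F
        (Set.range fun a : ((Finset.univ \ Aj : Finset (ZMod n)) : Finset (ZMod n)) => zf a.1)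
        ≤ LinearMap.ker H.transpose.vecMulLinear := by
      rw [Submodule.span_le]
      rintro _ ⟨a, rfl⟩
      exact hzk a.1
    have hcard : (Finset.univ \ Aj).card ≤ n - m := by
      have h1 := finrank_span_eq_card hind
      have h2 : Module.finrank F ↥(Submodule.span F
          (Set.range fun a : ((Finset.univ \ Aj : Finset (ZMod n)) : Finset (ZMod n)) => zf a.1))
          ≤ n - m := by
        rw [← hker]
        exact Submodule.finrank_mono hspanle
      rw [h1, Fintype.card_coe] at h2
      exact h2
    have h3 : (Finset.univ \ Aj).card = n - Aj.card := by
      rw [Finset.card_sdiff_of_subset (Finset.subset_univ Aj), Finset.card_univ, hcardn]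
    have h4 : Aj.card ≤ n := by
      calc Aj.card ≤ Finset.univ.card := Finset.card_le_card (Finset.subset_univ _)
      _ = n := by rw [Finset.card_univ, hcardn]
    omega
  -- step 3 : double counting
  have step3 : ∑ a : ZMod n, Mf a =
      ∑ j : ZMod n, (Finset.univ.filter fun a : ZMod n =>
        1 ≤ (j - a).val ∧ (j - a).val ≤ Mf a).card := by
    simp only [Finset.card_filter]
    rw [Finset.sum_comm]
    apply Finset.sum_congr rfl
    intro a _
    rw [← Finset.card_filter, card_band a (Mf a) (by have := hMlt a; omega)]
  have step4 : ∑ l : ZMod n, (l - aa l).val = n * m := by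
    have h1 : ∀ l : ZMod n, (l - aa l).val =
        (Finset.univ.filter fun j : ZMod n => j ∈ circIoc (aa l) l).card := by
      intro l
      rw [show (Finset.univ.filter fun j : ZMod n => j ∈ circIoc (aa l) l) =
          (Finset.univ.filter fun j : ZMod n =>
            1 ≤ (j - aa l).val ∧ (j - aa l).val ≤ (l - aa l).val) from
        Finset.filter_congr fun j _ => by rw [mem_circIoc]]
      rw [card_band (aa l) ((l - aa l).val) (ZMod.val_lt _)]
    calc ∑ l : ZMod n, (l - aa l).val
        = ∑ l : ZMod n, (Finset.univ.filter fun j : ZMod n => j ∈ circIoc (aa l) l).card :=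
          Finset.sum_congr rfl fun l _ => h1 l
      _ = ∑ l : ZMod n, ∑ j : ZMod n, if j ∈ circIoc (aa l) l then 1 else 0 := by
          simp only [Finset.card_filter]
      _ = ∑ j : ZMod n, ∑ l : ZMod n, if j ∈ circIoc (aa l) l then 1 else 0 :=
          Finset.sum_comm
      _ = ∑ j : ZMod n, (Finset.univ.filter fun l : ZMod n => j ∈ circIoc (aa l) l).card := by
          simp only [Finset.card_filter]
      _ = ∑ _j : ZMod n, m := Finset.sum_congr rfl fun j _ => hcover j
      _ = n * m := by rw [Finset.sum_const, smul_eq_mul, Finset.card_univ, hcardn]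
  -- step 5 : squeeze
  have e1 : ∑ l : ZMod n, Mf (aa l) = ∑ a : ZMod n, Mf a :=
    Fintype.sum_bijective aa (Finite.injective_iff_bijective.mp ha) _ _ (fun l => rfl)
  have hge : n * m ≤ ∑ a : ZMod n, Mf a := by
    rw [step3]
    calc n * m = ∑ _j : ZMod n, m := by rw [Finset.sum_const, smul_eq_mul, Finset.card_univ, hcardn]
      _ ≤ _ := Finset.sum_le_sum fun j _ => step2 j
  have hle : ∑ l : ZMod n, Mf (aa l) ≤ ∑ l : ZMod n, (l - aa l).val :=
    Finset.sum_le_sum fun l _ => step1 l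
  have heq : ∑ l : ZMod n, Mf (aa l) = ∑ l : ZMod n, (l - aa l).val := by omega
  have hall : ∀ l : ZMod n, Mf (aa l) = (l - aa l).val := by
    intro l
    exact (Finset.sum_eq_sum_iff_of_le fun i _ => step1 i).mp heq l (Finset.mem_univ l)
  -- conclusion
  intro l z hz hza d hd
  have : Mf (aa l) ≤ d := hMle (aa l) d ⟨z, hz, hza, hd⟩
  rw [hall l] at this
  exact this

lemma indep (hxC : ∀ l i, ∑ j, x l j * H i j = 0)
    (hspans : ∀ l : ZMod n, IsSpan (x l) (aa l) l)
    (ha : Function.Injective aa)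
    (hcover : ∀ j : ZMod n,
      (Finset.univ.filter fun l => j ∈ circIoc (aa l) l).card = m)
    (hsuppC : ∀ j : ZMod n, ∃ c ∈ LinearMap.ker H.transpose.vecMulLinear, c j ≠ 0)
    (hH : H.rank = m) (j : ZMod n) :
    LinearIndependent F
      (fun l : {l : ZMod n // j ∈ circIoc (aa l) l} => st H x aa j l.1) := by
  have hmin := minimal H x aa hxC hspans ha hcover hsuppC hH
  rw [Fintype.linearIndependent_iff]
  intro g hg
  by_contra hcon
  push_neg at hcon
  obtain ⟨i₀, hi₀⟩ := hcon
  set T := Finset.univ.filter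
    (fun i : {l : ZMod n // j ∈ circIoc (aa l) l} => g i ≠ 0) with hT
  have hTne : T.Nonempty := ⟨i₀, by simp [hT, hi₀]⟩
  obtain ⟨l₀, hl₀T, hmax⟩ := Finset.exists_max_image T (fun l => ((j - 1) - aa l.1).val) hTne
  have hgl₀ : g l₀ ≠ 0 := by simpa [hT] using hl₀T
  have hjspan : ∀ i : {l : ZMod n // j ∈ circIoc (aa l) l},
      1 ≤ (j - aa i.1).val ∧ (j - aa i.1).val ≤ (i.1 - aa i.1).val := fun i => i.2
  have hjne : ∀ i : {l : ZMod n // j ∈ circIoc (aa l) l}, j - aa i.1 ≠ 0 :=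
    fun i => val_pos_iff.mp (hjspan i).1
  have hj1 : ∀ i : {l : ZMod n // j ∈ circIoc (aa l) l},
      ((j - 1) - aa i.1).val = (j - aa i.1).val - 1 := by
    intro i
    have e : (j - 1) - aa i.1 = (j - aa i.1) - 1 := by ring
    rw [e, val_sub_one (hjne i)]
  set z : ZMod n → F := fun j' => ∑ i, g i *
    (if (j' - aa i.1).val < (j - aa i.1).val then x i.1 j' else 0) with hz
  have hzk : z ∈ LinearMap.ker H.transpose.vecMulLinear := by
    rw [LinearMap.mem_ker]
    funext c
    have h1 : (H.transpose.vecMulLinear z) c = ∑ j', z j' * H c j' := rfl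
    rw [h1]
    have h2 : ∀ i : {l : ZMod n // j ∈ circIoc (aa l) l},
        (∑ j', (g i * (if (j' - aa i.1).val < (j - aa i.1).val then x i.1 j' else 0)) * H c j')
          = g i * st H x aa j i.1 c := by
      intro i
      unfold st pastF
      rw [Finset.mul_sum, Finset.sum_filter]
      apply Finset.sum_congr rfl
      intro j' _
      split_ifs <;> ring
    calc ∑ j', z j' * H c j'
        = ∑ j', ∑ i, (g i *
            (if (j' - aa i.1).val < (j - aa i.1).val then x i.1 j' else 0)) * H c j' := by
          apply Finset.sum_congr rfl
          intro j' _
          rw [hz, Finset.sum_mul]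
      _ = ∑ i, ∑ j', (g i *
            (if (j' - aa i.1).val < (j - aa i.1).val then x i.1 j' else 0)) * H c j' :=
          Finset.sum_comm
      _ = ∑ i, g i * st H x aa j i.1 c := Finset.sum_congr rfl fun i _ => h2 i
      _ = 0 := by
          have h3 := congrFun hg c
          rw [Finset.sum_apply] at h3
          simpa using h3
  have hzval : z (aa l₀.1) = g l₀ * x l₀.1 (aa l₀.1) := by
    have e0 : z (aa l₀.1) = ∑ i, g i *
        (if (aa l₀.1 - aa i.1).val < (j - aa i.1).val then x i.1 (aa l₀.1) else 0) := rfl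
    have hcond0 : (aa l₀.1 - aa l₀.1).val < (j - aa l₀.1).val := by
      have h4 := (hjspan l₀).1
      simp only [sub_self, ZMod.val_zero]
      omega
    have e1 : (∑ i, g i *
        (if (aa l₀.1 - aa i.1).val < (j - aa i.1).val then x i.1 (aa l₀.1) else 0))
        = g l₀ * (if (aa l₀.1 - aa l₀.1).val < (j - aa l₀.1).val then x l₀.1 (aa l₀.1) else 0) := by
      apply Finset.sum_eq_single l₀
      · intro i _ hne
        rcases eq_or_ne (g i) 0 with h | h
        · rw [h, zero_mul]
        · rw [if_neg, mul_zero]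
          intro hcond
          have hle : (aa l₀.1 - aa i.1).val ≤ ((j - 1) - aa i.1).val := by
            rw [hj1 i]; omega
          have htri := tri hle
          have hane : aa l₀.1 - aa i.1 ≠ 0 := by
            rw [sub_ne_zero]
            intro he
            exact hne (Subtype.ext (ha he.symm))
          have h1' : 1 ≤ (aa l₀.1 - aa i.1).val := val_pos_iff.mpr hane
          have hmaxi : ((j - 1) - aa i.1).val ≤ ((j - 1) - aa l₀.1).val :=
            hmax i (by simp [hT, h])
          omega
      · intro h
        exact absurd (Finset.mem_univ l₀) h
    rw [e0, e1, if_pos hcond0]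
  have hzne : z (aa l₀.1) ≠ 0 := by
    rw [hzval]
    exact mul_ne_zero hgl₀ (hspans l₀.1).1
  have hsupp : ∀ j', z j' ≠ 0 → (j' - aa l₀.1).val ≤ ((j - 1) - aa l₀.1).val := by
    intro j' hj'
    obtain ⟨i, _, hterm⟩ := Finset.exists_ne_zero_of_sum_ne_zero
      (show (∑ i, g i *
        (if (j' - aa i.1).val < (j - aa i.1).val then x i.1 j' else 0)) ≠ 0 from hj')
    have hgi : g i ≠ 0 := by
      intro h; rw [h, zero_mul] at hterm; exact hterm rfl
    have hcond : (j' - aa i.1).val < (j - aa i.1).val := by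
      by_contra h
      rw [if_neg h, mul_zero] at hterm
      exact hterm rfl
    have h5 : (j' - aa i.1).val ≤ ((j - 1) - aa i.1).val := by
      rw [hj1 i]; omega
    have h6 : ((j - 1) - j').val ≤ ((j - 1) - aa i.1).val := flip_iff.mp h5
    have h7 : ((j - 1) - aa i.1).val ≤ ((j - 1) - aa l₀.1).val :=
      hmax i (by simp [hT, hgi])
    exact flip_iff.mpr (by omega)
  have hfin := hmin l₀.1 z hzk hzne (((j - 1) - aa l₀.1).val) hsupp
  have h8 := hj1 l₀
  have h9 := hjspan l₀
  omega

lemma rankQ (hxC : ∀ l i, ∑ j, x l j * H i j = 0)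
    (hspans : ∀ l : ZMod n, IsSpan (x l) (aa l) l)
    (ha : Function.Injective aa)
    (hcover : ∀ j : ZMod n,
      (Finset.univ.filter fun l => j ∈ circIoc (aa l) l).card = m)
    (hsuppC : ∀ j : ZMod n, ∃ c ∈ LinearMap.ker H.transpose.vecMulLinear, c j ≠ 0)
    (hH : H.rank = m)
    (Q : ZMod n → Matrix {l : ZMod n // l ≠ 0} (Fin m) F)
    (hQ0 : ∀ l c, Q 0 l c =
      ∑ j ∈ Finset.univ.filter (fun j : ZMod n => (aa l.1).val ≤ j.val), x l.1 j * H c j)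
    (hQrec : ∀ j : ZMod n, Q (j + 1) = Q j + Matrix.of (fun l c => x l.1 j * H c j))
    (j : ZMod n) :
    (Q j).rank = (Finset.univ.filter fun l : ZMod n =>
      l ≠ 0 ∧ j ∈ circIoc (aa l) l).card := by
  have hrow := rowFormula H x aa hxC Q hQ0 hQrec
  rw [← Matrix.rank_transpose, Matrix.rank_eq_finrank_span_cols, Matrix.col_transpose, Matrix.row]
  have hspan : Submodule.span F (Set.range (Q j)) =
      Submodule.span F (st H x aa j '' {l : ZMod n | l ≠ 0 ∧ j ∈ circIoc (aa l) l}) := by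
    apply le_antisymm
    · rw [Submodule.span_le]
      rintro _ ⟨l, rfl⟩
      by_cases hmem : j ∈ circIoc (aa l.1) l.1
      · apply Submodule.subset_span
        exact ⟨l.1, ⟨l.2, hmem⟩, by funext c; exact (hrow j l c).symm⟩
      · have h0 : Q j l = 0 := by
          funext c
          rw [hrow j l c]
          exact zeroRow H x aa hxC hspans hmem c
        rw [h0]
        exact Submodule.zero_mem _
    · rw [Submodule.span_le]
      rintro _ ⟨l, hl, rfl⟩
      apply Submodule.subset_span
      exact ⟨⟨l, hl.1⟩, by funext c; exact hrow j ⟨l, hl.1⟩ c⟩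
  rw [hspan]
  have hind := indep H x aa hxC hspans ha hcover hsuppC hH j
  have hind2 : LinearIndependent F
      (fun l : {l : ZMod n // l ≠ 0 ∧ j ∈ circIoc (aa l) l} => st H x aa j l.1) :=
    hind.comp (fun l : {l : ZMod n // l ≠ 0 ∧ j ∈ circIoc (aa l) l} =>
      (⟨l.1, l.2.2⟩ : {l : ZMod n // j ∈ circIoc (aa l) l}))
      (by
        intro a b hab
        have h' := congrArg Subtype.val hab
        exact Subtype.ext h')
  have himg : st H x aa j '' {l : ZMod n | l ≠ 0 ∧ j ∈ circIoc (aa l) l} =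
      Set.range (fun l : {l : ZMod n // l ≠ 0 ∧ j ∈ circIoc (aa l) l} => st H x aa j l.1) :=
    Set.image_eq_range _ _
  rw [himg, finrank_span_eq_card hind2]
  rw [Fintype.card_subtype]

end Main

end Stmt14Aux

open Stmt14Aux in
/-- Existence and uniqueness of the probing vector: with `Q_j` the BCJR state
matrices of the trellis built from all characteristic generators of `C = ker Hᵀ`
except the one with span `(a_0, 0]`, one has `rk Q_j = n−k` for `j ∈ (0, a_0]`
and `rk Q_j = n−k−1` otherwise, and there is a unique `v` with `G_0ᵀ = Q_1 vᵀ`. -/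
theorem stmt14 (F : Type*) [Field F] (n k m : ℕ) [NeZero n] (hkm : k + m = n)
    (H : Matrix (Fin m) (ZMod n) F) (hH : H.rank = m)
    (x : ZMod n → ZMod n → F) (aa : ZMod n → ZMod n)
    (hxC : ∀ l i, ∑ j, x l j * H i j = 0)
    (hspanC : Submodule.span F (Set.range x)
      = LinearMap.ker H.transpose.vecMulLinear)
    (hspans : ∀ l : ZMod n, IsSpan (x l) (aa l) l)
    (ha : Function.Injective aa)
    (hcover : ∀ j : ZMod n,
      (Finset.univ.filter fun l => j ∈ circIoc (aa l) l).card = m)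
    (hsuppC : ∀ j : ZMod n, ∃ c ∈ LinearMap.ker H.transpose.vecMulLinear, c j ≠ 0)
    (hsuppD : ∀ j : ZMod n, ∃ i, H i j ≠ 0)
    (Q : ZMod n → Matrix {l : ZMod n // l ≠ 0} (Fin m) F)
    (hQ0 : ∀ l c, Q 0 l c =
      ∑ j ∈ Finset.univ.filter (fun j : ZMod n => (aa l.1).val ≤ j.val), x l.1 j * H c j)
    (hQrec : ∀ j : ZMod n, Q (j + 1) = Q j + Matrix.of (fun l c => x l.1 j * H c j)) :
    (∀ j ∈ circIoc (0 : ZMod n) (aa 0), (Q j).rank = m) ∧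
    (∀ j ∉ circIoc (0 : ZMod n) (aa 0), (Q j).rank = m - 1) ∧
    (∃! v : Fin m → F, ∀ l, x l.1 0 = ∑ c, Q 1 l c * v c) := by
  have hn : 0 < n := NeZero.pos n
  have hcardn : Fintype.card (ZMod n) = n := ZMod.card n
  have hm : 0 < m := by
    obtain ⟨i, -⟩ := hsuppD 0
    exact i.pos
  -- dimension of the code
  have hker : Module.finrank F ↥(LinearMap.ker H.transpose.vecMulLinear) = n - m := by
    rw [ker_eq]
    have h1 := LinearMap.finrank_range_add_finrank_ker H.mulVecLin
    have h2 : Module.finrank F (ZMod n → F) = n := by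
      rw [Module.finrank_fintype_fun_eq_card, hcardn]
    have h3 : Module.finrank F ↥(LinearMap.range H.mulVecLin) = m := hH
    omega
  have hmltn : m < n := by
    rcases Nat.lt_or_ge m n with h | h
    · exact h
    · exfalso
      have h0 : Module.finrank F ↥(LinearMap.ker H.transpose.vecMulLinear) = 0 := by omega
      have hbot : LinearMap.ker H.transpose.vecMulLinear = ⊥ :=
        Submodule.finrank_eq_zero.mp h0
      obtain ⟨z, hz, hz0⟩ := hsuppC 0
      rw [hbot, Submodule.mem_bot] at hz
      exact hz0 (by rw [hz]; rfl)
  have hn2 : 2 ≤ n := by omega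
  -- aa 0 ≠ 0
  have ha0 : aa 0 ≠ 0 := by
    intro h0
    have hx00 : x 0 0 ≠ 0 := by
      have := (hspans 0).1
      rwa [h0] at this
    obtain ⟨i, hi⟩ := hsuppD 0
    apply hi
    have hsum := hxC 0 i
    rw [Finset.sum_eq_single (0 : ZMod n)] at hsum
    · exact (mul_eq_zero.mp hsum).resolve_left hx00
    · intro b _ hb
      have hx0b : x 0 b = 0 := by
        by_contra hne
        have := (hspans 0).2.2 b hne
        rw [h0, mem_circIcc] at this
        simp only [sub_zero] at this
        have : b.val = 0 := by simpa using this
        exact hb ((ZMod.val_eq_zero b).mp this)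
      rw [hx0b, zero_mul]
    · intro h
      exact absurd (Finset.mem_univ _) h
  have hA1 : 1 ≤ (aa 0).val := val_pos_iff.mpr ha0
  have hA2 := ZMod.val_lt (aa 0)
  -- complement of the two circular intervals
  have hcompl : ∀ j : ZMod n, j ∈ circIoc (0 : ZMod n) (aa 0) ↔ j ∉ circIoc (aa 0) 0 := by
    intro j
    have hj2 := ZMod.val_lt j
    have e1 : ((0:ZMod n) - aa 0).val = n - (aa 0).val := by
      rw [zsub_val, if_neg (by simp only [ZMod.val_zero]; omega)]
      simp only [ZMod.val_zero]
      omega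
    simp only [mem_circIoc, sub_zero]
    rw [e1, zsub_val j (aa 0)]
    split_ifs <;> omega
  -- the two rank statements
  have hrank : ∀ j : ZMod n, (Q j).rank =
      (Finset.univ.filter fun l : ZMod n => l ≠ 0 ∧ j ∈ circIoc (aa l) l).card :=
    rankQ H x aa hxC hspans ha hcover hsuppC hH Q hQ0 hQrec
  have hcard : ∀ j : ZMod n, j ∉ circIoc (aa 0) 0 →
      (Finset.univ.filter fun l : ZMod n => l ≠ 0 ∧ j ∈ circIoc (aa l) l).card = m := by
    intro j hj
    rw [show (Finset.univ.filter fun l : ZMod n => l ≠ 0 ∧ j ∈ circIoc (aa l) l)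
        = Finset.univ.filter fun l : ZMod n => j ∈ circIoc (aa l) l from
      Finset.filter_congr fun l _ =>
        ⟨fun h => h.2, fun h => ⟨fun h0 => hj (h0 ▸ h), h⟩⟩]
    exact hcover j
  have hcard' : ∀ j : ZMod n, j ∈ circIoc (aa 0) 0 →
      (Finset.univ.filter fun l : ZMod n => l ≠ 0 ∧ j ∈ circIoc (aa l) l).card = m - 1 := by
    intro j hj
    have he : (Finset.univ.filter fun l : ZMod n => l ≠ 0 ∧ j ∈ circIoc (aa l) l)
        = (Finset.univ.filter fun l : ZMod n => j ∈ circIoc (aa l) l).erase 0 := by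
      ext l
      simp only [Finset.mem_filter, Finset.mem_univ, true_and, Finset.mem_erase]
    have hmem0 : (0 : ZMod n) ∈ Finset.univ.filter fun l : ZMod n => j ∈ circIoc (aa l) l := by
      simp only [Finset.mem_filter, Finset.mem_univ, true_and]
      exact hj
    rw [he, Finset.card_erase_of_mem hmem0, hcover j]
  have goal1 : ∀ j ∈ circIoc (0 : ZMod n) (aa 0), (Q j).rank = m := by
    intro j hj
    rw [hrank j, hcard j ((hcompl j).mp hj)]
  have goal2 : ∀ j ∉ circIoc (0 : ZMod n) (aa 0), (Q j).rank = m - 1 := by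
    intro j hj
    have : j ∈ circIoc (aa 0) 0 := by
      by_contra h
      exact hj ((hcompl j).mpr h)
    rw [hrank j, hcard' j this]
  refine ⟨goal1, goal2, ?_⟩
  -- part 3
  have h1mem : (1 : ZMod n) ∈ circIoc (0 : ZMod n) (aa 0) := by
    haveI : Fact (1 < n) := ⟨hn2⟩
    rw [mem_circIoc]
    simp only [sub_zero]
    rw [ZMod.val_one n]
    omega
  have h0mem : (0 : ZMod n) ∉ circIoc (0 : ZMod n) (aa 0) := by
    rw [mem_circIoc]
    simp
  have hr1 : Module.finrank F ↥(LinearMap.range (Q 1).mulVecLin) = m := goal1 1 h1mem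
  have hr0 : Module.finrank F ↥(LinearMap.range (Q 0).mulVecLin) = m - 1 := goal2 0 h0mem
  set g : {l : ZMod n // l ≠ 0} → F := fun l => x l.1 0 with hg
  have hQ10 : Q 1 = Q 0 + Matrix.of (fun l c => x l.1 0 * H c 0) := by
    have := hQrec 0
    rwa [zero_add] at this
  have hV1le : LinearMap.range (Q 1).mulVecLin ≤
      LinearMap.range (Q 0).mulVecLin ⊔ Submodule.span F {g} := by
    rintro _ ⟨v, rfl⟩
    have hsplit : (Q 1).mulVecLin v = (Q 0).mulVecLin v + (∑ c, H c 0 * v c) • g := by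
      funext l
      show (∑ c, Q 1 l c * v c) = (∑ c, Q 0 l c * v c) + (∑ c, H c 0 * v c) * x l.1 0
      rw [hQ10]
      simp only [Matrix.add_apply, Matrix.of_apply, add_mul]
      rw [Finset.sum_add_distrib, Finset.sum_mul]
      congr 1
      apply Finset.sum_congr rfl
      intro c _
      ring
    rw [hsplit]
    apply Submodule.add_mem
    · exact Submodule.mem_sup_left ⟨v, rfl⟩
    · exact Submodule.mem_sup_right
        (Submodule.smul_mem _ _ (Submodule.mem_span_singleton_self g))
  have hWfin : Module.finrank F
      ↥(LinearMap.range (Q 0).mulVecLin ⊔ Submodule.span F {g}) ≤ m := by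
    have hb := Submodule.finrank_add_le_finrank_add_finrank
      (LinearMap.range (Q 0).mulVecLin) (Submodule.span F {g})
    have hspan1 : Module.finrank F ↥(Submodule.span F ({g} : Set _)) ≤ 1 := by
      by_cases hg0 : g = 0
      · rw [hg0, Submodule.span_zero_singleton]
        simp
      · rw [finrank_span_singleton hg0]
    omega
  have hVW : LinearMap.range (Q 1).mulVecLin =
      LinearMap.range (Q 0).mulVecLin ⊔ Submodule.span F {g} :=
    Submodule.eq_of_le_of_finrank_le hV1le (by rw [hr1]; exact hWfin)
  have hgV1 : g ∈ LinearMap.range (Q 1).mulVecLin := by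
    rw [hVW]
    exact Submodule.mem_sup_right (Submodule.mem_span_singleton_self g)
  obtain ⟨v, hv⟩ := hgV1
  have hkerQ1 : LinearMap.ker (Q 1).mulVecLin = ⊥ := by
    have h1 := LinearMap.finrank_range_add_finrank_ker (Q 1).mulVecLin
    have h2 : Module.finrank F (Fin m → F) = m := by
      rw [Module.finrank_fintype_fun_eq_card, Fintype.card_fin]
    have h3 : Module.finrank F ↥(LinearMap.ker (Q 1).mulVecLin) = 0 := by omega
    exact Submodule.finrank_eq_zero.mp h3
  refine ⟨v, ?_, ?_⟩
  · intro l
    have := congrFun hv l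
    exact this.symm
  · intro y hy
    have hvy : (Q 1).mulVecLin y = (Q 1).mulVecLin v := by
      rw [hv]
      funext l
      exact (hy l).symm
    have : y - v ∈ LinearMap.ker (Q 1).mulVecLin := by
      rw [LinearMap.mem_ker, map_sub, hvy, sub_self]
    rw [hkerQ1, Submodule.mem_bot, sub_eq_zero] at this
    exact this
end

section
/- (The dual codeword from the probing vector has the reversed span.) With v the unique vector satisfying G_0^T = Q_1 vᵀ as above, the dual codeword c := vH ∈ C^⊥ has span (0, a_0] and satisfies c_0 = 1; moreover Q_j vᵀ = 0 for all j ∉ (0, a_0]. -/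
open scoped Classical

/-- The dual codeword produced by the probing vector has the reversed span:
with `v` the unique vector satisfying `G_0ᵀ = Q_1 vᵀ`, the dual codeword
`c := vH ∈ C^⊥` has span `(0, a_0]` and `c_0 = 1`; moreover `Q_j vᵀ = 0` for all
`j ∉ (0, a_0]`. -/
theorem stmt15 (F : Type*) [Field F] (n k m : ℕ) [NeZero n] (hkm : k + m = n)
    (H : Matrix (Fin m) (ZMod n) F) (hH : H.rank = m)
    (x : ZMod n → ZMod n → F) (aa : ZMod n → ZMod n)
    (hxC : ∀ l i, ∑ j, x l j * H i j = 0)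
    (hspanC : Submodule.span F (Set.range x)
      = LinearMap.ker H.transpose.vecMulLinear)
    (hspans : ∀ l : ZMod n, IsSpan (x l) (aa l) l)
    (ha : Function.Injective aa)
    (hcover : ∀ j : ZMod n,
      (Finset.univ.filter fun l => j ∈ circIoc (aa l) l).card = m)
    (hsuppC : ∀ j : ZMod n, ∃ c ∈ LinearMap.ker H.transpose.vecMulLinear, c j ≠ 0)
    (hsuppD : ∀ j : ZMod n, ∃ i, H i j ≠ 0)
    (Q : ZMod n → Matrix {l : ZMod n // l ≠ 0} (Fin m) F)
    (hQ0 : ∀ l c, Q 0 l c =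
      ∑ j ∈ Finset.univ.filter (fun j : ZMod n => (aa l.1).val ≤ j.val), x l.1 j * H c j)
    (hQrec : ∀ j : ZMod n, Q (j + 1) = Q j + Matrix.of (fun l c => x l.1 j * H c j))
    (v : Fin m → F)
    (hv : ∀ l : {l : ZMod n // l ≠ 0}, x l.1 0 = ∑ c, Q 1 l c * v c) :
    IsSpan (fun j => ∑ i, v i * H i j) (0 : ZMod n) (aa 0) ∧
    (∑ i, v i * H i 0) = 1 ∧
    (∀ j ∉ circIoc (0 : ZMod n) (aa 0), ∀ l, ∑ c, Q j l c * v c = 0) := by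
  classical
  set cw : ZMod n → F := fun j => ∑ i, v i * H i j with hcw
  set a : ZMod n := aa 0 with ha0
  -- Step 0 : a ≠ 0
  have haneq : a ≠ 0 := by
    intro h0
    obtain ⟨i, hi⟩ := hsuppD 0
    have hs := hspans 0
    rw [← ha0, h0] at hs
    have hsup : ∀ j : ZMod n, j ≠ 0 → x 0 j = 0 := by
      intro j hj
      by_contra hx
      have hmem := hs.2.2 j hx
      simp only [circIcc, Set.mem_setOf_eq, sub_zero, ZMod.val_zero, Nat.le_zero] at hmem
      exact hj ((ZMod.val_eq_zero j).mp hmem)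
    have h1 := hxC 0 i
    rw [Finset.sum_eq_single 0 (fun b _ hb => by rw [hsup b hb, zero_mul])
      (fun h => absurd (Finset.mem_univ 0) h)] at h1
    have hx00 : x 0 0 ≠ 0 := hs.2.1
    exact hi ((mul_eq_zero.mp h1).resolve_left hx00)
  have hα1 : 1 ≤ a.val := by
    rcases Nat.eq_zero_or_pos a.val with h | h
    · exact absurd ((ZMod.val_eq_zero a).mp h) haneq
    · exact h
  have hn2 : 2 ≤ n := by
    have := ZMod.val_lt a
    omega
  -- orthogonality : every generator is orthogonal to cw
  have horth : ∀ l, ∑ j, x l j * cw j = 0 := by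
    intro l
    have : ∑ j, x l j * cw j = ∑ i, v i * (∑ j, x l j * H i j) := by
      simp only [hcw, Finset.mul_sum]
      rw [Finset.sum_comm]
      apply Finset.sum_congr rfl
      intro j _
      apply Finset.sum_congr rfl
      intro i _
      ring
    rw [this]
    simp [hxC]
  -- key expansion of hv
  have hE : ∀ l : {l : ZMod n // l ≠ 0},
      (∑ j ∈ Finset.univ.filter (fun j : ZMod n => (aa l.1).val ≤ j.val), x l.1 j * cw j)
        + x l.1 0 * cw 0 = x l.1 0 := by
    intro l
    have h2 : Q 1 = Q 0 + Matrix.of (fun (l : {l : ZMod n // l ≠ 0}) c => x l.1 0 * H c 0) := by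
      have := hQrec 0
      rwa [zero_add] at this
    have h1 := (hv l).symm
    rw [h2] at h1
    simp only [Matrix.add_apply, Matrix.of_apply, add_mul, Finset.sum_add_distrib] at h1
    have hfirst : ∑ c, Q 0 l c * v c
        = ∑ j ∈ Finset.univ.filter (fun j : ZMod n => (aa l.1).val ≤ j.val), x l.1 j * cw j := by
      simp only [hQ0, Finset.sum_mul]
      rw [Finset.sum_comm]
      apply Finset.sum_congr rfl
      intro j _
      simp only [hcw, Finset.mul_sum]
      apply Finset.sum_congr rfl
      intro c _
      ring
    have hsecond : ∑ c, x l.1 0 * H c 0 * v c = x l.1 0 * cw 0 := by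
      simp only [hcw, Finset.mul_sum]
      apply Finset.sum_congr rfl
      intro c _
      ring
    rw [hfirst, hsecond] at h1
    exact h1
  -- aa is surjective
  have hsurj : Function.Surjective aa := Finite.surjective_of_injective ha
  -- Step 4 : cw 0 = 1
  have hc0 : cw 0 = 1 := by
    obtain ⟨l, hl⟩ := hsurj 0
    have hlne : l ≠ 0 := by
      intro h
      rw [h] at hl
      exact haneq (by rw [ha0, hl])
    have hel := hE ⟨l, hlne⟩
    simp only [hl] at hel
    rw [show (Finset.univ.filter (fun j : ZMod n => (0 : ZMod n).val ≤ j.val)) = Finset.univ by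
      simp [ZMod.val_zero]] at hel
    rw [horth l] at hel
    have hx0 : x l 0 ≠ 0 := by
      have := (hspans l).1
      rwa [hl] at this
    have heq : x l 0 * cw 0 = x l 0 * 1 := by linear_combination hel
    exact mul_left_cancel₀ hx0 heq
  -- Step 5 : cw j = 0 for j.val > a.val
  have hczero : ∀ s : ℕ, ∀ j : ZMod n, a.val < j.val → n - j.val ≤ s → cw j = 0 := by
    intro s
    induction s with
    | zero =>
      intro j _ hle
      have := ZMod.val_lt j
      omega
    | succ s ih =>
      intro j hj hle
      obtain ⟨l, hl⟩ := hsurj j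
      have hlne : l ≠ 0 := by
        intro h
        rw [h, ← ha0] at hl
        rw [← hl] at hj
        exact lt_irrefl _ hj
      have hel := hE ⟨l, hlne⟩
      simp only [hl] at hel
      rw [hc0, mul_one] at hel
      have hsum : ∑ j' ∈ Finset.univ.filter (fun j' : ZMod n => j.val ≤ j'.val), x l j' * cw j'
          = x l j * cw j := by
        apply Finset.sum_eq_single_of_mem j (by simp)
        intro b hb hbj
        have hble : j.val ≤ b.val := (Finset.mem_filter.mp hb).2
        have hblt : j.val < b.val := by
          rcases Nat.lt_or_ge j.val b.val with h | h
          · exact h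
          · exact absurd (ZMod.val_injective n (Nat.le_antisymm h hble)) hbj
        have : cw b = 0 := by
          apply ih b (by omega)
          have := ZMod.val_lt b
          omega
        rw [this, mul_zero]
      rw [hsum] at hel
      have hxj : x l j ≠ 0 := by
        have := (hspans l).1
        rwa [hl] at this
      have hz : x l j * cw j = 0 := by linear_combination hel
      exact (mul_eq_zero.mp hz).resolve_left hxj
  have hcz : ∀ j : ZMod n, a.val < j.val → cw j = 0 := fun j hj =>
    hczero n j hj (Nat.sub_le n j.val)
  -- Step 6 : cw a ≠ 0
  have hca : cw a ≠ 0 := by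
    have h := horth 0
    have hsum : ∑ j, x 0 j * cw j = x 0 0 * cw 0 + x 0 a * cw a := by
      have hpair : ∑ j ∈ ({0, a} : Finset (ZMod n)), x 0 j * cw j
          = x 0 0 * cw 0 + x 0 a * cw a :=
        Finset.sum_pair (show (0 : ZMod n) ≠ a from fun h => haneq h.symm)
      rw [← hpair]
      symm
      apply Finset.sum_subset (Finset.subset_univ _)
      intro b _ hb
      simp only [Finset.mem_insert, Finset.mem_singleton, not_or] at hb
      obtain ⟨hb0, hba⟩ := hb
      by_contra hne
      have hxb : x 0 b ≠ 0 := fun h' => hne (by rw [h', zero_mul])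
      have hcb : cw b ≠ 0 := fun h' => hne (by rw [h', mul_zero])
      have hble : b.val ≤ a.val := by
        by_contra hgt
        exact hcb (hcz b (by omega))
      have hmem := (hspans 0).2.2 b hxb
      rw [← ha0] at hmem
      simp only [circIcc, Set.mem_setOf_eq, zero_sub] at hmem
      -- (b - a).val ≤ (-a).val = n - a.val
      rw [ZMod.neg_val] at hmem
      simp only [haneq, if_false] at hmem
      have hbane : b - a ≠ 0 := fun h' => hba (by
        have := sub_eq_zero.mp h'
        exact this)
      have hd1 : 1 ≤ (b - a).val := by
        rcases Nat.eq_zero_or_pos (b - a).val with h' | h'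
        · exact absurd ((ZMod.val_eq_zero _).mp h') hbane
        · exact h'
      have hbval : b.val = (a.val + (b - a).val) % n := by
        have hab : a + (b - a) = b := by ring
        calc b.val = (a + (b - a)).val := by rw [hab]
          _ = (a.val + (b - a).val) % n := ZMod.val_add _ _
      rcases Nat.lt_or_ge (a.val + (b - a).val) n with hlt | hge
      · rw [Nat.mod_eq_of_lt hlt] at hbval
        omega
      · have : a.val + (b - a).val = n := by omega
        rw [this, Nat.mod_self] at hbval
        exact hb0 ((ZMod.val_eq_zero b).mp hbval)
    rw [hsum, hc0, mul_one] at h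
    intro h'
    rw [h', mul_zero, add_zero] at h
    exact (hspans 0).2.1 h
  -- f machinery
  set fw : ZMod n → {l : ZMod n // l ≠ 0} → F := fun j l => ∑ c, Q j l c * v c with hfw
  have hstep : ∀ (j : ZMod n) (l : {l : ZMod n // l ≠ 0}),
      fw (j + 1) l = fw j l + x l.1 j * cw j := by
    intro j l
    simp only [hfw, hQrec j, Matrix.add_apply, Matrix.of_apply, add_mul,
      Finset.sum_add_distrib]
    congr 1
    simp only [hcw, Finset.mul_sum]
    apply Finset.sum_congr rfl
    intro c _
    ring
  have hf0 : ∀ l, fw 0 l = 0 := by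
    intro l
    have h1 := hstep 0 l
    rw [zero_add] at h1
    have h2 : fw 1 l = x l.1 0 := (hv l).symm
    rw [h2, hc0, mul_one] at h1
    linear_combination -h1
  have hfz : ∀ s : ℕ, ∀ j : ZMod n, a.val < j.val → n - j.val ≤ s →
      ∀ l, fw j l = 0 := by
    intro s
    induction s with
    | zero =>
      intro j _ hle
      have := ZMod.val_lt j
      omega
    | succ s ih =>
      intro j hj hle l
      have h1 := hstep j l
      rw [hcz j hj, mul_zero, add_zero] at h1
      rw [← h1]
      rcases Nat.lt_or_ge (j.val + 1) n with hlt | hge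
      · have hval : (j + 1).val = j.val + 1 := by
          rw [ZMod.val_add_of_lt]
          · rw [show ((1 : ZMod n)) = ((1 : ℕ) : ZMod n) by simp,
              ZMod.val_cast_of_lt (by omega)]
          · rw [show ((1 : ZMod n)) = ((1 : ℕ) : ZMod n) by simp,
              ZMod.val_cast_of_lt (by omega)]
            omega
        apply ih (j + 1) (by omega) (by omega)
      · have hjn : j.val = n - 1 := by
          have := ZMod.val_lt j
          omega
        have hj1 : j + 1 = 0 := by
          apply ZMod.val_injective n
          rw [ZMod.val_add, ZMod.val_zero,
            show ((1 : ZMod n)) = ((1 : ℕ) : ZMod n) by simp,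
            ZMod.val_cast_of_lt (by omega), hjn]
          have : n - 1 + 1 = n := by omega
          rw [this, Nat.mod_self]
        rw [hj1]
        exact hf0 l
  -- Assemble
  refine ⟨⟨?_, ?_, ?_⟩, hc0, ?_⟩
  · show cw 0 ≠ 0
    rw [hc0]; exact one_ne_zero
  · exact hca
  · intro j hj
    show j ∈ circIcc 0 a
    simp only [circIcc, Set.mem_setOf_eq, sub_zero]
    by_contra hgt
    exact hj (hcz j (by omega))
  · intro j hj l
    simp only [circIoc, Set.mem_setOf_eq, sub_zero] at hj
    push_neg at hj
    rcases Nat.lt_or_ge a.val j.val with hlt | hge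
    · exact hfz n j hlt (Nat.sub_le n j.val) l
    · have hj0 : j.val = 0 := by
        rcases Nat.eq_zero_or_pos j.val with h | h
        · exact h
        · exact absurd (hj h) (by omega)
      have : j = 0 := (ZMod.val_eq_zero j).mp hj0
      rw [this]
      exact hf0 l
end

section
/- (Dual rank condition.) Let (X,T) be a characteristic pair of C and Y the dual characteristic matrix constructed row-wise via the probing vectors v_m (row m of Y is c^m = v_m H with span (m, a_m]). For any partition K ∪ K̂ = {0,...,n−1} with |K| = k, let X̃ be the k rows of X with indices in K and Ỹ the n−k rows of Y with indices in K̂. Then rk X̃ = k if and only if {v_m : m ∈ K̂} is linearly independent, if and only if rk Ỹ = n−k. -/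
open scoped Classical

namespace Stmt16

variable {F : Type*} [Field F] {n m : ℕ} [NeZero n]

lemma sub_val (u w : ZMod n) :
    (u - w).val = if w.val ≤ u.val then u.val - w.val else u.val + n - w.val := by
  have hu := ZMod.val_lt u
  have hw := ZMod.val_lt w
  rcases eq_or_ne w 0 with rfl | hw0
  · simp
  · have hw1 : 1 ≤ w.val := by
      rcases Nat.eq_zero_or_pos w.val with h | h
      · exact absurd (ZMod.val_injective n (by simpa using h)) hw0
      · exact h
    rw [sub_eq_add_neg, ZMod.val_add, ZMod.neg_val]
    simp only [hw0, if_false]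
    split_ifs with h
    · have he : u.val + (n - w.val) = n + (u.val - w.val) := by omega
      rw [he, Nat.add_mod_left, Nat.mod_eq_of_lt (by omega)]
    · rw [Nat.mod_eq_of_lt (by omega)]; omega

lemma unroll (N inc : ZMod n → Matrix (ZMod n) (Fin m) F)
    (hrec : ∀ j, N (j + 1) = N j + inc j) (j : ZMod n) :
    N j = N 0 + ∑ j' ∈ Finset.univ.filter (fun j' : ZMod n => j'.val < j.val), inc j' := by
  suffices h : ∀ t : ℕ, ∀ j : ZMod n, j.val = t →
      N j = N 0 + ∑ j' ∈ Finset.univ.filter (fun j' : ZMod n => j'.val < j.val), inc j' from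
    h j.val j rfl
  intro t
  induction t with
  | zero =>
    intro j hj
    have hj0 : j = 0 := ZMod.val_injective n (by simpa using hj)
    subst hj0
    simp
  | succ t ih =>
    intro j hj
    have hn := ZMod.val_lt j
    have htn : t + 1 < n := hj ▸ hn
    set j' : ZMod n := (t : ZMod n) with hj'def
    have hval : j'.val = t := ZMod.val_cast_of_lt (by omega)
    have hone : (1 : ZMod n).val = 1 := ZMod.val_one'' (by omega)
    have hj1 : (j' + 1).val = t + 1 := by
      rw [ZMod.val_add, hval, hone, Nat.mod_eq_of_lt (by omega)]
    have hjj : j = j' + 1 := ZMod.val_injective n (by rw [hj, hj1])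
    have hnotmem : j' ∉ Finset.univ.filter (fun z : ZMod n => z.val < j'.val) := by
      simp
    have hins : Finset.univ.filter (fun z : ZMod n => z.val < j.val)
        = insert j' (Finset.univ.filter (fun z : ZMod n => z.val < j'.val)) := by
      ext z
      simp only [Finset.mem_filter, Finset.mem_univ, true_and, Finset.mem_insert, hj, hval]
      constructor
      · intro hz
        rcases Nat.lt_or_ge z.val t with h | h
        · exact Or.inr h
        · exact Or.inl (ZMod.val_injective n (by omega))
      · rintro (rfl | hz) <;> omega
    rw [hins, Finset.sum_insert hnotmem, hjj, hrec, ih j' hval]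
    abel

end Stmt16

set_option maxHeartbeats 2000000 in
/-- Dual rank condition: with `X` a characteristic matrix of `C = ker Hᵀ` (spans
`(a_l, l]`), `N_j` the BCJR state matrices of the full trellis, `v_m` the probing
vectors and `Y` the dual characteristic matrix with rows `c^m = v_m H`, for any
partition `K ∪ K̂` of the index set with `|K| = k`:
`rk X̃ = k ⟺ {v_m : m ∈ K̂} linearly independent ⟺ rk Ỹ = n−k`. -/
theorem stmt16 (F : Type*) [Field F] (n k m : ℕ) [NeZero n] (hkm : k + m = n)
    (H : Matrix (Fin m) (ZMod n) F) (hH : H.rank = m)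
    (x : ZMod n → ZMod n → F) (aa : ZMod n → ZMod n)
    (hxC : ∀ l i, ∑ j, x l j * H i j = 0)
    (hspanC : Submodule.span F (Set.range x)
      = LinearMap.ker H.transpose.vecMulLinear)
    (hspans : ∀ l : ZMod n, IsSpan (x l) (aa l) l)
    (ha : Function.Injective aa)
    (hcover : ∀ j : ZMod n,
      (Finset.univ.filter fun l => j ∈ circIoc (aa l) l).card = m)
    (hsuppC : ∀ j : ZMod n, ∃ c ∈ LinearMap.ker H.transpose.vecMulLinear, c j ≠ 0)
    (hsuppD : ∀ j : ZMod n, ∃ i, H i j ≠ 0)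
    (N : ZMod n → Matrix (ZMod n) (Fin m) F)
    (hN0 : ∀ l c, N 0 l c =
      ∑ j ∈ Finset.univ.filter (fun j : ZMod n => (aa l).val ≤ j.val), x l j * H c j)
    (hNrec : ∀ j : ZMod n, N (j + 1) = N j + Matrix.of (fun l c => x l j * H c j))
    (v : ZMod n → Fin m → F)
    (hv : ∀ mm : ZMod n, ∀ l ≠ mm, x l mm = ∑ c, N (mm + 1) l c * v mm c)
    (hvanish : ∀ mm : ZMod n, ∀ j ∉ circIoc mm (aa mm),
      ∀ l ≠ mm, ∑ c, N j l c * v mm c = 0)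
    (hcm : ∀ mm : ZMod n, IsSpan (fun j => ∑ i, v mm i * H i j) mm (aa mm))
    (K : Finset (ZMod n)) (hK : K.card = k) :
    ((Matrix.of fun (l : ↑K) j => x l.1 j).rank = k
        ↔ LinearIndependent F (fun mm : ↑(Kᶜ) => v mm.1)) ∧
    (LinearIndependent F (fun mm : ↑(Kᶜ) => v mm.1)
        ↔ (Matrix.of fun (mm : ↑(Kᶜ)) j => ∑ i, v mm.1 i * H i j).rank = n - k) := by
  classical
  -- cardinalities
  have hcardZ : Fintype.card (ZMod n) = n := ZMod.card n
  have hcK : Fintype.card ↑K = k := by rw [Fintype.card_coe]; exact hK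
  have hcKc : Fintype.card ↑(Kᶜ) = m := by
    rw [Fintype.card_coe, Finset.card_compl, hcardZ, hK]; omega
  -- entries of N
  have hNe : ∀ (j : ZMod n) (l : ZMod n) (c : Fin m), N j l c = N 0 l c +
      ∑ j' ∈ Finset.univ.filter (fun j' : ZMod n => j'.val < j.val), x l j' * H c j' := by
    intro j l c
    have h := Stmt16.unroll N (fun j => Matrix.of fun l c => x l j * H c j) hNrec j
    have h2 := congrFun (congrFun h l) c
    simpa [Matrix.sum_apply] using h2
  -- support of rows of X
  have hxout : ∀ mm j : ZMod n, ¬ ((j - aa mm).val ≤ (mm - aa mm).val) → x mm j = 0 := by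
    intro mm j hj
    by_contra hxne
    exact hj ((hspans mm).2.2 j hxne)
  -- the diagonal entry of the state matrix
  have hNdiag : ∀ (mm : ZMod n) (c : Fin m), N mm mm c = -(x mm mm * H c mm) := by
    intro mm c
    have hvm := ZMod.val_lt mm
    have hva := ZMod.val_lt (aa mm)
    refine eq_neg_of_add_eq_zero_left ?_
    rw [hNe mm mm c, hN0 mm c]
    have hmmP : mm ∉ Finset.univ.filter (fun j : ZMod n => j.val < mm.val) := by simp
    have hQ : (Finset.univ.filter (fun j : ZMod n => j.val ≤ mm.val))
        = insert mm (Finset.univ.filter (fun j : ZMod n => j.val < mm.val)) := by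
      ext z
      simp only [Finset.mem_filter, Finset.mem_univ, true_and, Finset.mem_insert]
      constructor
      · intro hz
        rcases Nat.lt_or_ge z.val mm.val with h | h
        · exact Or.inr h
        · exact Or.inl (ZMod.val_injective n (by omega))
      · rintro (rfl | hz) <;> omega
    have hsplit : ∑ j ∈ Finset.univ.filter (fun j : ZMod n => j.val ≤ mm.val), x mm j * H c j
        = x mm mm * H c mm
          + ∑ j ∈ Finset.univ.filter (fun j : ZMod n => j.val < mm.val), x mm j * H c j := by
      rw [hQ, Finset.sum_insert hmmP]
    rw [add_assoc, add_comm (∑ j ∈ Finset.univ.filter (fun j : ZMod n => j.val < mm.val),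
      x mm j * H c j) (x mm mm * H c mm), ← hsplit]
    rcases le_or_gt (aa mm).val mm.val with hcase | hcase
    · have hA : ∑ j ∈ Finset.univ.filter (fun j : ZMod n => (aa mm).val ≤ j.val),
          x mm j * H c j = 0 := by
        calc ∑ j ∈ Finset.univ.filter (fun j : ZMod n => (aa mm).val ≤ j.val), x mm j * H c j
            = ∑ j, x mm j * H c j := by
              refine Finset.sum_subset (Finset.subset_univ _) ?_
              intro j _ hj
              simp only [Finset.mem_filter, Finset.mem_univ, true_and, not_le] at hj
              have hvj := ZMod.val_lt j
              have hx : x mm j = 0 := by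
                apply hxout
                have h1 := Stmt16.sub_val j (aa mm)
                have h2 := Stmt16.sub_val mm (aa mm)
                split_ifs at h1 h2 <;> omega
              rw [hx, zero_mul]
          _ = 0 := hxC mm c
      have hB : ∑ j ∈ Finset.univ.filter (fun j : ZMod n => j.val ≤ mm.val),
          x mm j * H c j = 0 := by
        calc ∑ j ∈ Finset.univ.filter (fun j : ZMod n => j.val ≤ mm.val), x mm j * H c j
            = ∑ j, x mm j * H c j := by
              refine Finset.sum_subset (Finset.subset_univ _) ?_
              intro j _ hj
              simp only [Finset.mem_filter, Finset.mem_univ, true_and, not_le] at hj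
              have hvj := ZMod.val_lt j
              have hx : x mm j = 0 := by
                apply hxout
                have h1 := Stmt16.sub_val j (aa mm)
                have h2 := Stmt16.sub_val mm (aa mm)
                split_ifs at h1 h2 <;> omega
              rw [hx, zero_mul]
          _ = 0 := hxC mm c
      rw [hA, hB, add_zero]
    · have hdisj : Disjoint (Finset.univ.filter (fun j : ZMod n => (aa mm).val ≤ j.val))
          (Finset.univ.filter (fun j : ZMod n => j.val ≤ mm.val)) := by
        rw [Finset.disjoint_left]
        intro z hz1 hz2
        simp only [Finset.mem_filter, Finset.mem_univ, true_and] at hz1 hz2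
        omega
      calc ∑ j ∈ Finset.univ.filter (fun j : ZMod n => (aa mm).val ≤ j.val), x mm j * H c j
            + ∑ j ∈ Finset.univ.filter (fun j : ZMod n => j.val ≤ mm.val), x mm j * H c j
          = ∑ j ∈ (Finset.univ.filter (fun j : ZMod n => (aa mm).val ≤ j.val))
              ∪ (Finset.univ.filter (fun j : ZMod n => j.val ≤ mm.val)), x mm j * H c j :=
            (Finset.sum_union hdisj).symm
        _ = ∑ j, x mm j * H c j := by
            refine Finset.sum_subset (Finset.subset_univ _) ?_
            intro j _ hj
            simp only [Finset.mem_union, Finset.mem_filter, Finset.mem_univ, true_and,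
              not_or, not_le] at hj
            have hvj := ZMod.val_lt j
            have hx : x mm j = 0 := by
              apply hxout
              have h1 := Stmt16.sub_val j (aa mm)
              have h2 := Stmt16.sub_val mm (aa mm)
              split_ifs at h1 h2 <;> omega
            rw [hx, zero_mul]
        _ = 0 := hxC mm c
  have hxdiag : ∀ mm : ZMod n, x mm mm ≠ 0 := fun mm => (hspans mm).2.1
  have hccmm : ∀ mm : ZMod n, (∑ i, v mm i * H i mm) ≠ 0 := fun mm => (hcm mm).1
  have hNdiagv : ∀ mm : ZMod n,
      ∑ c, N mm mm c * v mm c = -(x mm mm * ∑ i, v mm i * H i mm) := by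
    intro mm
    calc ∑ c, N mm mm c * v mm c
        = ∑ c, -(x mm mm * (v mm c * H c mm)) :=
          Finset.sum_congr rfl (fun c _ => by rw [hNdiag]; ring)
      _ = -(x mm mm * ∑ i, v mm i * H i mm) := by
          rw [Finset.sum_neg_distrib, ← Finset.mul_sum]
  -- the pairing identity
  have hPair : ∀ (μ : ZMod n → F), (∀ j, ∑ l, μ l * x l j = 0) → ∀ mm : ZMod n,
      ∑ c, (∑ l, μ l * N 0 l c) * v mm c
        = -(μ mm * (x mm mm * ∑ i, v mm i * H i mm)) := by
    intro μ hμ mm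
    have hconst : ∀ c, ∑ l, μ l * N mm l c = ∑ l, μ l * N 0 l c := by
      intro c
      calc ∑ l, μ l * N mm l c
          = ∑ l, (μ l * N 0 l c
              + ∑ j' ∈ Finset.univ.filter (fun j' : ZMod n => j'.val < mm.val),
                μ l * (x l j' * H c j')) := by
            refine Finset.sum_congr rfl fun l _ => ?_
            rw [hNe mm l c, mul_add, Finset.mul_sum]
        _ = ∑ l, μ l * N 0 l c
            + ∑ j' ∈ Finset.univ.filter (fun j' : ZMod n => j'.val < mm.val),
                ∑ l, μ l * (x l j' * H c j') := by
            rw [Finset.sum_add_distrib, Finset.sum_comm]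
        _ = ∑ l, μ l * N 0 l c := by
            have hz : ∀ j' ∈ Finset.univ.filter (fun j' : ZMod n => j'.val < mm.val),
                ∑ l, μ l * (x l j' * H c j') = 0 := by
              intro j' _
              calc ∑ l, μ l * (x l j' * H c j')
                  = (∑ l, μ l * x l j') * H c j' := by
                    rw [Finset.sum_mul]
                    exact Finset.sum_congr rfl fun l _ => by ring
                _ = 0 := by rw [hμ j', zero_mul]
            rw [Finset.sum_congr rfl hz, Finset.sum_const_zero, add_zero]
    have hmmnot : mm ∉ circIoc mm (aa mm) := by
      simp [circIoc]
    calc ∑ c, (∑ l, μ l * N 0 l c) * v mm c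
        = ∑ c, (∑ l, μ l * N mm l c) * v mm c :=
          Finset.sum_congr rfl fun c _ => by rw [hconst]
      _ = ∑ c, ∑ l, μ l * (N mm l c * v mm c) := by
          refine Finset.sum_congr rfl fun c _ => ?_
          rw [Finset.sum_mul]
          exact Finset.sum_congr rfl fun l _ => by ring
      _ = ∑ l, ∑ c, μ l * (N mm l c * v mm c) := Finset.sum_comm
      _ = ∑ l, μ l * ∑ c, N mm l c * v mm c := by
          refine Finset.sum_congr rfl fun l _ => (Finset.mul_sum _ _ _).symm
      _ = μ mm * ∑ c, N mm mm c * v mm c := by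
          rw [Finset.sum_eq_single mm]
          · intro b _ hb
            rw [hvanish mm mm hmmnot b hb, mul_zero]
          · intro h
            exact absurd (Finset.mem_univ mm) h
      _ = -(μ mm * (x mm mm * ∑ i, v mm i * H i mm)) := by rw [hNdiagv]; ring
  -- linear algebra setup
  have hfinPiZ : Module.finrank F (ZMod n → F) = n := by
    rw [Module.finrank_fintype_fun_eq_card, hcardZ]
  have hfinPiF : Module.finrank F (Fin m → F) = m := by
    rw [Module.finrank_fintype_fun_eq_card, Fintype.card_fin]
  have hfinC : Module.finrank F (LinearMap.ker H.transpose.vecMulLinear) = k := by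
    have h1 := LinearMap.finrank_range_add_finrank_ker H.transpose.vecMulLinear
    rw [hfinPiZ] at h1
    have h2 : Module.finrank F (LinearMap.range H.transpose.vecMulLinear) = m := by
      rw [Matrix.vecMulLinear_transpose]
      have h3 : Module.finrank F (LinearMap.range H.mulVecLin) = H.rank := rfl
      rw [h3, hH]
    rw [h2] at h1
    omega
  set Xm : Matrix (ZMod n) (ZMod n) F := Matrix.of x with hXm
  have hfinR : Module.finrank F (LinearMap.ker Xm.vecMulLinear) = m := by
    have h1 := LinearMap.finrank_range_add_finrank_ker Xm.vecMulLinear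
    rw [hfinPiZ, range_vecMulLinear] at h1
    have hr : Set.range Xm.row = Set.range x := rfl
    rw [hr, hspanC, hfinC] at h1
    omega
  set T : (ZMod n → F) →ₗ[F] (Fin m → F) := (N 0).vecMulLinear with hT
  have hTapp : ∀ (μ : ZMod n → F) (c : Fin m), T μ c = ∑ l, μ l * N 0 l c := by
    intro μ c
    simp [hT, Matrix.vecMulLinear_apply, Matrix.vecMul, dotProduct]
  have hmemR : ∀ μ : ZMod n → F,
      μ ∈ LinearMap.ker Xm.vecMulLinear ↔ ∀ j, ∑ l, μ l * x l j = 0 := by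
    intro μ
    rw [LinearMap.mem_ker]
    constructor
    · intro h j
      have := congrFun h j
      simpa [hXm, Matrix.vecMulLinear_apply, Matrix.vecMul, dotProduct] using this
    · intro h
      funext j
      simpa [hXm, Matrix.vecMulLinear_apply, Matrix.vecMul, dotProduct] using h j
  have hker0 : ∀ μ, μ ∈ LinearMap.ker Xm.vecMulLinear → T μ = 0 → μ = 0 := by
    intro μ hmem hT0
    have hμ := (hmemR μ).mp hmem
    funext mm
    have hp := hPair μ hμ mm
    have hz : ∀ c, (∑ l, μ l * N 0 l c) = 0 := by
      intro c
      rw [← hTapp μ c, hT0]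
      rfl
    rw [Finset.sum_congr rfl (fun c _ => by rw [hz c, zero_mul]),
      Finset.sum_const_zero] at hp
    have h0 : μ mm * (x mm mm * ∑ i, v mm i * H i mm) = 0 := by
      have := hp.symm
      rwa [neg_eq_zero] at this
    rcases mul_eq_zero.mp h0 with h | h
    · exact h
    · exact absurd h (mul_ne_zero (hxdiag mm) (hccmm mm))
  set f : (LinearMap.ker Xm.vecMulLinear) →ₗ[F] (Fin m → F)
    := T ∘ₗ (LinearMap.ker Xm.vecMulLinear).subtype with hfdef
  have hfinj : Function.Injective f := by
    rw [← LinearMap.ker_eq_bot, Submodule.eq_bot_iff]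
    intro μ hμ
    have h0 : T μ.1 = 0 := hμ
    exact Subtype.ext (hker0 μ.1 μ.2 h0)
  have hfsurj : Function.Surjective f :=
    (LinearMap.injective_iff_surjective_of_finrank_eq_finrank
      (by rw [hfinR, hfinPiF])).mp hfinj
  -- main equivalence: X-rows dependent iff v's dependent
  have hmain1 : ¬ LinearIndependent F (fun l : ↑K => x l.1)
      → ¬ LinearIndependent F (fun mm : ↑(Kᶜ) => v mm.1) := by
    intro hnLI hLIV
    obtain ⟨g, hgsum, i0, hgi0⟩ := Fintype.not_linearIndependent_iff.mp hnLI
    set μ : ZMod n → F := fun l => if h : l ∈ K then g ⟨l, h⟩ else 0 with hμdef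
    have hμK : ∀ (l : ZMod n) (h : l ∈ K), μ l = g ⟨l, h⟩ := fun l h => by
      simp [hμdef, h]
    have hμKc : ∀ l, l ∉ K → μ l = 0 := fun l h => by simp [hμdef, h]
    have hμ0 : ∀ j, ∑ l, μ l * x l j = 0 := by
      intro j
      have h1 : ∑ l ∈ K, μ l * x l j = ∑ l, μ l * x l j :=
        Finset.sum_subset (Finset.subset_univ K)
          (fun l _ hl => by rw [hμKc l hl, zero_mul])
      have h2 : ∑ l : ↑K, μ l.1 * x l.1 j = ∑ l ∈ K, μ l * x l j :=
        Finset.sum_coe_sort K (fun l => μ l * x l j)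
      have h3 : ∑ l : ↑K, μ l.1 * x l.1 j = ∑ l : ↑K, g l * x l.1 j := by
        refine Finset.sum_congr rfl fun l _ => ?_
        rw [hμK l.1 l.2]
      have h4 : ∑ l : ↑K, g l * x l.1 j = 0 := by
        have := congrFun hgsum j
        simpa using this
      rw [← h1, ← h2, h3, h4]
    have hμmem : μ ∈ LinearMap.ker Xm.vecMulLinear := (hmemR μ).mpr hμ0
    have hTμ0 : T μ = 0 := by
      have hspan : Submodule.span F (Set.range (fun mm : ↑(Kᶜ) => v mm.1)) = ⊤ :=
        hLIV.span_eq_top_of_card_eq_finrank' (by rw [hcKc, hfinPiF])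
      have hsv : ∀ mm : ↑(Kᶜ), ∑ c, T μ c * v mm.1 c = 0 := by
        intro mm
        have hmmK : mm.1 ∉ K := Finset.mem_compl.mp mm.2
        have hp := hPair μ hμ0 mm.1
        rw [hμKc mm.1 hmmK, zero_mul, neg_zero] at hp
        calc ∑ c, T μ c * v mm.1 c
            = ∑ c, (∑ l, μ l * N 0 l c) * v mm.1 c :=
              Finset.sum_congr rfl fun c _ => by rw [hTapp]
          _ = 0 := hp
      set s : Fin m → F := T μ with hs
      let φ : (Fin m → F) →ₗ[F] F :=
        { toFun := fun w => ∑ c, s c * w c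
          map_add' := by
            intro a b
            simp [mul_add, Finset.sum_add_distrib]
          map_smul' := by
            intro r a
            simp [Finset.mul_sum, mul_left_comm] }
      have hle : Submodule.span F (Set.range (fun mm : ↑(Kᶜ) => v mm.1))
          ≤ LinearMap.ker φ := by
        rw [Submodule.span_le]
        rintro w ⟨mm, rfl⟩
        exact LinearMap.mem_ker.mpr (hsv mm)
      have hφ0 : ∀ w, φ w = 0 := by
        intro w
        have hw : w ∈ Submodule.span F (Set.range (fun mm : ↑(Kᶜ) => v mm.1)) := by
          rw [hspan]; exact Submodule.mem_top
        exact LinearMap.mem_ker.mp (hle hw)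
      funext c
      have h5 := hφ0 (Pi.single c 1)
      have h6 : φ (Pi.single c 1) = s c := by
        simp only [φ, LinearMap.coe_mk, AddHom.coe_mk]
        rw [Finset.sum_eq_single c]
        · simp
        · intro b _ hb
          simp [Pi.single_apply, hb]
        · intro h
          exact absurd (Finset.mem_univ c) h
      rw [h6] at h5
      exact h5
    have hμz : μ = 0 := hker0 μ hμmem hTμ0
    apply hgi0
    have := congrFun hμz i0.1
    rw [hμK i0.1 i0.2] at this
    simpa using this
  have hmain2 : ¬ LinearIndependent F (fun mm : ↑(Kᶜ) => v mm.1)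
      → ¬ LinearIndependent F (fun l : ↑K => x l.1) := by
    intro hnLIV hLIX
    set V : Matrix ↑(Kᶜ) (Fin m) F := Matrix.of (fun mm : ↑(Kᶜ) => v mm.1) with hV
    have hrankV : V.rank < m := by
      have h1 : V.rank = Module.finrank F (Submodule.span F (Set.range V)) :=
        Matrix.rank_eq_finrank_span_row V
      have hle : Module.finrank F (Submodule.span F (Set.range V)) ≤ m := by
        have h := finrank_range_le_card (R := F) (fun mm : ↑(Kᶜ) => v mm.1)
        rw [hcKc] at h
        exact h
      have hne : Module.finrank F (Submodule.span F (Set.range V)) ≠ m := by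
        intro he
        apply hnLIV
        rw [linearIndependent_iff_card_eq_finrank_span, hcKc]
        exact he.symm
      omega
    have hkerV : LinearMap.ker V.mulVecLin ≠ ⊥ := by
      intro hbot
      have h1 := LinearMap.finrank_range_add_finrank_ker V.mulVecLin
      have h2 : Module.finrank F (LinearMap.range V.mulVecLin) = V.rank := rfl
      have h3 : Module.finrank F (⊥ : Submodule F (Fin m → F)) = 0 := finrank_bot F _
      rw [hbot, h3, hfinPiF, h2] at h1
      omega
    obtain ⟨s, hsmem, hsne⟩ := (Submodule.ne_bot_iff _).mp hkerV
    have hsv : ∀ mm : ↑(Kᶜ), ∑ c, v mm.1 c * s c = 0 := by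
      intro mm
      have := congrFun (LinearMap.mem_ker.mp hsmem) mm
      simpa [hV, Matrix.mulVecLin_apply, Matrix.mulVec, dotProduct] using this
    obtain ⟨μsub, hμsub⟩ := hfsurj s
    set μ : ZMod n → F := μsub.1 with hμdef
    have hμ0 : ∀ j, ∑ l, μ l * x l j = 0 := (hmemR _).mp μsub.2
    have hTs : T μ = s := hμsub
    have hμKc0 : ∀ mm, mm ∉ K → μ mm = 0 := by
      intro mm hmm
      have hp := hPair μ hμ0 mm
      have h0 : ∑ c, (∑ l, μ l * N 0 l c) * v mm c = 0 := by
        calc ∑ c, (∑ l, μ l * N 0 l c) * v mm c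
            = ∑ c, s c * v mm c :=
              Finset.sum_congr rfl fun c _ => by rw [← hTapp, hTs]
          _ = ∑ c, v mm c * s c := Finset.sum_congr rfl fun c _ => mul_comm _ _
          _ = 0 := hsv ⟨mm, Finset.mem_compl.mpr hmm⟩
      rw [h0] at hp
      have h1 : μ mm * (x mm mm * ∑ i, v mm i * H i mm) = 0 := by
        have := hp.symm
        rwa [neg_eq_zero] at this
      rcases mul_eq_zero.mp h1 with h | h
      · exact h
      · exact absurd h (mul_ne_zero (hxdiag mm) (hccmm mm))
    have hμne : μ ≠ 0 := by
      intro h0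
      apply hsne
      rw [← hTs]
      have hz : μsub = 0 := Subtype.ext h0
      rw [hμdef, hz]
      simp
    obtain ⟨l0, hl0⟩ : ∃ l, μ l ≠ 0 := by
      by_contra hc
      push_neg at hc
      exact hμne (funext hc)
    have hl0K : l0 ∈ K := by
      by_contra hcK'
      exact hl0 (hμKc0 l0 hcK')
    have hgsum : ∑ l : ↑K, μ l.1 • (fun l : ↑K => x l.1) l = 0 := by
      funext j
      have h2 : ∑ l : ↑K, μ l.1 * x l.1 j = ∑ l ∈ K, μ l * x l j :=
        Finset.sum_coe_sort K (fun l => μ l * x l j)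
      have h1 : ∑ l ∈ K, μ l * x l j = ∑ l, μ l * x l j :=
        Finset.sum_subset (Finset.subset_univ K)
          (fun l _ hl => by rw [hμKc0 l hl, zero_mul])
      have h3 := (h2.trans h1).trans (hμ0 j)
      simpa using h3
    exact Fintype.not_linearIndependent_iff.mpr
      ⟨fun l : ↑K => μ l.1, hgsum, ⟨⟨l0, hl0K⟩, hl0⟩⟩ hLIX
  -- rank ↔ linear independence of rows
  have hrankiff : ∀ {ι : Type} [Fintype ι] (M : Matrix ι (ZMod n) F),
      (M.rank = Fintype.card ι ↔ LinearIndependent F (fun i : ι => M i)) := by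
    intro ι _ M
    constructor
    · intro hr
      rw [linearIndependent_iff_card_eq_finrank_span]
      have h1 := Matrix.rank_eq_finrank_span_row M
      rw [hr] at h1
      exact h1
    · intro hli
      exact LinearIndependent.rank_matrix hli
  have hX1 : (Matrix.of fun (l : ↑K) j => x l.1 j).rank = k
      ↔ LinearIndependent F (fun l : ↑K => x l.1) := by
    have h := hrankiff (Matrix.of fun (l : ↑K) j => x l.1 j)
    rw [hcK] at h
    exact h
  have hkerH : LinearMap.ker H.vecMulLinear = ⊥ := by
    have h1 := LinearMap.finrank_range_add_finrank_ker H.vecMulLinear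
    rw [hfinPiF] at h1
    have h2 : Module.finrank F (LinearMap.range H.vecMulLinear) = m := by
      rw [← Matrix.mulVecLin_transpose]
      have h3 : Module.finrank F (LinearMap.range H.transpose.mulVecLin)
          = H.transpose.rank := rfl
      rw [h3, Matrix.rank_transpose, hH]
    rw [h2] at h1
    have h4 : Module.finrank F (LinearMap.ker H.vecMulLinear) = 0 := by omega
    exact Submodule.finrank_eq_zero.mp h4
  have hY1 : LinearIndependent F (fun mm : ↑(Kᶜ) => v mm.1)
      ↔ (Matrix.of fun (mm : ↑(Kᶜ)) j => ∑ i, v mm.1 i * H i j).rank = n - k := by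
    have hcomp : (fun mm : ↑(Kᶜ) => (fun j => ∑ i, v mm.1 i * H i j))
        = H.vecMulLinear ∘ (fun mm : ↑(Kᶜ) => v mm.1) := by
      funext mm
      funext j
      simp [Matrix.vecMulLinear_apply, Matrix.vecMul, dotProduct]
    have h := hrankiff (Matrix.of fun (mm : ↑(Kᶜ)) j => ∑ i, v mm.1 i * H i j)
    rw [hcKc] at h
    have hli : LinearIndependent F (fun mm : ↑(Kᶜ) => v mm.1)
        ↔ LinearIndependent F (fun mm : ↑(Kᶜ) => (fun j => ∑ i, v mm.1 i * H i j)) := by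
      rw [hcomp]
      exact (LinearMap.linearIndependent_iff H.vecMulLinear hkerH).symm
    rw [show (n - k) = m from by omega, h]
    exact hli
  refine ⟨?_, hY1⟩
  rw [hX1]
  constructor
  · intro h
    by_contra hn
    exact hmain2 hn h
  · intro h
    by_contra hn
    exact hmain1 hn h
end

section
/- (Non-degeneracy of the pairing between primal and dual state spaces.) In the setting of the dual selection with rk X̃ = k: let Ñ_j be the state matrices of the KV-trellis T_{(X̃,H,S)} and P_j the (n−k)×(n−k) matrices whose row m (m ∈ K̂) is v_m if j ∈ (m,a_m] and 0 otherwise. Then rk Ñ_j = rk P_j = rk (Ñ_j P_jᵀ) for every j; consequently the bilinear form (α Ñ_j, β P_j) ↦ α Ñ_j P_jᵀ βᵀ on im(Ñ_j) × im(P_j) is well-defined and non-degenerate. -/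
open scoped Classical
open Matrix

section Helpers
set_option linter.unusedSectionVars false
set_option linter.unusedVariables false

variable {n : ℕ} [NeZero n]

lemma stmt17_sub_val' (a b : ZMod n) :
    (a - b).val + b.val = a.val ∨ (a - b).val + b.val = a.val + n := by
  have h := ZMod.val_add (a - b) b
  rw [sub_add_cancel] at h
  have h1 : (a - b).val < n := ZMod.val_lt _
  have h2 : b.val < n := ZMod.val_lt _
  rcases Nat.lt_or_ge ((a - b).val + b.val) n with hlt | hge
  · left; rw [Nat.mod_eq_of_lt hlt] at h; omega
  · right
    rw [Nat.mod_eq_sub_mod hge, Nat.mod_eq_of_lt (by omega)] at h; omega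

lemma stmt17_sub_cancel_inj {a b c : ZMod n} (h : (a - c).val = (b - c).val) : a = b := by
  have h2 : a - c = b - c := ZMod.val_injective n h
  have h3 := congrArg (· + c) h2
  simpa using h3

lemma stmt17_probe_eq {i j mm a : ZMod n} (hj1 : 1 ≤ (j - mm).val)
    (hj2 : (j - mm).val ≤ (a - mm).val)
    (hi : (i - a).val ≤ (mm - a).val) (ho : (mm - j).val ≤ (i - j).val) : i = mm := by
  apply stmt17_sub_cancel_inj (c := a)
  have e1 := stmt17_sub_val' j mm
  have e2 := stmt17_sub_val' a mm
  have e3 := stmt17_sub_val' i a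
  have e4 := stmt17_sub_val' mm a
  have e5 := stmt17_sub_val' mm j
  have e6 := stmt17_sub_val' i j
  have l1 : (j - mm).val < n := ZMod.val_lt _
  have l2 : (a - mm).val < n := ZMod.val_lt _
  have l3 : (i - a).val < n := ZMod.val_lt _
  have l4 : (mm - a).val < n := ZMod.val_lt _
  have l5 : (mm - j).val < n := ZMod.val_lt _
  have l6 : (i - j).val < n := ZMod.val_lt _
  have v1 : i.val < n := ZMod.val_lt _
  have v2 : j.val < n := ZMod.val_lt _
  have v3 : mm.val < n := ZMod.val_lt _
  have v4 : a.val < n := ZMod.val_lt _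
  omega

lemma stmt17_head_ord {i j mm : ZMod n} (ht : 1 ≤ (j - mm).val)
    (hd : (i - mm).val < (j - mm).val) :
    (mm - j).val ≤ (i - j).val ∧ ((i - j).val ≤ (mm - j).val → i = mm) := by
  have e1 := stmt17_sub_val' j mm
  have e2 := stmt17_sub_val' i mm
  have e5 := stmt17_sub_val' mm j
  have e6 := stmt17_sub_val' i j
  have l1 : (j - mm).val < n := ZMod.val_lt _
  have l2 : (i - mm).val < n := ZMod.val_lt _
  have l5 : (mm - j).val < n := ZMod.val_lt _
  have l6 : (i - j).val < n := ZMod.val_lt _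
  have v1 : i.val < n := ZMod.val_lt _
  have v2 : j.val < n := ZMod.val_lt _
  have v3 : mm.val < n := ZMod.val_lt _
  constructor
  · omega
  · intro h
    exact stmt17_sub_cancel_inj (c := j) (by omega)

lemma stmt17_self_not_mem_circIoc (mm a : ZMod n) : mm ∉ circIoc mm a := by
  intro h
  simp only [circIoc, Set.mem_setOf_eq, sub_self, ZMod.val_zero] at h
  omega

variable {F : Type*} [Field F] {k m : ℕ}

lemma stmt17_Frec (x : ZMod n → ZMod n → F)
    (H : Matrix (Fin m) (ZMod n) F)
    (N : ZMod n → Matrix (ZMod n) (Fin m) F)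
    (hNrec : ∀ j : ZMod n, N (j + 1) = N j + Matrix.of (fun l c => x l j * H c j))
    (v : ZMod n → Fin m → F)
    (hbase : ∀ mm : ZMod n, ∀ l ≠ mm, ∑ c, N mm l c * v mm c = 0)
    (l mm : ZMod n) (hlm : l ≠ mm) (t : ℕ) :
    ∑ c, N (mm + (t : ZMod n)) l c * v mm c
      = ∑ s ∈ Finset.range t,
          x l (mm + (s : ZMod n)) * (∑ c, H c (mm + (s : ZMod n)) * v mm c) := by
  induction t with
  | zero => simpa using hbase mm l hlm
  | succ t ih =>
      have hcast : ((t + 1 : ℕ) : ZMod n) = (t : ZMod n) + 1 := by push_cast; ring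
      rw [hcast, ← add_assoc, hNrec (mm + (t : ZMod n))]
      have hstep : ∑ c, (N (mm + (t : ZMod n)) l c
            + x l (mm + (t : ZMod n)) * H c (mm + (t : ZMod n))) * v mm c
          = (∑ c, N (mm + (t : ZMod n)) l c * v mm c)
            + x l (mm + (t : ZMod n)) * ∑ c, H c (mm + (t : ZMod n)) * v mm c := by
        rw [Finset.mul_sum, ← Finset.sum_add_distrib]
        apply Finset.sum_congr rfl
        intro c _
        ring
      simpa [Matrix.add_apply, Finset.sum_range_succ, ih] using hstep

lemma stmt17_reindex (g : ZMod n → F) (mm : ZMod n) (t : ℕ) (ht : t ≤ n) :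
    ∑ s ∈ Finset.range t, g (mm + (s : ZMod n))
      = ∑ i : ZMod n, if (i - mm).val < t then g i else 0 := by
  classical
  rw [← Finset.sum_filter]
  refine Finset.sum_nbij' (fun s => mm + (s : ZMod n)) (fun i => (i - mm).val) ?_ ?_ ?_ ?_ ?_
  · intro a ha
    simp only [Finset.mem_range] at ha
    simp only [Finset.mem_filter, Finset.mem_univ, true_and]
    rwa [add_sub_cancel_left, ZMod.val_cast_of_lt (by omega)]
  · intro i hi
    simp only [Finset.mem_filter, Finset.mem_univ, true_and] at hi
    simpa using hi
  · intro a ha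
    simp only [Finset.mem_range] at ha
    show ((mm + (a : ZMod n)) - mm).val = a
    rw [add_sub_cancel_left, ZMod.val_cast_of_lt (by omega)]
  · intro i hi
    show mm + (((i - mm).val : ℕ) : ZMod n) = i
    rw [ZMod.natCast_zmod_val, add_sub_cancel]
  · intro a ha
    rfl

lemma stmt17_spanK (hkm : k + m = n) (H : Matrix (Fin m) (ZMod n) F) (hH : H.rank = m)
    (x : ZMod n → ZMod n → F) (K : Finset (ZMod n)) (hK : K.card = k)
    (hxC : ∀ l i, ∑ j, x l j * H i j = 0)
    (hXrank : (Matrix.of fun (l : ↑K) j => x l.1 j).rank = k) :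
    Submodule.span F (Set.range fun l : ↑K => x l.1)
      = LinearMap.ker H.transpose.vecMulLinear := by
  have hmem : ∀ l : ↑K, x l.1 ∈ LinearMap.ker H.transpose.vecMulLinear := by
    intro l
    rw [LinearMap.mem_ker]
    funext i
    simpa [Matrix.vecMulLinear_apply, Matrix.vecMul_transpose, Matrix.mulVec,
      dotProduct, mul_comm] using hxC l.1 i
  have hle : Submodule.span F (Set.range fun l : ↑K => x l.1)
      ≤ LinearMap.ker H.transpose.vecMulLinear := by
    rw [Submodule.span_le]
    rintro _ ⟨l, rfl⟩
    exact hmem l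
  have hrn := LinearMap.finrank_range_add_finrank_ker H.transpose.vecMulLinear
  have hrange : LinearMap.range H.transpose.vecMulLinear
      = Submodule.span F (Set.range H.transpose) := range_vecMulLinear _
  have hrkH : Module.finrank F ↥(Submodule.span F (Set.range H.transpose)) = m := by
    have h := Matrix.rank_eq_finrank_span_cols H
    rw [hH] at h
    exact h.symm
  have hdom : Module.finrank F (ZMod n → F) = n := by
    rw [Module.finrank_pi]
    simp [ZMod.card]
  rw [hrange, hrkH, hdom] at hrn
  have hker : Module.finrank F ↥(LinearMap.ker H.transpose.vecMulLinear) = k := by omega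
  have hspanrk : Module.finrank F
      ↥(Submodule.span F (Set.range fun l : ↑K => x l.1)) = k := by
    have h := (Matrix.of fun (l : ↑K) j => x l.1 j).rank_eq_finrank_span_row
    rw [hXrank] at h
    exact h.symm
  apply Submodule.eq_of_le_of_finrank_le hle
  rw [hker, hspanrk]

lemma stmt17_dualSpan (hkm : k + m = n) (K : Finset (ZMod n)) (hK : K.card = k)
    (v : ZMod n → Fin m → F)
    (hvind : LinearIndependent F (fun mm : ↑(Kᶜ) => v mm.1))
    (u : Fin m → F) (hu : ∀ mm : ↑(Kᶜ), ∑ c, u c * v mm.1 c = 0) : u = 0 := by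
  classical
  have hcard : Fintype.card ↑(Kᶜ) = m := by
    rw [Fintype.card_coe, Finset.card_compl, hK]
    have : Fintype.card (ZMod n) = n := ZMod.card n
    omega
  have htop : Submodule.span F (Set.range fun mm : ↑(Kᶜ) => v mm.1) = ⊤ := by
    apply hvind.span_eq_top_of_card_eq_finrank'
    rw [hcard, Module.finrank_pi]
    simp
  let φ : (Fin m → F) →ₗ[F] F :=
    { toFun := fun z => ∑ c, u c * z c
      map_add' := by
        intro a b
        simp [mul_add, Finset.sum_add_distrib]
      map_smul' := by
        intro r a
        simp [Finset.mul_sum, mul_left_comm] }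
  have hφ : ∀ z, φ z = 0 := by
    intro z
    have hz : z ∈ Submodule.span F (Set.range fun mm : ↑(Kᶜ) => v mm.1) := by
      rw [htop]; trivial
    have hle : Submodule.span F (Set.range fun mm : ↑(Kᶜ) => v mm.1)
        ≤ LinearMap.ker φ := by
      rw [Submodule.span_le]
      rintro _ ⟨mm, rfl⟩
      exact hu mm
    exact hle hz
  funext c
  have h := hφ (Pi.single c 1)
  simpa [φ, Pi.single_apply, mul_ite, Finset.sum_ite_eq'] using h

lemma stmt17_rank_eq_of_leftker {I J J' : Type*} [Fintype I] [Fintype J] [Fintype J']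
    (A : Matrix I J F) (B : Matrix I J' F)
    (h : ∀ α : I → F, α ᵥ* A = 0 ↔ α ᵥ* B = 0) : A.rank = B.rank := by
  have kerEq : LinearMap.ker A.transpose.mulVecLin = LinearMap.ker B.transpose.mulVecLin := by
    ext α
    simp only [LinearMap.mem_ker, Matrix.mulVecLin_apply, Matrix.mulVec_transpose]
    exact h α
  have h1 := LinearMap.finrank_range_add_finrank_ker A.transpose.mulVecLin
  have h2 := LinearMap.finrank_range_add_finrank_ker B.transpose.mulVecLin
  rw [kerEq] at h1
  have rA : A.rank = Module.finrank F ↥(LinearMap.range A.transpose.mulVecLin) := by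
    rw [← Matrix.rank_transpose A]; rfl
  have rB : B.rank = Module.finrank F ↥(LinearMap.range B.transpose.mulVecLin) := by
    rw [← Matrix.rank_transpose B]; rfl
  rw [rA, rB]
  omega

lemma stmt17_rank_eq_of_rightker {I I' J : Type*} [Fintype I] [Fintype I'] [Fintype J]
    (A : Matrix I J F) (B : Matrix I' J F)
    (h : ∀ β : J → F, A *ᵥ β = 0 ↔ B *ᵥ β = 0) : A.rank = B.rank := by
  have kerEq : LinearMap.ker A.mulVecLin = LinearMap.ker B.mulVecLin := by
    ext β
    simp only [LinearMap.mem_ker, Matrix.mulVecLin_apply]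
    exact h β
  have h1 := LinearMap.finrank_range_add_finrank_ker A.mulVecLin
  have h2 := LinearMap.finrank_range_add_finrank_ker B.mulVecLin
  rw [kerEq] at h1
  have rA : A.rank = Module.finrank F ↥(LinearMap.range A.mulVecLin) := rfl
  have rB : B.rank = Module.finrank F ↥(LinearMap.range B.mulVecLin) := rfl
  rw [rA, rB]
  omega

end Helpers

/-- Non-degeneracy of the pairing between primal and dual state spaces: with
`Ñ_j` the state matrices of the KV-trellis `T_{(X̃,H,S)}` (rows of the full BCJR
state matrices `N_j` indexed by `K`) and `P_j` the matrices whose row `m ∈ K̂` is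
`v_m` if `j ∈ (m, a_m]` and `0` otherwise, one has
`rk Ñ_j = rk P_j = rk(Ñ_j P_jᵀ)` for every `j`, and the bilinear pairing
`(α Ñ_j, β P_j) ↦ α Ñ_j P_jᵀ βᵀ` is non-degenerate. -/
theorem stmt17 (F : Type*) [Field F] (n k m : ℕ) [NeZero n] (hkm : k + m = n)
    (H : Matrix (Fin m) (ZMod n) F) (hH : H.rank = m)
    (x : ZMod n → ZMod n → F) (aa : ZMod n → ZMod n)
    (hxC : ∀ l i, ∑ j, x l j * H i j = 0)
    (hspanC : Submodule.span F (Set.range x)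
      = LinearMap.ker H.transpose.vecMulLinear)
    (hspans : ∀ l : ZMod n, IsSpan (x l) (aa l) l)
    (ha : Function.Injective aa)
    (hcover : ∀ j : ZMod n,
      (Finset.univ.filter fun l => j ∈ circIoc (aa l) l).card = m)
    (hsuppC : ∀ j : ZMod n, ∃ c ∈ LinearMap.ker H.transpose.vecMulLinear, c j ≠ 0)
    (hsuppD : ∀ j : ZMod n, ∃ i, H i j ≠ 0)
    (N : ZMod n → Matrix (ZMod n) (Fin m) F)
    (hN0 : ∀ l c, N 0 l c =
      ∑ j ∈ Finset.univ.filter (fun j : ZMod n => (aa l).val ≤ j.val), x l j * H c j)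
    (hNrec : ∀ j : ZMod n, N (j + 1) = N j + Matrix.of (fun l c => x l j * H c j))
    (v : ZMod n → Fin m → F)
    (hv : ∀ mm : ZMod n, ∀ l ≠ mm, x l mm = ∑ c, N (mm + 1) l c * v mm c)
    (hvanish : ∀ mm : ZMod n, ∀ j ∉ circIoc mm (aa mm),
      ∀ l ≠ mm, ∑ c, N j l c * v mm c = 0)
    (K : Finset (ZMod n)) (hK : K.card = k)
    (hXrank : (Matrix.of fun (l : ↑K) j => x l.1 j).rank = k)
    (hvind : LinearIndependent F (fun mm : ↑(Kᶜ) => v mm.1))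
    (P : ZMod n → Matrix ↑(Kᶜ) (Fin m) F)
    (hP : ∀ j mm c, P j mm c = if j ∈ circIoc mm.1 (aa mm.1) then v mm.1 c else 0)
    (j : ZMod n) :
    (Matrix.of fun (l : ↑K) c => N j l.1 c).rank = (P j).rank ∧
    (Matrix.of fun (l : ↑K) c => N j l.1 c).rank
      = ((Matrix.of fun (l : ↑K) c => N j l.1 c) * (P j).transpose).rank ∧
    (∀ α : ↑K → F, (∀ β : ↑(Kᶜ) → F,
        α ⬝ᵥ (((Matrix.of fun (l : ↑K) c => N j l.1 c) * (P j).transpose) *ᵥ β) = 0) →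
        Matrix.vecMul α (Matrix.of fun (l : ↑K) c => N j l.1 c) = 0) ∧
    (∀ β : ↑(Kᶜ) → F, (∀ α : ↑K → F,
        α ⬝ᵥ (((Matrix.of fun (l : ↑K) c => N j l.1 c) * (P j).transpose) *ᵥ β) = 0) →
        Matrix.vecMul β (P j) = 0) := by
  classical
  set Nt : Matrix ↑K (Fin m) F := Matrix.of fun (l : ↑K) c => N j l.1 c with hNt
  set Mt : Matrix ↑K ↑(Kᶜ) F := Nt * (P j).transpose with hMt
  -- base of the recursion
  have hbase : ∀ mm : ZMod n, ∀ l ≠ mm, ∑ c, N mm l c * v mm c = 0 := by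
    intro mm l hlm
    exact hvanish mm mm (stmt17_self_not_mem_circIoc mm (aa mm)) l hlm
  -- the pairing sum, rewritten over heads of the dual generators
  have hFj : ∀ (l mm : ZMod n), l ≠ mm → ∑ c, N j l c * v mm c
      = ∑ i : ZMod n, (if (i - mm).val < (j - mm).val
          then x l i * (∑ c, H c i * v mm c) else 0) := by
    intro l mm hlm
    have h1 := stmt17_Frec x H N hNrec v hbase l mm hlm (j - mm).val
    rw [ZMod.natCast_zmod_val, add_sub_cancel] at h1
    rw [h1]
    exact stmt17_reindex (fun i => x l i * (∑ c, H c i * v mm c)) mm ((j - mm).val)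
      (le_of_lt (ZMod.val_lt _))
  -- membership of the rows of x in the code
  have hXker : ∀ l' : ZMod n, x l' ∈ LinearMap.ker H.transpose.vecMulLinear := by
    intro l'
    rw [LinearMap.mem_ker]
    funext i
    simpa [Matrix.vecMulLinear_apply, Matrix.vecMul_transpose, Matrix.mulVec,
      dotProduct, mul_comm] using hxC l' i
  have hspan := stmt17_spanK hkm H hH x K hK hxC hXrank
  -- extension of orthogonality from the K-rows to the whole code
  have horth : ∀ w : ZMod n → F, (∀ l : ↑K, ∑ i, x l.1 i * w i = 0) →
      ∀ c ∈ LinearMap.ker H.transpose.vecMulLinear, ∑ i, c i * w i = 0 := by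
    intro w hw c hc
    let φ : (ZMod n → F) →ₗ[F] F :=
      { toFun := fun u => ∑ i, u i * w i
        map_add' := by
          intro a b
          simp [add_mul, Finset.sum_add_distrib]
        map_smul' := by
          intro r a
          simp [Finset.mul_sum, mul_assoc] }
    have hle : Submodule.span F (Set.range fun l : ↑K => x l.1) ≤ LinearMap.ker φ := by
      rw [Submodule.span_le]
      rintro _ ⟨l, rfl⟩
      exact hw l
    rw [hspan] at hle
    exact hle hc
  -- full support of the code on the K-rows
  have hxnz : ∀ mm : ZMod n, ∃ l : ↑K, x l.1 mm ≠ 0 := by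
    intro mm
    by_contra h
    push_neg at h
    obtain ⟨c, hc, hcmm⟩ := hsuppC mm
    let φ : (ZMod n → F) →ₗ[F] F :=
      { toFun := fun u => u mm
        map_add' := by intro a b; simp
        map_smul' := by intro r a; simp }
    have hle : Submodule.span F (Set.range fun l : ↑K => x l.1) ≤ LinearMap.ker φ := by
      rw [Submodule.span_le]
      rintro _ ⟨l, rfl⟩
      exact h l
    rw [hspan] at hle
    exact hcmm (hle hc)
  -- normalization of the dual generators
  have hY1 : ∀ mm : ZMod n, mm ∉ K → ∑ c, H c mm * v mm c = 1 := by
    intro mm hmm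
    obtain ⟨l, hl⟩ := hxnz mm
    have hlm : l.1 ≠ mm := by
      intro h
      exact hmm (h ▸ l.2)
    have h1 := hv mm l.1 hlm
    have h2 := stmt17_Frec x H N hNrec v hbase l.1 mm hlm 1
    rw [Nat.cast_one] at h2
    rw [h2, Finset.sum_range_one] at h1
    simp only [Nat.cast_zero, add_zero] at h1
    have h3 : x l.1 mm * 1 = x l.1 mm * (∑ c, H c mm * v mm c) := by
      rw [mul_one]; exact h1
    exact (mul_left_cancel₀ hl h3).symm
  -- entries of the pairing matrix
  have hMentry : ∀ (l : ↑K) (mm : ↑(Kᶜ)),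
      Mt l mm = if j ∈ circIoc mm.1 (aa mm.1)
        then ∑ c, N j l.1 c * v mm.1 c else 0 := by
    intro l mm
    rw [hMt, Matrix.mul_apply]
    simp only [Matrix.transpose_apply, hP j mm, hNt, Matrix.of_apply]
    by_cases hc : j ∈ circIoc mm.1 (aa mm.1)
    · simp [hc]
    · simp [hc]
  have hne : ∀ (l : ↑K) (mm : ↑(Kᶜ)), l.1 ≠ mm.1 := by
    intro l mm h
    exact (Finset.mem_compl.mp mm.2) (h ▸ l.2)
  -- left kernel statement
  have KL1 : ∀ α : ↑K → F, α ᵥ* Mt = 0 → α ᵥ* Nt = 0 := by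
    intro α hα
    apply stmt17_dualSpan hkm K hK v hvind
    intro mm
    have hswap : ∑ c, (α ᵥ* Nt) c * v mm.1 c
        = ∑ l : ↑K, α l * (∑ c, N j l.1 c * v mm.1 c) := by
      calc ∑ c, (α ᵥ* Nt) c * v mm.1 c
          = ∑ c, ∑ l : ↑K, (α l * N j l.1 c) * v mm.1 c := by
            apply Finset.sum_congr rfl
            intro c _
            simp only [hNt, Matrix.vecMul, dotProduct, Matrix.of_apply,
              Finset.sum_mul]
        _ = ∑ l : ↑K, ∑ c, (α l * N j l.1 c) * v mm.1 c := Finset.sum_comm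
        _ = ∑ l : ↑K, α l * (∑ c, N j l.1 c * v mm.1 c) := by
            apply Finset.sum_congr rfl
            intro l _
            rw [Finset.mul_sum]
            apply Finset.sum_congr rfl
            intro c _
            ring
    rw [hswap]
    by_cases hc : j ∈ circIoc mm.1 (aa mm.1)
    · have h0 := congrFun hα mm
      have h1 : (α ᵥ* Mt) mm = ∑ l : ↑K, α l * (∑ c, N j l.1 c * v mm.1 c) := by
        simp only [Matrix.vecMul, dotProduct]
        apply Finset.sum_congr rfl
        intro l _
        beta_reduce
        rw [hMentry l mm, if_pos hc]
      rw [h1] at h0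
      exact h0
    · apply Finset.sum_eq_zero
      intro l _
      rw [hvanish mm.1 j hc l.1 (hne l mm), mul_zero]
  -- right kernel statement
  have KL2 : ∀ β : ↑(Kᶜ) → F, Mt *ᵥ β = 0 →
      ∀ mm : ↑(Kᶜ), j ∈ circIoc mm.1 (aa mm.1) → β mm = 0 := by
    intro β hβ
    set w : ZMod n → F := fun i => ∑ mm : ↑(Kᶜ),
      (if j ∈ circIoc mm.1 (aa mm.1)
        then (if (i - mm.1).val < (j - mm.1).val then ∑ c, H c i * v mm.1 c else 0)
        else 0) * β mm with hw
    have hrearr : ∀ l : ZMod n,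
        ∑ i, x l i * w i
          = ∑ mm : ↑(Kᶜ), (if j ∈ circIoc mm.1 (aa mm.1)
              then ∑ i : ZMod n, (if (i - mm.1).val < (j - mm.1).val
                then x l i * (∑ c, H c i * v mm.1 c) else 0)
              else 0) * β mm := by
      intro l
      calc ∑ i, x l i * w i
          = ∑ i, ∑ mm : ↑(Kᶜ), (if j ∈ circIoc mm.1 (aa mm.1)
              then (if (i - mm.1).val < (j - mm.1).val
                then x l i * (∑ c, H c i * v mm.1 c) else 0)
              else 0) * β mm := by
            apply Finset.sum_congr rfl
            intro i _
            simp only [hw]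
            rw [Finset.mul_sum]
            apply Finset.sum_congr rfl
            intro mm _
            by_cases hc : j ∈ circIoc mm.1 (aa mm.1)
            · by_cases hd : (i - mm.1).val < (j - mm.1).val
              · simp only [if_pos hc, if_pos hd]; ring
              · simp only [if_pos hc, if_neg hd]; ring
            · simp only [if_neg hc]; ring
        _ = ∑ mm : ↑(Kᶜ), ∑ i, (if j ∈ circIoc mm.1 (aa mm.1)
              then (if (i - mm.1).val < (j - mm.1).val
                then x l i * (∑ c, H c i * v mm.1 c) else 0)
              else 0) * β mm := Finset.sum_comm
        _ = _ := by
            apply Finset.sum_congr rfl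
            intro mm _
            by_cases hc : j ∈ circIoc mm.1 (aa mm.1)
            · simp only [if_pos hc, Finset.sum_mul]
            · simp [hc]
    -- the truncated dual combination is orthogonal to the rows indexed by K
    have hwl : ∀ l : ↑K, ∑ i, x l.1 i * w i = 0 := by
      intro l
      rw [hrearr l.1]
      have h0 := congrFun hβ l
      have h1 : (Mt *ᵥ β) l = ∑ mm : ↑(Kᶜ), (if j ∈ circIoc mm.1 (aa mm.1)
          then ∑ i : ZMod n, (if (i - mm.1).val < (j - mm.1).val
            then x l.1 i * (∑ c, H c i * v mm.1 c) else 0)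
          else 0) * β mm := by
        simp only [Matrix.mulVec, dotProduct]
        apply Finset.sum_congr rfl
        intro mm _
        beta_reduce
        rw [hMentry l mm]
        by_cases hc : j ∈ circIoc mm.1 (aa mm.1)
        · rw [if_pos hc, if_pos hc, hFj l.1 mm.1 (hne l mm)]
        · rw [if_neg hc, if_neg hc]
      rw [h1] at h0
      exact h0
    intro mm0 hmm0
    by_contra hb0
    -- pick the active dual index closest to j with nonzero coefficient
    set T : Finset ↑(Kᶜ) := Finset.univ.filter
      (fun mm : ↑(Kᶜ) => j ∈ circIoc mm.1 (aa mm.1) ∧ β mm ≠ 0) with hT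
    have hTne : T.Nonempty := ⟨mm0, by simp [hT, hmm0, hb0]⟩
    obtain ⟨ms, hmsT, hmin⟩ := T.exists_min_image (fun mm => (mm.1 - j).val) hTne
    have hms := (Finset.mem_filter.mp hmsT).2
    have hmsIoc : j ∈ circIoc ms.1 (aa ms.1) := hms.1
    have hmsj1 : 1 ≤ (j - ms.1).val := hmsIoc.1
    have hmsj2 : (j - ms.1).val ≤ (aa ms.1 - ms.1).val := hmsIoc.2
    have hxms : ∀ i : ZMod n, x ms.1 i ≠ 0 → (i - aa ms.1).val ≤ (ms.1 - aa ms.1).val :=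
      fun i hi => (hspans ms.1).2.2 i hi
    -- orthogonality with the row x_{ms}
    have h0 : ∑ i, x ms.1 i * w i = 0 := horth w hwl (x ms.1) (hXker ms.1)
    rw [hrearr ms.1] at h0
    have hterm : ∀ mm : ↑(Kᶜ), mm ∈ Finset.univ → mm ≠ ms →
        (if j ∈ circIoc mm.1 (aa mm.1)
          then ∑ i : ZMod n, (if (i - mm.1).val < (j - mm.1).val
            then x ms.1 i * (∑ c, H c i * v mm.1 c) else 0)
          else 0) * β mm = 0 := by
      intro mm _ hmmne
      by_cases hc : j ∈ circIoc mm.1 (aa mm.1)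
      · by_cases hbz : β mm = 0
        · rw [hbz, mul_zero]
        · have hmmT : mm ∈ T := Finset.mem_filter.mpr ⟨Finset.mem_univ mm, hc, hbz⟩
          have hminmm := hmin mm hmmT
          have hinner : ∑ i : ZMod n, (if (i - mm.1).val < (j - mm.1).val
              then x ms.1 i * (∑ c, H c i * v mm.1 c) else 0) = 0 := by
            apply Finset.sum_eq_zero
            intro i _
            by_cases hd : (i - mm.1).val < (j - mm.1).val
            · rw [if_pos hd]
              by_cases hxi : x ms.1 i = 0
              · rw [hxi, zero_mul]
              · exfalso
                have hho := stmt17_head_ord hc.1 hd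
                have ho : (ms.1 - j).val ≤ (i - j).val := le_trans hminmm hho.1
                have hie : i = ms.1 := stmt17_probe_eq hmsj1 hmsj2 (hxms i hxi) ho
                have hie2 : i = mm.1 := hho.2 (by rw [hie]; exact hminmm)
                have : mm = ms := Subtype.ext (by rw [← hie2, hie])
                exact hmmne this
            · rw [if_neg hd]
          rw [if_pos hc, hinner, zero_mul]
      · rw [if_neg hc, zero_mul]
    rw [Finset.sum_eq_single ms hterm
      (fun h => absurd (Finset.mem_univ ms) h)] at h0
    rw [if_pos hmsIoc] at h0
    have hsum : ∑ i : ZMod n, (if (i - ms.1).val < (j - ms.1).val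
        then x ms.1 i * (∑ c, H c i * v ms.1 c) else 0)
        = x ms.1 ms.1 * (∑ c, H c ms.1 * v ms.1 c) := by
      rw [Finset.sum_eq_single ms.1]
      · rw [if_pos (by rw [sub_self, ZMod.val_zero]; omega)]
      · intro i _ hi
        by_cases hd : (i - ms.1).val < (j - ms.1).val
        · rw [if_pos hd]
          by_cases hxi : x ms.1 i = 0
          · rw [hxi, zero_mul]
          · exfalso
            have hho := stmt17_head_ord hmsj1 hd
            exact hi (stmt17_probe_eq hmsj1 hmsj2 (hxms i hxi) hho.1)
        · rw [if_neg hd]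
      · intro h
        exact absurd (Finset.mem_univ ms.1) h
    rw [hsum, hY1 ms.1 (Finset.mem_compl.mp ms.2), mul_one] at h0
    rcases mul_eq_zero.mp h0 with h | h
    · exact (hspans ms.1).2.1 h
    · exact hms.2 h
  -- vanishing of the dual-side combinations
  have hPzero : ∀ β : ↑(Kᶜ) → F,
      (∀ mm : ↑(Kᶜ), j ∈ circIoc mm.1 (aa mm.1) → β mm = 0) →
      (P j).transpose *ᵥ β = 0 ∧ β ᵥ* P j = 0 := by
    intro β hβ
    constructor
    · funext c
      show ∑ mm : ↑(Kᶜ), (P j).transpose c mm * β mm = 0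
      apply Finset.sum_eq_zero
      intro mm _
      rw [Matrix.transpose_apply, hP j mm c]
      by_cases hc : j ∈ circIoc mm.1 (aa mm.1)
      · rw [hβ mm hc, mul_zero]
      · rw [if_neg hc, zero_mul]
    · funext c
      show ∑ mm : ↑(Kᶜ), β mm * P j mm c = 0
      apply Finset.sum_eq_zero
      intro mm _
      rw [hP j mm c]
      by_cases hc : j ∈ circIoc mm.1 (aa mm.1)
      · rw [hβ mm hc, zero_mul]
      · rw [if_neg hc, mul_zero]
  -- rank equalities
  have G2 : Nt.rank = Mt.rank := by
    apply stmt17_rank_eq_of_leftker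
    intro α
    constructor
    · intro h
      rw [hMt, ← Matrix.vecMul_vecMul, h, Matrix.zero_vecMul]
    · exact KL1 α
  have GMP : Mt.rank = (P j).transpose.rank := by
    apply stmt17_rank_eq_of_rightker
    intro β
    constructor
    · intro h
      exact (hPzero β (KL2 β h)).1
    · intro h
      rw [hMt, ← Matrix.mulVec_mulVec, h, Matrix.mulVec_zero]
  have G1 : Nt.rank = (P j).rank := G2.trans (GMP.trans (Matrix.rank_transpose (P j)))
  refine ⟨G1, G2, ?_, ?_⟩
  · intro α hall
    apply KL1
    funext mm
    have h := hall (Pi.single mm 1)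
    rw [Matrix.dotProduct_mulVec, dotProduct_single] at h
    simpa using h
  · intro β hall
    have hMv : Mt *ᵥ β = 0 := by
      funext l
      have h := hall (Pi.single l 1)
      rw [single_dotProduct] at h
      simpa using h
    exact (hPzero β (KL2 β hMv)).2
end
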